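/- arXiv:1503.05049 — 14 statements merged into one kernel-verified Lean document; each statement's English description precedes it below -/
import Mathlib

section
/- Let m ≥ 0 be an integer and let e be a tame Coxeter frieze pattern of width m over ℝ. Then e(i+(m+3), j+(m+3)) = e(i,j) for all i,j ∈ ℤ; in particular every row of the frieze is periodic with period dividing m+3. -/
lemma frieze_key (f : ℤ → ℤ → ℝ)
    (huni : ∀ i j : ℤ, f i j * f (i + 1) (j + 1) - f i (j + 1) * f (i + 1) j = 1)
    (htame9 : ∀ i j : ℤ,
      f i j * (f (i+1) (j+1) * f (i+2) (j+2)) - f i j * (f (i+1) (j+2) * f (i+2) (j+1))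
      - f i (j+1) * (f (i+1) j * f (i+2) (j+2)) + f i (j+1) * (f (i+1) (j+2) * f (i+2) j)
      + f i (j+2) * (f (i+1) j * f (i+2) (j+1)) - f i (j+2) * (f (i+1) (j+1) * f (i+2) j) = 0) :
    ∃ T : ℤ → ℝ, ∀ i j : ℤ, f i (j + 2) = T j * f i (j + 1) - f i j := by
  set t : ℤ → ℤ → ℝ := fun i j => f i j * f (i+1) (j+2) - f i (j+2) * f (i+1) j with ht
  have h11 : ∀ i j : ℤ, f i j * f (i + 1) (j + 1) - f i (j + 1) * f (i + 1) j = 1 := huni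
  have h12 : ∀ i j : ℤ, f i (j+1) * f (i + 1) (j + 2) - f i (j + 2) * f (i + 1) (j+1) = 1 := by
    intro i j
    have h := huni i (j+1)
    rw [show j+1+1 = j+2 by ring] at h
    exact h
  have cram1 : ∀ i j : ℤ, f i (j+2) = t i j * f i (j+1) - f i j := by
    intro i j
    simp only [ht]
    linear_combination (-(f i j)) * h12 i j - (f i (j+2)) * h11 i j
  have cram2 : ∀ i j : ℤ, f (i+1) (j+2) = t i j * f (i+1) (j+1) - f (i+1) j := by
    intro i j
    simp only [ht]
    linear_combination (-(f (i+1) (j+2))) * h11 i j - (f (i+1) j) * h12 i j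
  have tame2 : ∀ i j : ℤ, f (i+2) (j+2) = t i j * f (i+2) (j+1) - f (i+2) j := by
    intro i j
    simp only [ht]
    linear_combination htame9 i j - (f (i+2) (j+2)) * h11 i j - (f (i+2) j) * h12 i j
  have tstep : ∀ i j : ℤ, t (i+1) j = t i j := by
    intro i j
    have hP := cram2 i j
    have hQ := tame2 i j
    have h1 := huni (i+1) j
    rw [show i+1+1 = i+2 by ring] at h1
    simp only [ht]
    rw [show i+1+1 = i+2 by ring]
    linear_combination (f (i+1) j) * hQ - (f (i+2) j) * hP + (t i j) * h1
  have tconst : ∀ i j : ℤ, t i j = t 0 j := by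
    intro i j
    induction i using Int.induction_on with
    | zero => rfl
    | succ k ih => rw [tstep k j, ih]
    | pred k ih =>
      have h := tstep (-k-1) j
      rw [show (-k-1+1 : ℤ) = -k by ring] at h
      rw [← h]
      exact ih
  refine ⟨fun j => t 0 j, fun i j => ?_⟩
  show f i (j + 2) = t 0 j * f i (j + 1) - f i j
  rw [← tconst i j]
  exact cram1 i j

lemma seq_ext (u v c : ℤ → ℝ) (a : ℤ)
    (hu : ∀ n : ℤ, u (n + 2) = c n * u (n + 1) - u n)
    (hv : ∀ n : ℤ, v (n + 2) = c n * v (n + 1) - v n)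
    (h0 : u a = v a) (h1 : u (a + 1) = v (a + 1)) : ∀ n : ℤ, u n = v n := by
  have main : ∀ k : ℤ, u (a + k) = v (a + k) ∧ u (a + k + 1) = v (a + k + 1) := by
    intro k
    induction k using Int.induction_on with
    | zero => simpa using ⟨h0, h1⟩
    | succ k ih =>
      rw [show a + ((k:ℤ)+1) + 1 = a + k + 2 by ring, show a + ((k:ℤ)+1) = a + k + 1 by ring]
      refine ⟨ih.2, ?_⟩
      rw [hu (a+k), hv (a+k), ih.1, ih.2]
    | pred k ih =>
      rw [show a + (-(k:ℤ) - 1) + 1 = a + -(k:ℤ) by ring, show a + (-(k:ℤ) - 1) = a + -(k:ℤ) - 1 by ring]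
      refine ⟨?_, ih.1⟩
      have hu' := hu (a + (-k) - 1)
      have hv' := hv (a + (-k) - 1)
      rw [show a + (-k) - 1 + 2 = a + (-k) + 1 by ring, show a + (-k) - 1 + 1 = a + (-k) by ring] at hu' hv'
      rw [ih.1, ih.2] at hu'
      linarith [hu', hv']
  intro n
  have h := (main (n - a)).1
  rwa [show a + (n - a) = n by ring] at h

/-- **Periodicity of tame Coxeter frieze patterns.**
A tame Coxeter frieze pattern of width `m` over `ℝ` satisfies
`e (i+(m+3)) (j+(m+3)) = e i j` for all `i j : ℤ`. -/
theorem coxeter_frieze_periodicity (m : ℕ) (e : ℤ → ℤ → ℝ)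
    (hb0 : ∀ i : ℤ, e i (i - 2) = 0)
    (hb1 : ∀ i : ℤ, e i (i - 1) = 1)
    (hb2 : ∀ i : ℤ, e i (i + m) = 1)
    (hb3 : ∀ i : ℤ, e i (i + m + 1) = 0)
    (huni : ∀ i j : ℤ,
      e i j * e (i + 1) (j + 1) - e i (j + 1) * e (i + 1) j = 1)
    (htame : ∀ i j : ℤ,
      Matrix.det (Matrix.of fun r c : Fin 3 =>
        e (i + (r : ℕ)) (j + (c : ℕ))) = 0) :
    ∀ i j : ℤ, e (i + ((m : ℤ) + 3)) (j + ((m : ℤ) + 3)) = e i j := by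
  -- expanded tameness
  have htame9 : ∀ i j : ℤ,
      e i j * (e (i+1) (j+1) * e (i+2) (j+2)) - e i j * (e (i+1) (j+2) * e (i+2) (j+1))
      - e i (j+1) * (e (i+1) j * e (i+2) (j+2)) + e i (j+1) * (e (i+1) (j+2) * e (i+2) j)
      + e i (j+2) * (e (i+1) j * e (i+2) (j+1)) - e i (j+2) * (e (i+1) (j+1) * e (i+2) j) = 0 := by
    intro i j
    have h := htame i j
    rw [Matrix.det_fin_three] at h
    simp only [Matrix.of_apply, Fin.val_zero, Fin.val_one, Fin.val_two,
      Nat.cast_zero, Nat.cast_one, Nat.cast_two, add_zero, Fin.isValue] at h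
    linear_combination h
  -- recurrence along the second index
  obtain ⟨T, hT⟩ := frieze_key e huni htame9
  -- recurrence along the first index (transpose)
  obtain ⟨S, hS⟩ := frieze_key (fun i j => e j i)
    (fun i j => by simpa using by linear_combination huni j i)
    (fun i j => by simpa using by linear_combination htame9 j i)
  have hS' : ∀ i j : ℤ, e (j + 2) i = S j * e (j + 1) i - e j i := fun i j => hS i j
  -- shift of the row index by m+3 negates
  have rowshift : ∀ i j : ℤ, e (i + ((m : ℤ) + 3)) j = - e i j := by
    intro i
    refine seq_ext (fun n => e (i + ((m : ℤ) + 3)) n) (fun n => - e i n) T (i + (m : ℤ) + 1)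
      (fun n => hT _ n) (fun n => by have := hT i n; beta_reduce; linarith) ?_ ?_
    · show e (i + ((m : ℤ) + 3)) (i + (m : ℤ) + 1) = - e i (i + (m : ℤ) + 1)
      have h := hb0 (i + ((m : ℤ) + 3))
      rw [show i + ((m : ℤ) + 3) - 2 = i + (m : ℤ) + 1 by ring] at h
      rw [h, hb3 i, neg_zero]
    · show e (i + ((m : ℤ) + 3)) (i + (m : ℤ) + 1 + 1) = - e i (i + (m : ℤ) + 1 + 1)
      have h := hb1 (i + ((m : ℤ) + 3))
      rw [show i + ((m : ℤ) + 3) - 1 = i + (m : ℤ) + 1 + 1 by ring] at h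
      have h2 := hT i (i + (m : ℤ))
      rw [show i + (m : ℤ) + 2 = i + (m : ℤ) + 1 + 1 by ring] at h2
      rw [hb3 i, hb2 i] at h2
      rw [h, h2]; ring
  -- shift of the column index by m+3 negates
  have colshift : ∀ j i : ℤ, e i (j + ((m : ℤ) + 3)) = - e i j := by
    intro j
    have hz : e (j + 2) j = 0 := by
      have h := hb0 (j + 2); rwa [show j + 2 - 2 = j by ring] at h
    have ho : e (j + 1) j = 1 := by
      have h := hb1 (j + 1); rwa [show j + 1 - 1 = j by ring] at h
    refine seq_ext (fun n => e n (j + ((m : ℤ) + 3))) (fun n => - e n j) S (j + 2)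
      (fun n => hS' _ n) (fun n => by have := hS' j n; beta_reduce; linarith) ?_ ?_
    · show e (j + 2) (j + ((m : ℤ) + 3)) = - e (j + 2) j
      have h := hb3 (j + 2)
      rw [show j + 2 + (m : ℤ) + 1 = j + ((m : ℤ) + 3) by ring] at h
      rw [h, hz, neg_zero]
    · show e (j + 2 + 1) (j + ((m : ℤ) + 3)) = - e (j + 2 + 1) j
      have h := hb2 (j + 2 + 1)
      rw [show j + 2 + 1 + (m : ℤ) = j + ((m : ℤ) + 3) by ring] at h
      have h2 := hS' j (j + 1)
      rw [show j + 1 + 2 = j + 2 + 1 by ring, show j + 1 + 1 = j + 2 by ring] at h2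
      rw [hz, ho] at h2
      rw [h, h2]; ring
  intro i j
  have h1 := rowshift i (j + ((m : ℤ) + 3))
  have h2 := colshift j i
  have h3 := colshift j (i + ((m : ℤ) + 3))
  linarith
end

section
/- Let m ≥ 0 be an integer and let e be a tame Coxeter frieze pattern of width m over ℝ. Then e(i,j) = e(j+2, i+m+1) for all i,j ∈ ℤ; that is, the frieze is invariant under the glide reflection with respect to the horizontal median line of the pattern. -/
/-- Key lemma: a tame SL₂-tiling satisfies a linear second-order row recurrence
with coefficients independent of the column. -/
theorem frieze_row_rec' (e : ℤ → ℤ → ℝ)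
    (huni : ∀ i j : ℤ,
      e i j * e (i + 1) (j + 1) - e i (j + 1) * e (i + 1) j = 1)
    (htame : ∀ i j : ℤ,
      e i j * (e (i+1) (j+1) * e (i+2) (j+2) - e (i+1) (j+2) * e (i+2) (j+1))
      - e i (j+1) * (e (i+1) j * e (i+2) (j+2) - e (i+1) (j+2) * e (i+2) j)
      + e i (j+2) * (e (i+1) j * e (i+2) (j+1) - e (i+1) (j+1) * e (i+2) j) = 0) :
    ∃ t : ℤ → ℝ, ∀ i j : ℤ, e (i+2) j = t i * e (i+1) j - e i j := by
  set μ : ℤ → ℤ → ℝ := fun i j => e i j * e (i+2) (j+1) - e i (j+1) * e (i+2) j with hμdef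
  have hp : ∀ i j : ℤ, e (i+2) j = μ i j * e (i+1) j - e i j := by
    intro i j
    have h1 := huni i j
    have h2 := huni (i+1) j
    rw [show (i:ℤ)+1+1 = i+2 by ring] at h2
    simp only [hμdef]
    linear_combination (-(e (i+2) j)) * h1 + (-(e i j)) * h2
  have hq : ∀ i j : ℤ, e (i+2) (j+1) = μ i j * e (i+1) (j+1) - e i (j+1) := by
    intro i j
    have h1 := huni i j
    have h2 := huni (i+1) j
    rw [show (i:ℤ)+1+1 = i+2 by ring] at h2
    simp only [hμdef]
    linear_combination (-(e (i+2) (j+1))) * h1 + (-(e i (j+1))) * h2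
  have hz : ∀ i j : ℤ, e (i+2) (j+2) = μ i j * e (i+1) (j+2) - e i (j+2) := by
    intro i j
    have hd := htame i j
    have h1 := huni i j
    have hpj := hp i j
    have hqj := hq i j
    simp only [hμdef] at hpj hqj ⊢
    linear_combination hd - (e (i+2) (j+2) + e i (j+2)) * h1
      + e i (j+2) * e (i+1) (j+1) * hpj - e i (j+2) * e (i+1) j * hqj
  have hstep : ∀ i j : ℤ, μ i (j+1) = μ i j := by
    intro i j
    have hzj := hz i j
    have hqj := hq i j
    have h3 := huni i (j+1)
    rw [show (j:ℤ)+1+1 = j+2 by ring] at h3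
    simp only [hμdef] at hzj hqj ⊢
    rw [show (j:ℤ)+1+1 = j+2 by ring]
    linear_combination e i (j+1) * hzj - e i (j+2) * hqj
      + (e i j * e (i+2) (j+1) - e i (j+1) * e (i+2) j) * h3
  have hfwd : ∀ (n : ℕ) (i j : ℤ), μ i (j + n) = μ i j := by
    intro n
    induction n with
    | zero => intro i j; norm_num
    | succ n ih =>
      intro i j
      have h : (j + (n+1 : ℕ) : ℤ) = (j + n) + 1 := by push_cast; ring
      rw [h, hstep i (j + n), ih]
  have hconst : ∀ i j : ℤ, μ i j = μ i 0 := by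
    intro i j
    rcases le_total 0 j with h | h
    · obtain ⟨n, hn⟩ := Int.le.dest h
      rw [← hn]; simpa using hfwd n i 0
    · obtain ⟨n, hn⟩ := Int.le.dest h
      rw [← hn]; exact (hfwd n i j).symm
  refine ⟨fun i => μ i 0, fun i j => ?_⟩
  show e (i+2) j = μ i 0 * e (i+1) j - e i j
  rw [← hconst i j]; exact hp i j

/-- **Glide symmetry of tame Coxeter frieze patterns.**
A tame Coxeter frieze pattern of width `m` over `ℝ` is invariant under the glide
reflection with respect to the horizontal median line:
`e i j = e (j+2) (i+m+1)` for all `i j : ℤ`. -/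
theorem coxeter_frieze_glide_symmetry (m : ℕ) (e : ℤ → ℤ → ℝ)
    (hb0 : ∀ i : ℤ, e i (i - 2) = 0)
    (hb1 : ∀ i : ℤ, e i (i - 1) = 1)
    (hb2 : ∀ i : ℤ, e i (i + m) = 1)
    (hb3 : ∀ i : ℤ, e i (i + m + 1) = 0)
    (huni : ∀ i j : ℤ,
      e i j * e (i + 1) (j + 1) - e i (j + 1) * e (i + 1) j = 1)
    (htame : ∀ i j : ℤ,
      Matrix.det (Matrix.of fun r c : Fin 3 =>
        e (i + (r : ℕ)) (j + (c : ℕ))) = 0) :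
    ∀ i j : ℤ, e i j = e (j + 2) (i + (m : ℤ) + 1) := by
  have htame' : ∀ i j : ℤ,
      e i j * (e (i+1) (j+1) * e (i+2) (j+2) - e (i+1) (j+2) * e (i+2) (j+1))
      - e i (j+1) * (e (i+1) j * e (i+2) (j+2) - e (i+1) (j+2) * e (i+2) j)
      + e i (j+2) * (e (i+1) j * e (i+2) (j+1) - e (i+1) (j+1) * e (i+2) j) = 0 := by
    intro i j
    have h := htame i j
    simp [Matrix.det_fin_three, Matrix.of_apply] at h
    linear_combination h
  obtain ⟨t, ht⟩ := frieze_row_rec' e huni htame'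
  have rowR : ∀ i j : ℤ, e (i+2) j = e i i * e (i+1) j - e i j := by
    intro i j
    have ht' : t i = e i i := by
      have h := ht i i
      have h0 : e (i+2) i = 0 := by have := hb0 (i+2); rwa [show (i:ℤ)+2-2 = i by ring] at this
      have h1 : e (i+1) i = 1 := by have := hb1 (i+1); rwa [show (i:ℤ)+1-1 = i by ring] at this
      rw [h0, h1] at h
      linarith
    rw [← ht']; exact ht i j
  obtain ⟨s, hs⟩ := frieze_row_rec' (fun i j => e j i)
    (fun i j => by linear_combination huni j i)
    (fun i j => by have := htame' j i; linear_combination this)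
  have colR : ∀ i j : ℤ, e i (j+2) = e (j+2) (j+2) * e i (j+1) - e i j := by
    intro i j
    have hs' : s j = e (j+2) (j+2) := by
      have h := hs j (j+2)
      have h0 : e (j+2) j = 0 := by have := hb0 (j+2); rwa [show (j:ℤ)+2-2 = j by ring] at this
      have h1 : e (j+2) (j+1) = 1 := by have := hb1 (j+2); rwa [show (j:ℤ)+2-1 = j+1 by ring] at this
      rw [h0, h1] at h
      linarith
    have h := hs j i
    rw [hs'] at h
    exact h
  set P : ℤ → ℤ → Prop := fun i j => e i j = e (j + 2) (i + (m:ℤ) + 1) with hP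
  have hPext : ∀ (i j j' : ℤ), j = j' → P i j' → P i j := by
    rintro i j j' rfl h; exact h
  have base0 : ∀ i : ℤ, P i (i-2) := by
    intro i
    show e i (i-2) = e (i-2+2) (i + m + 1)
    rw [show (i:ℤ)-2+2 = i by ring, hb0 i, hb3 i]
  have base1 : ∀ i : ℤ, P i (i-1) := by
    intro i
    show e i (i-1) = e (i-1+2) (i + m + 1)
    rw [show (i:ℤ)-1+2 = i+1 by ring, show (i:ℤ)+m+1 = (i+1)+m by ring, hb1 i, hb2 (i+1)]
  have stepF : ∀ i j : ℤ, P i j → P i (j+1) → P i (j+2) := by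
    intro i j h0 h1
    show e i (j+2) = e (j+2+2) (i + m + 1)
    have hr := rowR (j+2) (i + m + 1)
    rw [show (j:ℤ)+2+1 = j+1+2 by ring] at hr
    rw [colR i j, hr, ← h0, ← h1]
  have stepB : ∀ i j : ℤ, P i (j+1) → P i (j+2) → P i j := by
    intro i j h1 h2
    show e i j = e (j+2) (i + m + 1)
    have hc := colR i j
    have hr := rowR (j+2) (i + m + 1)
    rw [show (j:ℤ)+2+1 = j+1+2 by ring] at hr
    have h1' : e i (j+1) = e (j+1+2) (i+m+1) := h1
    have h2' : e i (j+2) = e (j+2+2) (i+m+1) := h2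
    rw [h1', h2'] at hc
    linarith [hc, hr]
  have fwd : ∀ (n : ℕ) (i : ℤ), P i (i - 2 + n) ∧ P i (i - 2 + n + 1) := by
    intro n
    induction n with
    | zero =>
      intro i
      refine ⟨hPext i _ (i-2) (by push_cast; ring) (base0 i),
              hPext i _ (i-1) (by push_cast; ring) (base1 i)⟩
    | succ n ih =>
      intro i
      obtain ⟨h0, h1⟩ := ih i
      have h2 : P i ((i-2+n)+2) := stepF i (i-2+n) h0 h1
      exact ⟨hPext i _ _ (by push_cast; ring) h1,
             hPext i _ ((i-2+n)+2) (by push_cast; ring) h2⟩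
  have bwd : ∀ (n : ℕ) (i : ℤ), P i (i - 2 - n) ∧ P i (i - 2 - n + 1) := by
    intro n
    induction n with
    | zero =>
      intro i
      refine ⟨hPext i _ (i-2) (by push_cast; ring) (base0 i),
              hPext i _ (i-1) (by push_cast; ring) (base1 i)⟩
    | succ n ih =>
      intro i
      obtain ⟨h0, h1⟩ := ih i
      have hb : P i (i-2-n-1) := by
        refine stepB i (i-2-n-1) (hPext i _ _ (by ring) h0) (hPext i _ _ (by ring) h1)
      exact ⟨hPext i _ (i-2-n-1) (by push_cast; ring) hb,
             hPext i _ (i-2-n) (by push_cast; ring) h0⟩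
  intro i j
  show P i j
  rcases le_total (i-2) j with h | h
  · obtain ⟨n, hn⟩ := Int.le.dest h
    exact hPext i j (i-2+n) hn.symm (fwd n i).1
  · obtain ⟨n, hn⟩ := Int.le.dest h
    exact hPext i j (i-2-n) (by omega) (bwd n i).1
end

section
/- Let m ≥ 0 be an integer and let e be a tame Coxeter frieze pattern of width m over ℝ. Then for every fixed j ∈ ℤ, the sequence V_i := e(j,i) along the j-th South-East diagonal satisfies the linear recurrence V_i = e(i,i)·V_{i-1} − V_{i-2} for all i ∈ ℤ, where the coefficients e(i,i) are the entries of the first row of the frieze. -/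
/-- **Linear recurrence along the diagonals of a Coxeter frieze.**
For a tame Coxeter frieze pattern `e` of width `m` over `ℝ` and any fixed `j`,
the sequence `V i = e j i` along the `j`-th South-East diagonal satisfies
`V i = e i i * V (i-1) - V (i-2)`. -/
theorem coxeter_frieze_diagonal_recurrence (m : ℕ) (e : ℤ → ℤ → ℝ)
    (hb0 : ∀ i : ℤ, e i (i - 2) = 0)
    (hb1 : ∀ i : ℤ, e i (i - 1) = 1)
    (hb2 : ∀ i : ℤ, e i (i + m) = 1)
    (hb3 : ∀ i : ℤ, e i (i + m + 1) = 0)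
    (huni : ∀ i j : ℤ,
      e i j * e (i + 1) (j + 1) - e i (j + 1) * e (i + 1) j = 1)
    (htame : ∀ i j : ℤ,
      Matrix.det (Matrix.of fun r c : Fin 3 =>
        e (i + (r : ℕ)) (j + (c : ℕ))) = 0) :
    ∀ j i : ℤ, e j i = e i i * e j (i - 1) - e j (i - 2) := by
  intro j i
  -- determinant of rows n, n+1, n+2 and columns i-2, i-1, i
  have hdet : ∀ n : ℤ,
      e n (i-2) * e (n+1) (i-1) * e (n+2) i - e n (i-2) * e (n+1) i * e (n+2) (i-1)
      - e n (i-1) * e (n+1) (i-2) * e (n+2) i + e n (i-1) * e (n+1) i * e (n+2) (i-2)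
      + e n i * e (n+1) (i-2) * e (n+2) (i-1) - e n i * e (n+1) (i-1) * e (n+2) (i-2) = 0 := by
    intro n
    have h := htame n (i-2)
    simp only [Matrix.det_fin_three, Matrix.of_apply, Fin.val_zero, Fin.val_one, Fin.val_two,
      Nat.cast_ofNat, Nat.cast_one, Nat.cast_zero, add_zero] at h
    rw [show i - 2 + 1 = i - 1 by ring, show i - 2 + 2 = i by ring] at h
    linear_combination h
  -- unimodularity in columns i-2, i-1
  have u0 : ∀ n : ℤ, e n (i-2) * e (n+1) (i-1) - e n (i-1) * e (n+1) (i-2) = 1 := by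
    intro n
    have h := huni n (i-2)
    rwa [show i - 2 + 1 = i - 1 by ring] at h
  -- base cases
  have base0 : e i i = e i i * e i (i-1) - e i (i-2) := by
    rw [hb1 i, hb0 i]; ring
  have base1 : e (i+1) i = e i i * e (i+1) (i-1) - e (i+1) (i-2) := by
    have h1 : e (i+1) i = 1 := by
      have := hb1 (i+1); rwa [show i + 1 - 1 = i by ring] at this
    have h2 : e (i+1) (i-1) = 0 := by
      have := hb0 (i+1); rwa [show i + 1 - 2 = i - 1 by ring] at this
    have h3 : e (i+1) (i-2) = -1 := by
      have h := u0 i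
      rw [hb0 i, hb1 i] at h
      linarith
    rw [h1, h2, h3]; ring
  -- forward propagation
  have fwd : ∀ n : ℤ,
      e n i = e i i * e n (i-1) - e n (i-2) →
      e (n+1) i = e i i * e (n+1) (i-1) - e (n+1) (i-2) →
      e (n+2) i = e i i * e (n+2) (i-1) - e (n+2) (i-2) := by
    intro n h1 h2
    have hd := hdet n
    have hu := u0 n
    linear_combination hd
      - (e (n+1) (i-2) * e (n+2) (i-1) - e (n+1) (i-1) * e (n+2) (i-2)) * h1
      - (e n (i-1) * e (n+2) (i-2) - e n (i-2) * e (n+2) (i-1)) * h2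
      - (e (n+2) i - e i i * e (n+2) (i-1) + e (n+2) (i-2)) * hu
  -- backward propagation
  have bwd : ∀ n : ℤ,
      e (n+1) i = e i i * e (n+1) (i-1) - e (n+1) (i-2) →
      e (n+2) i = e i i * e (n+2) (i-1) - e (n+2) (i-2) →
      e n i = e i i * e n (i-1) - e n (i-2) := by
    intro n h2 h3
    have hd := hdet n
    have hu := u0 (n+1)
    rw [show n + 1 + 1 = n + 2 by ring] at hu
    linear_combination hd
      - (e n (i-2) * e (n+1) (i-1) - e n (i-1) * e (n+1) (i-2)) * h3
      - (e n (i-1) * e (n+2) (i-2) - e n (i-2) * e (n+2) (i-1)) * h2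
      - (e n i - e i i * e n (i-1) + e n (i-2)) * hu
  have key : ∀ k : ℤ,
      (e (i+k) i = e i i * e (i+k) (i-1) - e (i+k) (i-2)) ∧
      (e (i+k+1) i = e i i * e (i+k+1) (i-1) - e (i+k+1) (i-2)) := by
    intro k
    induction k using Int.induction_on with
    | zero =>
      constructor
      · rw [show i + (0:ℤ) = i by ring]; exact base0
      · rw [show i + (0:ℤ) + 1 = i + 1 by ring]; exact base1
    | succ k ih =>
      obtain ⟨ha, hb⟩ := ih
      constructor
      · rw [show i + ((k:ℤ) + 1) = i + k + 1 by ring]; exact hb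
      · rw [show i + ((k:ℤ) + 1) + 1 = (i + k) + 2 by ring]
        exact fwd (i + k) ha hb
    | pred k ih =>
      obtain ⟨ha, hb⟩ := ih
      constructor
      · have := bwd (i + (-(k:ℤ) - 1))
        rw [show i + (-(k:ℤ) - 1) + 1 = i + -(k:ℤ) by ring,
          show i + (-(k:ℤ) - 1) + 2 = i + -(k:ℤ) + 1 by ring] at this
        exact this ha hb
      · rw [show i + (-(k:ℤ) - 1) + 1 = i + -(k:ℤ) by ring]; exact ha
  have := (key (j - i)).1
  rwa [show i + (j - i) = j by ring] at this
end

section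
/- Let m ≥ 0 be an integer, let e be a tame Coxeter frieze pattern of width m over ℝ, and set a_k := e(k,k) for k ∈ ℤ (the entries of the first row). Then for all integers i ≤ j, the entry e(i,j) equals the continuant K(a_i,…,a_j), i.e. the determinant of the (j-i+1)×(j-i+1) tridiagonal matrix with diagonal entries a_i,…,a_j and 1's on the sub- and super-diagonal. In particular every entry of the frieze is a polynomial in the entries of the first row. -/
/-- The continuant `K(a_i, …, a_j)`: the determinant of the tridiagonal
`(j-i+1) × (j-i+1)` matrix with diagonal entries `a_i, …, a_j` and `1`'s on the
sub- and super-diagonal.  By convention, for `j = i - 1` (empty range) it is `1`. -/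
noncomputable def continuant (a : ℤ → ℝ) (i j : ℤ) : ℝ :=
  Matrix.det (Matrix.of fun r c : Fin (j - i + 1).toNat =>
    if (r : ℕ) = (c : ℕ) then a (i + (r : ℕ))
    else if (r : ℕ) = (c : ℕ) + 1 ∨ (c : ℕ) = (r : ℕ) + 1 then 1 else 0)

/-- The `n × n` tridiagonal matrix with diagonal `b 0, …, b (n-1)` and `1`'s on the
sub- and super-diagonal. -/
noncomputable def FriezeAux.triMat (b : ℕ → ℝ) (n : ℕ) : Matrix (Fin n) (Fin n) ℝ :=
  Matrix.of fun r c : Fin n =>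
    if (r : ℕ) = (c : ℕ) then b r
    else if (r : ℕ) = (c : ℕ) + 1 ∨ (c : ℕ) = (r : ℕ) + 1 then 1 else 0

namespace FriezeAux

lemma triDet_rec (b : ℕ → ℝ) (n : ℕ) :
    (triMat b (n+2)).det = b (n+1) * (triMat b (n+1)).det - (triMat b n).det := by
  rw [Matrix.det_succ_row _ (Fin.last (n+1))]
  rw [Fin.sum_univ_castSucc, Fin.sum_univ_castSucc]
  have h0 : ∀ c : Fin n, triMat b (n+2) (Fin.last (n+1)) (c.castSucc.castSucc) = 0 := by
    intro c
    simp only [triMat, Matrix.of_apply, Fin.coe_castSucc, Fin.val_last]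
    have hc := c.isLt
    rw [if_neg (by omega), if_neg (by omega)]
  rw [Finset.sum_eq_zero (fun c _ => by rw [h0 c]; ring)]
  have e1 : triMat b (n+2) (Fin.last (n+1)) (Fin.last (n+1)) = b (n+1) := by
    simp [triMat]
  have e2 : triMat b (n+2) (Fin.last (n+1)) ((Fin.last n).castSucc) = 1 := by
    simp only [triMat, Matrix.of_apply, Fin.coe_castSucc, Fin.val_last]
    norm_num
  have m1 : (triMat b (n+2)).submatrix (Fin.last (n+1)).succAbove
      (Fin.last (n+1)).succAbove = triMat b (n+1) := by
    ext r c
    simp [triMat, Fin.succAbove_last, Matrix.submatrix_apply]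
  have m2 : ((triMat b (n+2)).submatrix (Fin.last (n+1)).succAbove
      ((Fin.last n).castSucc).succAbove).det = (triMat b n).det := by
    rw [Matrix.det_succ_column _ (Fin.last n)]
    rw [Fin.sum_univ_castSucc]
    have hA : (((Fin.last n).castSucc).succAbove (Fin.last n) : ℕ) = n + 1 := by
      simp [Fin.succAbove, Fin.lt_def]
    have z : ∀ r : Fin n, (triMat b (n+2)).submatrix (Fin.last (n+1)).succAbove
        ((Fin.last n).castSucc).succAbove r.castSucc (Fin.last n) = 0 := by
      intro r
      have hr := r.isLt
      simp only [Matrix.submatrix_apply, Fin.succAbove_last, triMat, Matrix.of_apply, hA,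
        Fin.coe_castSucc]
      rw [if_neg (by omega), if_neg (by omega)]
    rw [Finset.sum_eq_zero (fun r _ => by rw [z r]; ring)]
    have eentry : (triMat b (n+2)).submatrix (Fin.last (n+1)).succAbove
        ((Fin.last n).castSucc).succAbove (Fin.last n) (Fin.last n) = 1 := by
      simp only [Matrix.submatrix_apply, Fin.succAbove_last, triMat, Matrix.of_apply, hA,
        Fin.coe_castSucc, Fin.val_last]
      norm_num
    rw [eentry]
    have msub : ((triMat b (n+2)).submatrix (Fin.last (n+1)).succAbove
        ((Fin.last n).castSucc).succAbove).submatrix (Fin.last n).succAbove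
        (Fin.last n).succAbove = triMat b n := by
      ext r c
      have hr := r.isLt
      have hc := c.isLt
      simp only [Matrix.submatrix_apply, Fin.succAbove_last, triMat, Matrix.of_apply]
      have hB : (((Fin.last n).castSucc).succAbove c.castSucc : ℕ) = (c : ℕ) := by
        simp only [Fin.succAbove, Fin.lt_def, Fin.coe_castSucc, Fin.val_last]
        rw [if_pos (by omega)]
        simp
      rw [hB]
      simp [Fin.coe_castSucc]
    rw [msub]
    have hpow : ((-1:ℝ))^((Fin.last n : ℕ) + (Fin.last n : ℕ)) = 1 := by
      simp only [Fin.val_last]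
      rw [show n + n = 2 * n by ring, pow_mul]
      norm_num
    rw [hpow]
    ring
  rw [e1, e2, m1, m2]
  have hpow1 : ((-1:ℝ))^((Fin.last (n+1) : ℕ) + ((Fin.last n).castSucc : ℕ)) = -1 := by
    simp only [Fin.val_last, Fin.coe_castSucc]
    rw [show n + 1 + n = 2 * n + 1 by ring, pow_succ, pow_mul]
    norm_num
  have hpow2 : ((-1:ℝ))^((Fin.last (n+1) : ℕ) + (Fin.last (n+1) : ℕ)) = 1 := by
    simp only [Fin.val_last]
    rw [show n + 1 + (n + 1) = 2 * (n+1) by ring, pow_mul]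
    norm_num
  rw [hpow1, hpow2]
  ring

lemma cont_eq (a : ℤ → ℝ) (i j : ℤ) (n : ℕ) (h : (j - i + 1).toNat = n) :
    continuant a i j = (triMat (fun k => a (i + (k : ℤ))) n).det := by
  subst h; rfl

lemma norm2 : ∀ k : ℤ, k + 1 + 1 = k + 2 := fun k => by ring

section

variable (e : ℤ → ℤ → ℝ)
variable (huni : ∀ i j : ℤ, e i j * e (i + 1) (j + 1) - e i (j + 1) * e (i + 1) j = 1)
variable (htame : ∀ i j : ℤ,
      Matrix.det (Matrix.of fun r c : Fin 3 =>
        e (i + (r : ℕ)) (j + (c : ℕ))) = 0)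

include huni in
lemma hLA (i j : ℤ) :
    e i (j+2) = (e i j * e (i+1) (j+2) - e i (j+2) * e (i+1) j) * e i (j+1) - e i j := by
  have h := huni i (j+1); simp only [norm2] at h
  linear_combination (-(e i j)) * h - (e i (j+2)) * huni i j

include huni in
lemma hLA' (i j : ℤ) :
    e (i+1) (j+2)
      = (e i j * e (i+1) (j+2) - e i (j+2) * e (i+1) j) * e (i+1) (j+1) - e (i+1) j := by
  have h := huni i (j+1); simp only [norm2] at h
  linear_combination (-(e (i+1) (j+2))) * huni i j - (e (i+1) j) * h

include huni in
lemma hLB (i j : ℤ) :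
    e (i+2) j = (e i j * e (i+2) (j+1) - e i (j+1) * e (i+2) j) * e (i+1) j - e i j := by
  have h := huni (i+1) j; simp only [norm2] at h
  linear_combination (-(e i j)) * h - (e (i+2) j) * huni i j

include huni in
lemma hLB' (i j : ℤ) :
    e (i+2) (j+1)
      = (e i j * e (i+2) (j+1) - e i (j+1) * e (i+2) j) * e (i+1) (j+1) - e i (j+1) := by
  have h := huni (i+1) j; simp only [norm2] at h
  linear_combination (-(e (i+2) (j+1))) * huni i j - (e i (j+1)) * h

include huni in
lemma hz1 (i j : ℤ) :
    ((e i j * e (i+1) (j+2) - e i (j+2) * e (i+1) j)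
      - (e (i+1) j * e (i+2) (j+2) - e (i+1) (j+2) * e (i+2) j)) * e (i+1) (j+1) = 0 := by
  have h1 := hLA' e huni i j
  have h2 := hLA e huni (i+1) j; simp only [norm2] at h2
  linear_combination h2 - h1

include huni htame in
lemma hz2 (i j : ℤ) :
    ((e i j * e (i+1) (j+2) - e i (j+2) * e (i+1) j)
      - (e (i+1) j * e (i+2) (j+2) - e (i+1) (j+2) * e (i+2) j)) * e i (j+1) = 0 := by
  have hd := htame i j
  simp only [Matrix.det_fin_three, Matrix.of_apply] at hd
  norm_num [Fin.val_zero, Fin.val_one, Fin.val_two] at hd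
  have hu11 := huni (i+1) (j+1); simp only [norm2] at hu11
  have hu01 := huni i (j+1); simp only [norm2] at hu01
  have h1 := hLA e huni i j
  have h2 := hLA e huni (i+1) j; simp only [norm2] at h2
  have h3 := hLA' e huni (i+1) j; simp only [norm2] at h3
  have h4 := hLB e huni i (j+1); simp only [norm2] at h4
  have h5 := hLB' e huni i (j+1); simp only [norm2] at h5
  linear_combination hd - (e i j) * hu11 - (e (i+2) j) * hu01 - h1 - h3
    + (e i (j+1) * e (i+2) (j+2) - e i (j+2) * e (i+2) (j+1)) * h2
    - (e (i+1) j * e (i+2) (j+2) - e (i+1) (j+2) * e (i+2) j) * h4 + h5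

include huni htame in
lemma hconst (i j : ℤ) :
    (e i j * e (i+1) (j+2) - e i (j+2) * e (i+1) j)
      = (e (i+1) j * e (i+2) (j+2) - e (i+1) (j+2) * e (i+2) j) := by
  rcases mul_eq_zero.mp (hz1 e huni i j) with h | h
  · linarith [h]
  · rcases mul_eq_zero.mp (hz2 e huni htame i j) with h' | h'
    · linarith [h']
    · exfalso
      have hu := huni i j
      rw [h, h'] at hu
      simp at hu

lemma step_const (f : ℤ → ℝ) (h : ∀ i, f i = f (i+1)) (i k : ℤ) : f i = f k := by
  have h0 : ∀ i : ℤ, f i = f 0 := by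
    intro i
    induction i using Int.induction_on with
    | zero => rfl
    | succ k ih => rw [← h k]; exact ih
    | pred k ih =>
      have hk := h (-k - 1)
      rw [show (-(k:ℤ) - 1 + 1) = -k by ring] at hk
      rw [hk]; exact ih
  rw [h0 i, h0 k]

include huni htame in
lemma hval (hb0 : ∀ i : ℤ, e i (i - 2) = 0) (hb1 : ∀ i : ℤ, e i (i - 1) = 1) (i j : ℤ) :
    e i j * e (i+1) (j+2) - e i (j+2) * e (i+1) j = e (j+2) (j+2) := by
  have hc : ∀ i' : ℤ, (fun i' => e i' j * e (i'+1) (j+2) - e i' (j+2) * e (i'+1) j) i'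
      = (fun i' => e i' j * e (i'+1) (j+2) - e i' (j+2) * e (i'+1) j) (i'+1) := by
    intro i'
    simp only
    have := hconst e huni htame i' j
    simp only [norm2] at this ⊢
    exact this
  have := step_const (fun i' => e i' j * e (i'+1) (j+2) - e i' (j+2) * e (i'+1) j) hc i (j+1)
  simp only [norm2] at this
  rw [this]
  have h1 : e (j+1) j = 1 := by
    have := hb1 (j+1); rw [show (j+1-1 : ℤ) = j by ring] at this; exact this
  have h2 : e (j+2) j = 0 := by
    have := hb0 (j+2); rw [show (j+2-2 : ℤ) = j by ring] at this; exact this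
  rw [h1, h2]
  ring

end

end FriezeAux

/-- **Entries of a Coxeter frieze are continuants in the first row.**
For a tame Coxeter frieze pattern `e` of width `m` over `ℝ`, with first row
`a k = e k k`, one has `e i j = K(a_i, …, a_j)` for all `i ≤ j`. -/
theorem coxeter_frieze_entries_eq_continuant (m : ℕ) (e : ℤ → ℤ → ℝ)
    (hb0 : ∀ i : ℤ, e i (i - 2) = 0)
    (hb1 : ∀ i : ℤ, e i (i - 1) = 1)
    (hb2 : ∀ i : ℤ, e i (i + m) = 1)
    (hb3 : ∀ i : ℤ, e i (i + m + 1) = 0)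
    (huni : ∀ i j : ℤ,
      e i j * e (i + 1) (j + 1) - e i (j + 1) * e (i + 1) j = 1)
    (htame : ∀ i j : ℤ,
      Matrix.det (Matrix.of fun r c : Fin 3 =>
        e (i + (r : ℕ)) (j + (c : ℕ))) = 0) :
    ∀ i j : ℤ, i ≤ j → e i j = continuant (fun k => e k k) i j := by
  classical
  set a : ℤ → ℝ := fun k => e k k with ha
  have hrec : ∀ i j : ℤ, e i (j+2) = e (j+2) (j+2) * e i (j+1) - e i j := by
    intro i j
    have h := FriezeAux.hLA e huni i j
    rw [FriezeAux.hval e huni htame hb0 hb1 i j] at h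
    exact h
  intro i j hij
  have hc0 : continuant a i (i-1) = 1 := by
    rw [FriezeAux.cont_eq a i (i-1) 0 (by omega)]
    exact Matrix.det_fin_zero
  have hc1 : continuant a i i = a i := by
    rw [FriezeAux.cont_eq a i i 1 (by omega), Matrix.det_fin_one]
    simp [FriezeAux.triMat]
  have hcrec : ∀ j' : ℤ, i - 1 ≤ j' →
      continuant a i (j'+2) = a (j'+2) * continuant a i (j'+1) - continuant a i j' := by
    intro j' hj'
    set n := (j' - i + 1).toNat with hn
    rw [FriezeAux.cont_eq a i (j'+2) (n+2) (by omega),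
        FriezeAux.cont_eq a i (j'+1) (n+1) (by omega),
        FriezeAux.cont_eq a i j' n rfl,
        FriezeAux.triDet_rec]
    have hb : a (i + ((n+1 : ℕ) : ℤ)) = a (j'+2) := by
      congr 1
      push_cast
      omega
    rw [hb]
  have key : ∀ n : ℕ, e i (i - 1 + n) = continuant a i (i - 1 + n) := by
    intro n
    induction n using Nat.strong_induction_on with
    | _ n ih =>
      rcases n with _ | (_ | k)
      · norm_num
        rw [hb1 i, hc0]
      · have h1 : i - 1 + ((0+1 : ℕ) : ℤ) = i := by push_cast; ring
        rw [h1, hc1]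
      · have hk2 : (i - 1 + ((k+1+1 : ℕ) : ℤ)) = (i - 1 + (k : ℕ)) + 2 := by
          push_cast; ring
        rw [hk2, hrec i (i - 1 + (k : ℕ)), hcrec (i - 1 + (k : ℕ)) (by omega)]
        have e1 : (i - 1 + ((k:ℕ):ℤ)) + 1 = i - 1 + ((k+1 : ℕ) : ℤ) := by push_cast; ring
        have e2 : (i - 1 + ((k:ℕ):ℤ)) + 2 = i - 1 + ((k+1+1 : ℕ) : ℤ) := by push_cast; ring
        rw [e1, ih (k+1) (by omega), ih k (by omega)]
  obtain ⟨n, hn⟩ : ∃ n : ℕ, j = i - 1 + n := ⟨(j - (i-1)).toNat, by omega⟩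
  rw [hn]
  exact key n
end

section
/- Let m ≥ 1 be an integer and let e be a tame Coxeter frieze pattern of width m over ℝ. Set x_k := e(0, k-1) for 0 ≤ k ≤ m+1 (the entries of the 0-th South-East diagonal, so x_0 = x_{m+1} = 1), and assume x_k ≠ 0 for 1 ≤ k ≤ m. Then for all integers i, j with 1 ≤ i ≤ j ≤ m: e(i,j) = x_{i-1} · x_{j+1} · ( 1/(x_{i-1}·x_i) + 1/(x_i·x_{i+1}) + ⋯ + 1/(x_j·x_{j+1}) ), i.e. e(i,j) = x_{i-1}·x_{j+1}·Σ_{k=i-1}^{j} 1/(x_k·x_{k+1}). -/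
/-- **Laurent expression for Coxeter frieze entries along a diagonal.**
Let `e` be a tame Coxeter frieze pattern of width `m ≥ 1` over `ℝ`, and let
`x k = e 0 (k-1)` (entries of the `0`-th South-East diagonal, `x 0 = x (m+1) = 1`),
assumed nonzero for `1 ≤ k ≤ m`.  Then for `1 ≤ i ≤ j ≤ m`:
`e i j = x (i-1) * x (j+1) * ∑_{k=i-1}^{j} 1 / (x k * x (k+1))`. -/
theorem coxeter_frieze_laurent_formula (m : ℕ) (hm : 1 ≤ m) (e : ℤ → ℤ → ℝ)
    (hb0 : ∀ i : ℤ, e i (i - 2) = 0)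
    (hb1 : ∀ i : ℤ, e i (i - 1) = 1)
    (hb2 : ∀ i : ℤ, e i (i + m) = 1)
    (hb3 : ∀ i : ℤ, e i (i + m + 1) = 0)
    (huni : ∀ i j : ℤ,
      e i j * e (i + 1) (j + 1) - e i (j + 1) * e (i + 1) j = 1)
    (htame : ∀ i j : ℤ,
      Matrix.det (Matrix.of fun r c : Fin 3 =>
        e (i + (r : ℕ)) (j + (c : ℕ))) = 0)
    (x : ℤ → ℝ) (hx : ∀ k : ℤ, x k = e 0 (k - 1))
    (hxne : ∀ k : ℤ, 1 ≤ k → k ≤ (m : ℤ) → x k ≠ 0) :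
    ∀ i j : ℤ, 1 ≤ i → i ≤ j → j ≤ (m : ℤ) →
      e i j = x (i - 1) * x (j + 1) *
        ∑ k ∈ Finset.Icc (i - 1) j, 1 / (x k * x (k + 1)) := by
  -- basic values
  have hx0 : x 0 = 1 := by
    rw [hx]; have h := hb1 0; norm_num at h ⊢; exact h
  have hxm1 : x ((m : ℤ) + 1) = 1 := by
    rw [hx]; have h := hb2 0; norm_num at h ⊢; exact h
  have hxne' : ∀ k : ℤ, 0 ≤ k → k ≤ (m : ℤ) + 1 → x k ≠ 0 := by
    intro k h0 h1
    rcases eq_or_lt_of_le h0 with h | h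
    · rw [← h, hx0]; norm_num
    rcases eq_or_lt_of_le h1 with h' | h'
    · rw [h', hxm1]; norm_num
    · exact hxne k (by omega) (by omega)
  -- the column three-term recurrence (valid for all rows `i ≥ 0`)
  have hrec : ∀ j : ℤ, ∃ a b : ℝ, ∀ i : ℤ, 0 ≤ i →
      e i (j + 2) = a * e i j + b * e i (j + 1) := by
    intro j
    set a : ℝ := e 0 (j + 2) * e 1 (j + 1) - e 1 (j + 2) * e 0 (j + 1) with ha
    set b : ℝ := e 0 j * e 1 (j + 2) - e 1 j * e 0 (j + 2) with hb
    refine ⟨a, b, ?_⟩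
    have hu0 : e 0 j * e 1 (j + 1) - e 0 (j + 1) * e 1 j = 1 := by
      have h := huni 0 j; norm_num at h; exact h
    have P0 : e 0 (j + 2) = a * e 0 j + b * e 0 (j + 1) := by
      rw [ha, hb]; linear_combination (-(e 0 (j + 2))) * hu0
    have P1 : e 1 (j + 2) = a * e 1 j + b * e 1 (j + 1) := by
      rw [ha, hb]; linear_combination (-(e 1 (j + 2))) * hu0
    have step : ∀ i : ℤ,
        e i (j + 2) = a * e i j + b * e i (j + 1) →
        e (i + 1) (j + 2) = a * e (i + 1) j + b * e (i + 1) (j + 1) →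
        e (i + 2) (j + 2) = a * e (i + 2) j + b * e (i + 2) (j + 1) := by
      intro i h1 h2
      have ht := htame i j
      rw [Matrix.det_fin_three] at ht
      simp only [Matrix.of_apply, Fin.isValue, Fin.val_zero, Fin.val_one, Fin.val_two] at ht
      push_cast at ht
      simp only [add_zero] at ht
      have hu : e i j * e (i + 1) (j + 1) - e i (j + 1) * e (i + 1) j = 1 := huni i j
      linear_combination ht
        - (e (i + 1) j * e (i + 2) (j + 1) - e (i + 1) (j + 1) * e (i + 2) j) * h1
        - (e i (j + 1) * e (i + 2) j - e i j * e (i + 2) (j + 1)) * h2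
        - (e (i + 2) (j + 2) - a * e (i + 2) j - b * e (i + 2) (j + 1)) * hu
    have key : ∀ n : ℕ,
        e (n : ℤ) (j + 2) = a * e (n : ℤ) j + b * e (n : ℤ) (j + 1) ∧
        e ((n : ℤ) + 1) (j + 2) = a * e ((n : ℤ) + 1) j + b * e ((n : ℤ) + 1) (j + 1) := by
      intro n
      induction n with
      | zero => exact ⟨by exact_mod_cast P0, by norm_num; exact P1⟩
      | succ k ih =>
          refine ⟨by push_cast; exact ih.2, ?_⟩
          have h3 := step (k : ℤ) ih.1 ih.2
          have hcast : ((k : ℤ) + 1) + 1 = (k : ℤ) + 2 := by ring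
          push_cast
          rw [hcast]
          exact h3
    intro i hi
    lift i to ℕ using hi
    exact (key i).1
  -- every row `i ≥ 0` is a combination of rows `0` and `1`
  have hL2 : ∀ i : ℤ, 0 ≤ i → ∀ n : ℕ,
      e i (i - 2 + n) = e 0 (i - 2) * e 1 (i - 2 + n) - e 1 (i - 2) * e 0 (i - 2 + n) := by
    intro i hi
    have base0 : e i (i - 2 + (0 : ℕ)) =
        e 0 (i - 2) * e 1 (i - 2 + (0 : ℕ)) - e 1 (i - 2) * e 0 (i - 2 + (0 : ℕ)) := by
      push_cast
      have h0 : e i (i - 2 + 0) = 0 := by rw [add_zero]; exact hb0 i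
      rw [h0]; ring
    have base1 : e i (i - 2 + (1 : ℕ)) =
        e 0 (i - 2) * e 1 (i - 2 + (1 : ℕ)) - e 1 (i - 2) * e 0 (i - 2 + (1 : ℕ)) := by
      push_cast
      have h1 : e i (i - 2 + 1) = 1 := by
        have := hb1 i; convert this using 2; ring
      have hu := huni 0 (i - 2)
      norm_num at hu
      rw [h1]; linear_combination -hu
    have key : ∀ n : ℕ,
        (e i (i - 2 + n) = e 0 (i - 2) * e 1 (i - 2 + n) - e 1 (i - 2) * e 0 (i - 2 + n)) ∧
        (e i (i - 2 + (n + 1 : ℕ)) =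
          e 0 (i - 2) * e 1 (i - 2 + (n + 1 : ℕ)) - e 1 (i - 2) * e 0 (i - 2 + (n + 1 : ℕ))) := by
      intro n
      induction n with
      | zero => exact ⟨base0, base1⟩
      | succ k ih =>
          refine ⟨ih.2, ?_⟩
          obtain ⟨a, b, hab⟩ := hrec (i - 2 + k)
          have hri := hab i hi
          have hr0 := hab 0 le_rfl
          have hr1 := hab 1 (by norm_num)
          have e1 : i - 2 + ((k : ℤ) + 1 + 1) = (i - 2 + k) + 2 := by ring
          have e2 : i - 2 + ((k : ℤ) + 1) = (i - 2 + k) + 1 := by ring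
          push_cast
          rw [e1]
          rw [hri, hr0, hr1]
          have hk1 := ih.1
          have hk2 := ih.2
          push_cast at hk1 hk2
          rw [e2] at hk2
          rw [hk1, hk2]; ring
    exact fun n => (key n).1
  -- formula for the second row
  have hL3 : ∀ n : ℕ, (n : ℤ) - 1 ≤ (m : ℤ) →
      e 1 ((n : ℤ) - 1) =
        e 0 ((n : ℤ) - 1) * ∑ k ∈ Finset.Icc (0 : ℤ) ((n : ℤ) - 1), 1 / (x k * x (k + 1)) := by
    intro n
    induction n with
    | zero =>
        intro _
        have h0 : e 1 (-1 : ℤ) = 0 := by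
          have := hb0 1; norm_num at this; exact this
        have he : Finset.Icc (0 : ℤ) (-1 : ℤ) = ∅ := Finset.Icc_eq_empty (by omega)
        norm_num [h0, he]
    | succ k ih =>
        intro hk
        push_cast at hk ⊢
        have hk' : (k : ℤ) ≤ (m : ℤ) := by omega
        have ihs := ih (by omega)
        set j : ℤ := (k : ℤ) - 1 with hj
        have hgoal : (k : ℤ) + 1 - 1 = j + 1 := by omega
        rw [hgoal]
        have hsum : Finset.Icc (0 : ℤ) (j + 1) = insert (j + 1) (Finset.Icc 0 j) := by
          ext t; simp only [Finset.mem_Icc, Finset.mem_insert]; omega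
        have hnotmem : (j + 1) ∉ Finset.Icc (0 : ℤ) j := by
          simp only [Finset.mem_Icc]; omega
        rw [hsum, Finset.sum_insert hnotmem]
        have he0j : e 0 j = x (j + 1) := by rw [hx]; norm_num
        have he0j1 : e 0 (j + 1) = x (j + 2) := by
          rw [hx]; congr 1; ring
        have hu := huni 0 j
        norm_num at hu
        have hxj1 : x (j + 1) ≠ 0 := hxne' (j + 1) (by omega) (by omega)
        have hxj2 : x (j + 2) ≠ 0 := hxne' (j + 2) (by omega) (by omega)
        rw [he0j] at ihs
        rw [he0j, he0j1, ihs] at hu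
        have hj2 : j + 1 + 1 = j + 2 := by ring
        rw [he0j1, hj2]
        apply mul_left_cancel₀ hxj1
        have hdiv : x (j + 1) * x (j + 2) * (1 / (x (j + 1) * x (j + 2))) = 1 := by
          field_simp
        linear_combination hu - hdiv
  -- assemble
  intro i j hi hij hjm
  -- the Plücker-type identity
  have hn : i - 2 + ((j - (i - 2)).toNat : ℤ) = j := by omega
  have hP := hL2 i (by omega) ((j - (i - 2)).toNat)
  rw [hn] at hP
  -- row-1 values
  have h1j : e 1 j =
      e 0 j * ∑ k ∈ Finset.Icc (0 : ℤ) j, 1 / (x k * x (k + 1)) := by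
    have h := hL3 (j + 1).toNat (by omega)
    have : ((j + 1).toNat : ℤ) - 1 = j := by omega
    rwa [this] at h
  have h1i : e 1 (i - 2) =
      e 0 (i - 2) * ∑ k ∈ Finset.Icc (0 : ℤ) (i - 2), 1 / (x k * x (k + 1)) := by
    have h := hL3 (i - 1).toNat (by omega)
    have : ((i - 1).toNat : ℤ) - 1 = i - 2 := by omega
    rwa [this] at h
  -- split the sum
  have hsplit : (∑ k ∈ Finset.Icc (0 : ℤ) j, 1 / (x k * x (k + 1)))
      = (∑ k ∈ Finset.Icc (0 : ℤ) (i - 2), 1 / (x k * x (k + 1)))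
        + ∑ k ∈ Finset.Icc (i - 1) j, 1 / (x k * x (k + 1)) := by
    rw [← Finset.sum_union]
    · congr 1
      ext t; simp only [Finset.mem_Icc, Finset.mem_union]; omega
    · rw [Finset.disjoint_left]
      intro t ht ht'
      simp only [Finset.mem_Icc] at ht ht'
      omega
  have hxi : x (i - 1) = e 0 (i - 2) := by rw [hx]; congr 1; ring
  have hxj : x (j + 1) = e 0 j := by rw [hx]; norm_num
  rw [hP, h1j, h1i, hsplit, hxi, hxj]
  ring
end

section
/- Let m ≥ 0 be an integer and let e be a tame Coxeter frieze pattern of width m over ℝ. If e(i,i) is an integer for every i ∈ ℤ (i.e. the first row of the frieze consists of integers), then e(i,j) is an integer for all i,j ∈ ℤ. -/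
/-- **Integrality of Coxeter friezes with integral first row.**
If the first row of a tame Coxeter frieze pattern of width `m` over `ℝ` consists of
integers, then all entries of the frieze are integers. -/
theorem coxeter_frieze_integral_of_first_row_integral (m : ℕ) (e : ℤ → ℤ → ℝ)
    (hb0 : ∀ i : ℤ, e i (i - 2) = 0)
    (hb1 : ∀ i : ℤ, e i (i - 1) = 1)
    (hb2 : ∀ i : ℤ, e i (i + m) = 1)
    (hb3 : ∀ i : ℤ, e i (i + m + 1) = 0)
    (huni : ∀ i j : ℤ,
      e i j * e (i + 1) (j + 1) - e i (j + 1) * e (i + 1) j = 1)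
    (htame : ∀ i j : ℤ,
      Matrix.det (Matrix.of fun r c : Fin 3 =>
        e (i + (r : ℕ)) (j + (c : ℕ))) = 0)
    (hrow : ∀ i : ℤ, ∃ z : ℤ, e i i = (z : ℝ)) :
    ∀ i j : ℤ, ∃ z : ℤ, e i j = (z : ℝ) := by
  -- row `i` satisfies the linear recurrence with coefficient `a i j`
  have hA : ∀ i j : ℤ, e i (j + 2) =
      (e i j * e (i + 1) (j + 2) - e i (j + 2) * e (i + 1) j) * e i (j + 1) - e i j := by
    intro i j
    have u1 := huni i j
    have u2 := huni i (j + 1)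
    rw [show j + 1 + 1 = j + 2 by ring] at u2
    linear_combination (- e i j) * u2 - e i (j + 2) * u1
  -- row `i+1` satisfies the same recurrence
  have hB : ∀ i j : ℤ, e (i + 1) (j + 2) =
      (e i j * e (i + 1) (j + 2) - e i (j + 2) * e (i + 1) j) * e (i + 1) (j + 1)
        - e (i + 1) j := by
    intro i j
    have u1 := huni i j
    have u2 := huni i (j + 1)
    rw [show j + 1 + 1 = j + 2 by ring] at u2
    linear_combination (- e (i + 1) (j + 2)) * u1 - e (i + 1) j * u2
  -- by tameness, row `i+2` satisfies the recurrence with the same coefficient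
  have hC : ∀ i j : ℤ, e (i + 2) (j + 2) =
      (e i j * e (i + 1) (j + 2) - e i (j + 2) * e (i + 1) j) * e (i + 2) (j + 1)
        - e (i + 2) j := by
    intro i j
    have hd := htame i j
    rw [Matrix.det_fin_three] at hd
    simp only [Matrix.of_apply, Fin.val_zero, Fin.val_one, Fin.val_two, Nat.cast_ofNat,
      Nat.cast_zero, Nat.cast_one, add_zero] at hd
    set a : ℝ := e i j * e (i + 1) (j + 2) - e i (j + 2) * e (i + 1) j with ha
    have h1 : e i (j + 2) = a * e i (j + 1) - e i j := hA i j
    have h2 : e (i + 1) (j + 2) = a * e (i + 1) (j + 1) - e (i + 1) j := hB i j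
    rw [h1, h2] at hd
    have u1 := huni i j
    linear_combination hd - (e (i + 2) (j + 2) - a * e (i + 2) (j + 1) + e (i + 2) j) * u1
  -- the coefficient `a i j` is independent of `i`
  have astep : ∀ i j : ℤ,
      e (i + 1) j * e (i + 2) (j + 2) - e (i + 1) (j + 2) * e (i + 2) j
        = e i j * e (i + 1) (j + 2) - e i (j + 2) * e (i + 1) j := by
    intro i j
    set a : ℝ := e i j * e (i + 1) (j + 2) - e i (j + 2) * e (i + 1) j with ha
    set a' : ℝ := e (i + 1) j * e (i + 2) (j + 2) - e (i + 1) (j + 2) * e (i + 2) j with ha'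
    have h2 : e (i + 1) (j + 2) = a * e (i + 1) (j + 1) - e (i + 1) j := hB i j
    have h3 : e (i + 2) (j + 2) = a * e (i + 2) (j + 1) - e (i + 2) j := hC i j
    have h2' : e (i + 1) (j + 2) = a' * e (i + 1) (j + 1) - e (i + 1) j := by
      have := hA (i + 1) j
      rwa [show i + 1 + 1 = i + 2 by ring] at this
    have h3' : e (i + 2) (j + 2) = a' * e (i + 2) (j + 1) - e (i + 2) j := by
      have := hB (i + 1) j
      rwa [show i + 1 + 1 = i + 2 by ring] at this
    have hf : (a' - a) * e (i + 1) (j + 1) = 0 := by linear_combination h2 - h2'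
    have hg : (a' - a) * e (i + 2) (j + 1) = 0 := by linear_combination h3 - h3'
    by_contra hne
    have hsub : a' - a ≠ 0 := sub_ne_zero.2 hne
    have hf0 : e (i + 1) (j + 1) = 0 := by
      rcases mul_eq_zero.1 hf with h | h
      · exact absurd h hsub
      · exact h
    have hg0 : e (i + 2) (j + 1) = 0 := by
      rcases mul_eq_zero.1 hg with h | h
      · exact absurd h hsub
      · exact h
    have hu := huni (i + 1) j
    rw [show i + 1 + 1 = i + 2 by ring] at hu
    rw [hf0, hg0] at hu
    simp at hu
  -- hence `a i j = a (j+2) j = e (j+2) (j+2)`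
  have aconst : ∀ j i : ℤ,
      e i j * e (i + 1) (j + 2) - e i (j + 2) * e (i + 1) j
        = e (j + 2) j * e (j + 3) (j + 2) - e (j + 2) (j + 2) * e (j + 3) j := by
    intro j i
    have key : ∀ n : ℤ,
        e (j + 2 + n) j * e (j + 2 + n + 1) (j + 2) - e (j + 2 + n) (j + 2) * e (j + 2 + n + 1) j
          = e (j + 2) j * e (j + 3) (j + 2) - e (j + 2) (j + 2) * e (j + 3) j := by
      intro n
      induction n using Int.induction_on with
      | zero =>
        rw [show j + 2 + (0 : ℤ) + 1 = j + 3 by ring, show j + 2 + (0 : ℤ) = j + 2 by ring]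
      | succ k ih =>
        rw [show j + 2 + ((k : ℤ) + 1) + 1 = j + 2 + (k : ℤ) + 2 by ring,
          show j + 2 + ((k : ℤ) + 1) = j + 2 + (k : ℤ) + 1 by ring]
        rw [astep (j + 2 + (k : ℤ)) j]
        exact ih
      | pred k ih =>
        rw [← astep (j + 2 + (-(k : ℤ) - 1)) j]
        rw [show j + 2 + (-(k : ℤ) - 1) + 2 = j + 2 + (-(k : ℤ)) + 1 by ring,
          show j + 2 + (-(k : ℤ) - 1) + 1 = j + 2 + (-(k : ℤ)) by ring]
        exact ih
    have := key (i - (j + 2))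
    rw [show j + 2 + (i - (j + 2)) = i by ring] at this
    rw [show i + 1 = i + 1 by ring] at this
    exact this
  have abase : ∀ j : ℤ,
      e (j + 2) j * e (j + 3) (j + 2) - e (j + 2) (j + 2) * e (j + 3) j
        = e (j + 2) (j + 2) := by
    intro j
    have h := hA (j + 2) j
    rw [show j + 2 + 1 = j + 3 by ring] at h
    have e0 : e (j + 2) j = 0 := by
      have := hb0 (j + 2); rwa [show j + 2 - 2 = j by ring] at this
    have e1 : e (j + 2) (j + 1) = 1 := by
      have := hb1 (j + 2); rwa [show j + 2 - 1 = j + 1 by ring] at this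
    rw [e0, e1] at h
    linear_combination e (j + 3) (j + 2) * e0 - h
  -- master recurrence with coefficient from the first row
  have hrec : ∀ i j : ℤ, e i (j + 2) = e (j + 2) (j + 2) * e i (j + 1) - e i j := by
    intro i j
    rw [hA i j, aconst j i, abase j]
  -- integrality by two-sided induction
  intro i j
  have key : ∀ n : ℤ, (∃ z : ℤ, e i (i - 2 + n) = (z : ℝ)) ∧
      (∃ z : ℤ, e i (i - 1 + n) = (z : ℝ)) := by
    intro n
    induction n using Int.induction_on with
    | zero =>
      constructor
      · exact ⟨0, by rw [show i - 2 + 0 = i - 2 by ring, hb0 i]; norm_num⟩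
      · exact ⟨1, by rw [show i - 1 + 0 = i - 1 by ring, hb1 i]; norm_num⟩
    | succ k ih =>
      obtain ⟨⟨b, hb⟩, ⟨c, hc⟩⟩ := ih
      constructor
      · exact ⟨c, by rw [show i - 2 + (k + 1) = i - 1 + k by ring]; exact hc⟩
      · obtain ⟨z, hz⟩ := hrow (i - 2 + k + 2)
        refine ⟨z * c - b, ?_⟩
        have h := hrec i (i - 2 + k)
        rw [show i - 1 + (k + 1) = i - 2 + k + 2 by ring]
        rw [h, hz, show i - 2 + k + 1 = i - 1 + k by ring, hc, hb]
        push_cast; ring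
    | pred k ih =>
      obtain ⟨⟨b, hb⟩, ⟨c, hc⟩⟩ := ih
      constructor
      · obtain ⟨z, hz⟩ := hrow (i - 1 + (-(k : ℤ)))
        refine ⟨z * b - c, ?_⟩
        have h := hrec i (i - 2 + (-(k : ℤ) - 1))
        rw [show i - 2 + (-(k : ℤ) - 1) + 2 = i - 1 + (-(k : ℤ)) by ring,
          show i - 2 + (-(k : ℤ) - 1) + 1 = i - 2 + (-(k : ℤ)) by ring] at h
        rw [hb, hc, hz] at h
        have h2 : e i (i - 2 + (-(k : ℤ) - 1)) = (z : ℝ) * b - c := by linarith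
        rw [h2]; push_cast; ring
      · exact ⟨b, by rw [show i - 1 + (-k - 1) = i - 2 + (-k : ℤ) by ring]; exact hb⟩
  have := (key (j - (i - 2))).1
  rwa [show i - 2 + (j - (i - 2)) = j by ring] at this
end

section
/- Let m ≥ 1 be an integer, let e be a tame Coxeter frieze pattern of width m over ℝ, and set x_k := e(0, k-1) for 0 ≤ k ≤ m+1 (so x_0 = x_{m+1} = 1). Then all interior entries of the frieze are positive integers (i.e. e(i,j) is a positive integer for all i,j ∈ ℤ with i ≤ j ≤ i+m-1) if and only if x_1, …, x_m are positive integers such that x_k divides x_{k-1} + x_{k+1} in ℤ for every 1 ≤ k ≤ m. -/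
-- helper: solution of 3-term recurrence vanishing at two consecutive points vanishes
theorem recZero (a u : ℤ → ℝ) (h : ∀ j : ℤ, u j + u (j + 2) = a j * u (j + 1))
    (j0 : ℤ) (h0 : u j0 = 0) (h1 : u (j0 + 1) = 0) : ∀ j, u j = 0 := by
  have key : ∀ n : ℤ, u (j0 + n) = 0 ∧ u (j0 + n + 1) = 0 := by
    intro n
    induction n using Int.induction_on with
    | zero => simpa using ⟨h0, h1⟩
    | succ n ih =>
      have h2 := h (j0 + n)
      constructor
      · rw [show j0 + ((n : ℤ) + 1) = j0 + n + 1 by ring]; exact ih.2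
      · rw [show j0 + ((n : ℤ) + 1) + 1 = j0 + n + 2 by ring]
        rw [ih.1, ih.2] at h2; simpa using h2
    | pred n ih =>
      have h2 := h (j0 + (-(n : ℤ) - 1))
      rw [show j0 + (-(n : ℤ) - 1) + 2 = j0 + -(n:ℤ) + 1 by ring,
        show j0 + (-(n : ℤ) - 1) + 1 = j0 + -(n:ℤ) by ring] at h2
      constructor
      · rw [ih.1, ih.2] at h2; simpa using h2
      · rw [show j0 + (-(n : ℤ) - 1) + 1 = j0 + -(n:ℤ) by ring]; exact ih.1
  intro j
  have h2 := (key (j - j0)).1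
  rwa [show j0 + (j - j0) = j by ring] at h2


theorem friezeL1 (e : ℤ → ℤ → ℝ)
    (hb0 : ∀ i : ℤ, e i (i - 2) = 0)
    (hb1 : ∀ i : ℤ, e i (i - 1) = 1)
    (huni : ∀ i j : ℤ, e i j * e (i + 1) (j + 1) - e i (j + 1) * e (i + 1) j = 1)
    (htame : ∀ i j : ℤ, Matrix.det (Matrix.of fun r c : Fin 3 =>
        e (i + (r : ℕ)) (j + (c : ℕ))) = 0) :
    ∀ i j : ℤ, e i j + e i (j + 2) = e (j + 2) (j + 2) * e i (j + 1) := by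
  obtain ⟨c, hc⟩ : ∃ c : ℤ → ℤ → ℝ, ∀ i j : ℤ,
      c i j = e i j * e (i + 1) (j + 2) - e i (j + 2) * e (i + 1) j :=
    ⟨_, fun _ _ => rfl⟩
  have hun1 : ∀ i j : ℤ, e i (j + 1) * e (i + 1) (j + 2) - e i (j + 2) * e (i + 1) (j + 1) = 1 := by
    intro i j
    have h := huni i (j + 1)
    rwa [show j + 1 + 1 = j + 2 by ring] at h
  have r0 : ∀ i j : ℤ, e i j + e i (j + 2) = c i j * e i (j + 1) := by
    intro i j
    rw [hc]
    linear_combination (- e i j) * hun1 i j - (e i (j + 2)) * huni i j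
  have r1 : ∀ i j : ℤ, e (i + 1) j + e (i + 1) (j + 2) = c i j * e (i + 1) (j + 1) := by
    intro i j
    rw [hc]
    linear_combination (- e (i + 1) (j + 2)) * huni i j - (e (i + 1) j) * hun1 i j
  have r2 : ∀ i j : ℤ, e (i + 2) j + e (i + 2) (j + 2) = c i j * e (i + 2) (j + 1) := by
    intro i j
    have ht := htame i j
    rw [Matrix.det_fin_three] at ht
    simp only [Matrix.of_apply, Fin.val_zero, Fin.val_one, Fin.val_two,
      Nat.cast_zero, Nat.cast_one, Nat.cast_ofNat, add_zero] at ht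
    rw [hc]
    linear_combination ht - (e (i + 2) (j + 2)) * huni i j - (e (i + 2) j) * hun1 i j
  have cEq : ∀ i j : ℤ, c i j = c (i + 1) j := by
    intro i j
    have d1 : (c i j - c (i + 1) j) * e (i + 1) (j + 1) = 0 := by
      linear_combination r0 (i + 1) j - r1 i j
    have h := r1 (i + 1) j
    rw [show i + 1 + 1 = i + 2 by ring] at h
    have d2 : (c i j - c (i + 1) j) * e (i + 2) (j + 1) = 0 := by
      linear_combination h - r2 i j
    rcases mul_eq_zero.mp d1 with h1 | h1
    · exact sub_eq_zero.mp h1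
    rcases mul_eq_zero.mp d2 with h2 | h2
    · exact sub_eq_zero.mp h2
    exfalso
    have hu := huni (i + 1) j
    rw [show i + 1 + 1 = i + 2 by ring, h1, h2] at hu
    simp at hu
  have cConst : ∀ i j : ℤ, c i j = c 0 j := by
    intro i j
    induction i using Int.induction_on with
    | zero => rfl
    | succ n ih => rw [← cEq n j]; exact ih
    | pred n ih =>
      have h := cEq (-(n : ℤ) - 1) j
      rw [show -(n : ℤ) - 1 + 1 = -(n : ℤ) by ring] at h
      rw [h]; exact ih
  have L1' : ∀ i j : ℤ, e i j + e i (j + 2) = c 0 j * e i (j + 1) := by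
    intro i j
    rw [← cConst i j]; exact r0 i j
  have cVal : ∀ j : ℤ, c 0 j = e (j + 2) (j + 2) := by
    intro j
    have h := L1' (j + 2) j
    have z0 : e (j + 2) j = 0 := by
      have := hb0 (j + 2); rwa [show j + 2 - 2 = j by ring] at this
    have z1 : e (j + 2) (j + 1) = 1 := by
      have := hb1 (j + 2); rwa [show j + 2 - 1 = j + 1 by ring] at this
    rw [z0, z1] at h; linarith
  intro i j
  rw [← cVal j]; exact L1' i j



theorem friezeL2 (e : ℤ → ℤ → ℝ)
    (hb0 : ∀ i : ℤ, e i (i - 2) = 0)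
    (hb1 : ∀ i : ℤ, e i (i - 1) = 1)
    (hL1 : ∀ i j : ℤ, e i j + e i (j + 2) = e (j + 2) (j + 2) * e i (j + 1)) :
    ∀ i j : ℤ, e i j + e (i + 2) j = e i i * e (i + 1) j := by
  intro i
  have key := recZero (fun j => e (j + 2) (j + 2))
      (fun j => e i j + e (i + 2) j - e i i * e (i + 1) j)
      (by
        intro j
        linear_combination hL1 i j + hL1 (i + 2) j - e i i * hL1 (i + 1) j)
      i
      (by
        have z0 : e (i + 2) i = 0 := by
          have := hb0 (i + 2); rwa [show i + 2 - 2 = i by ring] at this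
        have z1 : e (i + 1) i = 1 := by
          have := hb1 (i + 1); rwa [show i + 1 - 1 = i by ring] at this
        rw [z0, z1]; ring)
      (by
        have z1 : e (i + 2) (i + 1) = 1 := by
          have := hb1 (i + 2); rwa [show i + 2 - 1 = i + 1 by ring] at this
        have hE : e i (i - 1) + e i (i + 1) = e (i + 1) (i + 1) * e i i := by
          have h := hL1 i (i - 1)
          rwa [show i - 1 + 2 = i + 1 by ring, show i - 1 + 1 = i by ring] at h
        rw [hb1 i] at hE
        rw [z1]
        linarith)
  intro j
  have := key j
  linarith

theorem friezeStar (e : ℤ → ℤ → ℝ)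
    (hb1 : ∀ i : ℤ, e i (i - 1) = 1)
    (hb0 : ∀ i : ℤ, e i (i - 2) = 0)
    (hL1 : ∀ i j : ℤ, e i j + e i (j + 2) = e (j + 2) (j + 2) * e i (j + 1))
    (hL2 : ∀ i j : ℤ, e i j + e (i + 2) j = e i i * e (i + 1) j) :
    ∀ i k j : ℤ, e k j = e i (k - 2) * e (i + 1) j - e i j * e (i + 1) (k - 2) := by
  intro i k j
  have key := recZero (fun k => e k k)
      (fun k => e k j - (e i (k - 2) * e (i + 1) j - e i j * e (i + 1) (k - 2)))
      (by
        intro k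
        have hA := hL1 i (k - 2)
        rw [show k - 2 + 2 = k by ring, show k - 2 + 1 = k - 1 by ring] at hA
        have hB := hL1 (i + 1) (k - 2)
        rw [show k - 2 + 2 = k by ring, show k - 2 + 1 = k - 1 by ring] at hB
        have hC := hL2 k j
        rw [show k + 2 - 2 = k by ring, show k + 1 - 2 = k - 1 by ring]
        linear_combination hC - e (i + 1) j * hA + e i j * hB)
      (i + 2)
      (by
        rw [show i + 2 - 2 = i by ring]
        have z1 : e (i + 1) i = 1 := by
          have := hb1 (i + 1); rwa [show i + 1 - 1 = i by ring] at this
        rw [z1]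
        linear_combination hL2 i j)
      (by
        rw [show i + 2 + 1 = i + 3 by ring, show i + 3 - 2 = i + 1 by ring]
        have hC2 := hL2 (i + 1) j
        rw [show i + 1 + 2 = i + 3 by ring, show i + 1 + 1 = i + 2 by ring] at hC2
        have hC1 := hL2 i j
        have hE := hL1 i (i - 1)
        rw [show i - 1 + 2 = i + 1 by ring, show i - 1 + 1 = i by ring, hb1 i] at hE
        linear_combination hC2 + e (i + 1) (i + 1) * hC1 - e (i + 1) j * hE)
  have := key k
  linarith

theorem friezeRowAnti (m : ℕ) (e : ℤ → ℤ → ℝ)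
    (hb0 : ∀ i : ℤ, e i (i - 2) = 0)
    (hb1 : ∀ i : ℤ, e i (i - 1) = 1)
    (hb2 : ∀ i : ℤ, e i (i + m) = 1)
    (hb3 : ∀ i : ℤ, e i (i + m + 1) = 0)
    (hL1 : ∀ i j : ℤ, e i j + e i (j + 2) = e (j + 2) (j + 2) * e i (j + 1)) :
    ∀ i j : ℤ, e (i + m + 3) j = - e i j := by
  intro i
  have key := recZero (fun j => e (j + 2) (j + 2))
      (fun j => e i j + e (i + (m : ℤ) + 3) j)
      (by
        intro j
        linear_combination hL1 i j + hL1 (i + (m : ℤ) + 3) j)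
      (i + (m : ℤ) + 1)
      (by
        have z0 : e (i + (m : ℤ) + 3) (i + (m : ℤ) + 1) = 0 := by
          have := hb0 (i + (m : ℤ) + 3)
          rwa [show i + (m : ℤ) + 3 - 2 = i + (m : ℤ) + 1 by ring] at this
        rw [z0, hb3 i]; ring)
      (by
        rw [show i + (m : ℤ) + 1 + 1 = i + (m : ℤ) + 2 by ring]
        have z1 : e (i + (m : ℤ) + 3) (i + (m : ℤ) + 2) = 1 := by
          have := hb1 (i + (m : ℤ) + 3)
          rwa [show i + (m : ℤ) + 3 - 1 = i + (m : ℤ) + 2 by ring] at this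
        have m2 : e i (i + (m : ℤ) + 2) = -1 := by
          have h := hL1 i (i + (m : ℤ))
          rw [show i + (m : ℤ) + 2 = i + (m : ℤ) + 2 by ring, hb2 i, hb3 i] at h
          simp at h
          linarith
        rw [z1, m2]; ring)
  intro j
  have := key j
  linarith

theorem friezeColAnti (m : ℕ) (e : ℤ → ℤ → ℝ)
    (hb0 : ∀ i : ℤ, e i (i - 2) = 0)
    (hb1 : ∀ i : ℤ, e i (i - 1) = 1)
    (hL2 : ∀ i j : ℤ, e i j + e (i + 2) j = e i i * e (i + 1) j)
    (hL4 : ∀ i j : ℤ, e (i + m + 3) j = - e i j) :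
    ∀ i j : ℤ, e i (j + m + 3) = - e i j := by
  intro i j
  have key := recZero (fun i' => e i' i')
      (fun i' => e i' j + e i' (j + (m : ℤ) + 3))
      (by
        intro i'
        linear_combination hL2 i' j + hL2 i' (j + (m : ℤ) + 3))
      (j + (m : ℤ) + 4)
      (by
        have z1 : e (j + (m : ℤ) + 4) (j + (m : ℤ) + 3) = 1 := by
          have := hb1 (j + (m : ℤ) + 4)
          rwa [show j + (m : ℤ) + 4 - 1 = j + (m : ℤ) + 3 by ring] at this
        have z2 : e (j + (m : ℤ) + 4) j = -1 := by
          have h := hL4 (j + 1) j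
          rw [show j + 1 + (m : ℤ) + 3 = j + (m : ℤ) + 4 by ring] at h
          have := hb1 (j + 1)
          rw [show j + 1 - 1 = j by ring] at this
          rw [this] at h
          linarith
        rw [z1, z2]; ring)
      (by
        rw [show j + (m : ℤ) + 4 + 1 = j + (m : ℤ) + 5 by ring]
        have z1 : e (j + (m : ℤ) + 5) (j + (m : ℤ) + 3) = 0 := by
          have := hb0 (j + (m : ℤ) + 5)
          rwa [show j + (m : ℤ) + 5 - 2 = j + (m : ℤ) + 3 by ring] at this
        have z2 : e (j + (m : ℤ) + 5) j = 0 := by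
          have h := hL4 (j + 2) j
          rw [show j + 2 + (m : ℤ) + 3 = j + (m : ℤ) + 5 by ring] at h
          have := hb0 (j + 2)
          rw [show j + 2 - 2 = j by ring] at this
          rw [this] at h
          linarith
        rw [z1, z2]; ring)
  have := key i
  linarith


theorem intRow (e : ℤ → ℤ → ℝ)
    (hb0 : ∀ i : ℤ, e i (i - 2) = 0)
    (hb1 : ∀ i : ℤ, e i (i - 1) = 1)
    (hL1 : ∀ i j : ℤ, e i j + e i (j + 2) = e (j + 2) (j + 2) * e i (j + 1)) :
    ∀ (i : ℤ) (n : ℕ), (∀ t : ℕ, t ≤ n → ∃ z : ℤ, e (i + t) (i + t) = z) →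
      (∃ z : ℤ, e i (i - 2 + n) = z) ∧ (∃ z : ℤ, e i (i - 1 + n) = z) := by
  intro i n
  induction n with
  | zero =>
    intro _
    constructor
    · exact ⟨0, by norm_num [hb0 i]⟩
    · exact ⟨1, by norm_num [hb1 i]⟩
  | succ n IH =>
    intro h
    have ih := IH (fun t ht => h t (Nat.le_succ_of_le ht))
    constructor
    · obtain ⟨z, hz⟩ := ih.2
      refine ⟨z, ?_⟩
      push_cast
      rwa [show i - 2 + ((n : ℤ) + 1) = i - 1 + n by ring]
    · obtain ⟨z0, hz0⟩ := ih.1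
      obtain ⟨z1, hz1⟩ := ih.2
      obtain ⟨za, hza⟩ := h n (Nat.le_succ n)
      refine ⟨za * z1 - z0, ?_⟩
      have hr := hL1 i (i - 2 + n)
      rw [show i - 2 + (n : ℤ) + 2 = i + n by ring,
        show i - 2 + (n : ℤ) + 1 = i - 1 + n by ring] at hr
      push_cast
      rw [show i - 1 + ((n : ℤ) + 1) = i + n by ring]
      rw [hz0, hz1, hza] at hr
      push_cast
      linarith

theorem chordPos (m : ℕ) (e : ℤ → ℤ → ℝ)
    (huni : ∀ i j : ℤ, e i j * e (i + 1) (j + 1) - e i (j + 1) * e (i + 1) j = 1)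
    (i : ℤ) (hQ : ∀ j : ℤ, i - 1 ≤ j → j ≤ i + m → 0 < e i j) :
    ∀ a b : ℤ, i - 1 ≤ a → a < b → b ≤ i + m →
      0 < e i a * e (i + 1) b - e i b * e (i + 1) a := by
  have key : ∀ (n : ℕ) (a : ℤ), i - 1 ≤ a → a + 1 + n ≤ i + m →
      0 < e i a * e (i + 1) (a + 1 + n) - e i (a + 1 + n) * e (i + 1) a := by
    intro n
    induction n with
    | zero =>
      intro a ha hb
      have h := huni i a
      norm_num
      norm_num at hb
      linarith
    | succ n IH =>
      intro a ha hb
      push_cast at hb ⊢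
      rw [show a + 1 + ((n : ℤ) + 1) = (a + 1 + n) + 1 by ring] at hb ⊢
      set b' : ℤ := a + 1 + (n : ℤ) with hb'
      have ih := IH a ha (by omega)
      have hQa : 0 < e i a := hQ a ha (by omega)
      have hQb' : 0 < e i b' := hQ b' (by omega) (by omega)
      have hQb : 0 < e i (b' + 1) := hQ (b' + 1) (by omega) (by omega)
      have h6 : (e i a * e (i + 1) (b' + 1) - e i (b' + 1) * e (i + 1) a) * e i b'
          = (e i a * e (i + 1) b' - e i b' * e (i + 1) a) * e i (b' + 1) + e i a := by
        linear_combination (e i a) * huni i b'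
      nlinarith [h6, ih, hQa, hQb', hQb]
  intro a b ha hab hbm
  have h := key (b - a - 1).toNat a ha (by omega)
  rwa [show a + 1 + ((b - a - 1).toNat : ℤ) = b by omega] at h

/-- **Coxeter's positivity criterion.**
Let `e` be a tame Coxeter frieze pattern of width `m ≥ 1` over `ℝ`, and let
`x k = e 0 (k-1)` be the entries of the `0`-th South-East diagonal
(`x 0 = x (m+1) = 1`).  All interior entries of the frieze are positive integers
if and only if `x 1, …, x m` are positive integers such that `x k` divides
`x (k-1) + x (k+1)` in `ℤ` for every `1 ≤ k ≤ m`. -/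
theorem coxeter_frieze_positive_integer_criterion (m : ℕ) (hm : 1 ≤ m)
    (e : ℤ → ℤ → ℝ)
    (hb0 : ∀ i : ℤ, e i (i - 2) = 0)
    (hb1 : ∀ i : ℤ, e i (i - 1) = 1)
    (hb2 : ∀ i : ℤ, e i (i + m) = 1)
    (hb3 : ∀ i : ℤ, e i (i + m + 1) = 0)
    (huni : ∀ i j : ℤ,
      e i j * e (i + 1) (j + 1) - e i (j + 1) * e (i + 1) j = 1)
    (htame : ∀ i j : ℤ,
      Matrix.det (Matrix.of fun r c : Fin 3 =>
        e (i + (r : ℕ)) (j + (c : ℕ))) = 0)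
    (x : ℤ → ℝ) (hx : ∀ k : ℤ, x k = e 0 (k - 1)) :
    (∀ i j : ℤ, i ≤ j → j ≤ i + (m : ℤ) - 1 →
        ∃ z : ℤ, 0 < z ∧ e i j = (z : ℝ)) ↔
    (∃ y : ℤ → ℤ,
      (∀ k : ℤ, 0 ≤ k → k ≤ (m : ℤ) + 1 → x k = (y k : ℝ)) ∧
      (∀ k : ℤ, 1 ≤ k → k ≤ (m : ℤ) → 0 < y k ∧ y k ∣ (y (k - 1) + y (k + 1)))) := by
  classical
  have hL1 := friezeL1 e hb0 hb1 huni htame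
  have hL2 := friezeL2 e hb0 hb1 hL1
  have hL4 := friezeRowAnti m e hb0 hb1 hb2 hb3 hL1
  have hL5 := friezeColAnti m e hb0 hb1 hL2 hL4
  have hstar := friezeStar e hb1 hb0 hL1 hL2
  -- the basic diagonal recursion along the 0-th diagonal
  have hdiagrec : ∀ k : ℤ, e 0 (k - 2) + e 0 k = e k k * e 0 (k - 1) := by
    intro k
    have h := hL1 0 (k - 2)
    rwa [show k - 2 + 2 = k by ring, show k - 2 + 1 = k - 1 by ring] at h
  constructor
  · -- forward direction
    intro h
    have hex : ∀ k : ℤ, 0 ≤ k → k ≤ (m : ℤ) + 1 → ∃ z : ℤ, 0 < z ∧ x k = (z : ℝ) := by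
      intro k hk0 hk1
      by_cases h0 : k = 0
      · subst h0
        exact ⟨1, one_pos, by rw [hx 0, hb1 0]; norm_num⟩
      by_cases h1 : k = (m : ℤ) + 1
      · subst h1
        refine ⟨1, one_pos, ?_⟩
        rw [hx ((m : ℤ) + 1), show (m : ℤ) + 1 - 1 = 0 + (m : ℤ) by ring, hb2 0]
        norm_num
      obtain ⟨z, hz, he⟩ := h 0 (k - 1) (by omega) (by omega)
      exact ⟨z, hz, by rw [hx k]; exact he⟩
    refine ⟨fun k => if hk : ∃ z : ℤ, 0 < z ∧ x k = (z : ℝ) then hk.choose else 1, ?_, ?_⟩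
    · intro k hk0 hk1
      have hk := hex k hk0 hk1
      simp only [dif_pos hk]
      exact hk.choose_spec.2
    · intro k hk1 hkm
      have hk := hex k (by omega) (by omega)
      have hka := hex (k - 1) (by omega) (by omega)
      have hkb := hex (k + 1) (by omega) (by omega)
      simp only [dif_pos hk, dif_pos hka, dif_pos hkb]
      refine ⟨hk.choose_spec.1, ?_⟩
      obtain ⟨t, ht, hte⟩ := h k k le_rfl (by omega)
      have hrel := hdiagrec k
      have e1 : e 0 (k - 2) = (hka.choose : ℝ) := by
        rw [show k - 2 = k - 1 - 1 by ring, ← hx (k - 1)]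
        exact hka.choose_spec.2
      have hxk : x (k + 1) = e 0 k := by
        have h2 := hx (k + 1)
        rwa [show k + 1 - 1 = k by ring] at h2
      have e2 : e 0 k = (hkb.choose : ℝ) := by
        rw [← hxk]
        exact hkb.choose_spec.2
      have e3 : e 0 (k - 1) = (hk.choose : ℝ) := by
        rw [← hx k]; exact hk.choose_spec.2
      rw [e1, e2, e3, hte] at hrel
      have hzz : hka.choose + hkb.choose = t * hk.choose := by exact_mod_cast hrel
      exact ⟨t, by rw [hzz]; ring⟩
  · -- reverse direction
    rintro ⟨y, hy1, hy2⟩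
    have hy0 : y 0 = 1 := by
      have h := hy1 0 le_rfl (by omega)
      rw [hx 0, hb1 0] at h
      exact_mod_cast h.symm
    have hym : y ((m : ℤ) + 1) = 1 := by
      have h := hy1 ((m : ℤ) + 1) (by omega) le_rfl
      rw [hx ((m : ℤ) + 1), show (m : ℤ) + 1 - 1 = 0 + (m : ℤ) by ring, hb2 0] at h
      exact_mod_cast h.symm
    have hypos : ∀ k : ℤ, 0 ≤ k → k ≤ (m : ℤ) + 1 → 0 < y k := by
      intro k hk0 hk1
      by_cases h0 : k = 0
      · subst h0; omega
      by_cases h1 : k = (m : ℤ) + 1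
      · subst h1; omega
      exact (hy2 k (by omega) (by omega)).1
    have hyycast : ∀ k : ℤ, 0 ≤ k → k ≤ (m : ℤ) + 1 → e 0 (k - 1) = (y k : ℝ) := by
      intro k hk0 hk1
      rw [← hx k]; exact hy1 k hk0 hk1
    -- positivity of all interior entries
    have Q0 : ∀ j : ℤ, (0:ℤ) ≤ j → j ≤ 0 + (m : ℤ) - 1 → 0 < e 0 j := by
      intro j hj0 hj1
      have h := hyycast (j + 1) (by omega) (by omega)
      rw [show j + 1 - 1 = j by ring] at h
      rw [h]
      exact_mod_cast hypos (j + 1) (by omega) (by omega)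
    have hQext : ∀ i : ℤ, (∀ j : ℤ, i ≤ j → j ≤ i + (m : ℤ) - 1 → 0 < e i j) →
        (∀ j : ℤ, i - 1 ≤ j → j ≤ i + (m : ℤ) → 0 < e i j) := by
      intro i hQ j hj1 hj2
      by_cases hc1 : j = i - 1
      · subst hc1; rw [hb1 i]; norm_num
      by_cases hc2 : j = i + (m : ℤ)
      · subst hc2; rw [hb2 i]; norm_num
      exact hQ j (by omega) (by omega)
    have Qup : ∀ i : ℤ, (∀ j : ℤ, i ≤ j → j ≤ i + (m : ℤ) - 1 → 0 < e i j) →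
        (∀ j : ℤ, i + 1 ≤ j → j ≤ i + 1 + (m : ℤ) - 1 → 0 < e (i + 1) j) := by
      intro i hQ j hj1 hj2
      have hch := chordPos m e huni i (hQext i hQ) (i - 1) j le_rfl (by omega) (by omega)
      have z0 : e (i + 1) (i - 1) = 0 := by
        have := hb0 (i + 1); rwa [show i + 1 - 2 = i - 1 by ring] at this
      rw [hb1 i, z0] at hch
      nlinarith [hch]
    have Qdown : ∀ i : ℤ, (∀ j : ℤ, i ≤ j → j ≤ i + (m : ℤ) - 1 → 0 < e i j) →
        (∀ j : ℤ, i - 1 ≤ j → j ≤ i - 1 + (m : ℤ) - 1 → 0 < e (i - 1) j) := by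
      intro i hQ j hj1 hj2
      have hch := chordPos m e huni i (hQext i hQ) j (i + (m : ℤ)) hj1 (by omega) le_rfl
      rw [hb2 i] at hch
      have hst := hstar i (i + (m : ℤ) + 2) j
      rw [show i + (m : ℤ) + 2 - 2 = i + (m : ℤ) by ring, hb2 i] at hst
      have han := hL4 (i - 1) j
      rw [show i - 1 + (m : ℤ) + 3 = i + (m : ℤ) + 2 by ring] at han
      nlinarith [hch, hst, han]
    have Qall : ∀ i : ℤ, ∀ j : ℤ, i ≤ j → j ≤ i + (m : ℤ) - 1 → 0 < e i j := by
      intro i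
      induction i using Int.induction_on with
      | zero => exact Q0
      | succ n ih => exact Qup n ih
      | pred n ih => exact Qdown (-(n : ℤ)) ih
    -- integrality of the diagonal entries e k k for 0 ≤ k ≤ m+2
    have hgen : ∀ k : ℤ, 1 ≤ k → k ≤ (m : ℤ) → ∃ z : ℤ, e k k = (z : ℝ) := by
      intro k h1 h2
      obtain ⟨d, hd⟩ := (hy2 k h1 h2).2
      refine ⟨d, ?_⟩
      have hrel := hdiagrec k
      have e1 : e 0 (k - 2) = (y (k - 1) : ℝ) := by
        have := hyycast (k - 1) (by omega) (by omega)
        rwa [show k - 1 - 1 = k - 2 by ring] at this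
      have e2 : e 0 k = (y (k + 1) : ℝ) := by
        have := hyycast (k + 1) (by omega) (by omega)
        rwa [show k + 1 - 1 = k by ring] at this
      have e3 : e 0 (k - 1) = (y k : ℝ) := hyycast k (by omega) (by omega)
      rw [e1, e2, e3] at hrel
      have hcast : (y (k - 1) : ℝ) + (y (k + 1) : ℝ) = (y k : ℝ) * (d : ℝ) := by
        exact_mod_cast hd
      have hyk : (y k : ℝ) ≠ 0 := by
        exact_mod_cast (hy2 k h1 h2).1.ne'
      have : e k k * (y k : ℝ) = (d : ℝ) * (y k : ℝ) := by linarith [hrel, hcast]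
      exact mul_right_cancel₀ hyk this
    have hm1 : e ((m : ℤ) + 1) ((m : ℤ) + 1) = (y (m : ℤ) : ℝ) := by
      have hrel := hdiagrec ((m : ℤ) + 1)
      have e1 : e 0 ((m : ℤ) + 1 - 2) = (y (m : ℤ) : ℝ) := by
        have := hyycast (m : ℤ) (by omega) (by omega)
        rwa [show (m : ℤ) - 1 = (m : ℤ) + 1 - 2 by ring] at this
      have e2 : e 0 ((m : ℤ) + 1) = 0 := by
        have := hb3 0; rwa [show (0 : ℤ) + (m : ℤ) + 1 = (m : ℤ) + 1 by ring] at this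
      have e3 : e 0 ((m : ℤ) + 1 - 1) = 1 := by
        have := hb2 0; rwa [show (0 : ℤ) + (m : ℤ) = (m : ℤ) + 1 - 1 by ring] at this
      rw [e1, e2, e3] at hrel
      linarith
    have hdiagInt : ∀ k : ℤ, 0 ≤ k → k ≤ (m : ℤ) + 2 → ∃ z : ℤ, e k k = (z : ℝ) := by
      intro k hk0 hk2
      by_cases h0 : k = 0
      · subst h0
        refine ⟨y 1, ?_⟩
        have := hyycast 1 (by omega) (by omega)
        rwa [show (1 : ℤ) - 1 = 0 by ring] at this
      by_cases h1 : k = (m : ℤ) + 1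
      · subst h1; exact ⟨y (m : ℤ), hm1⟩
      by_cases h2 : k = (m : ℤ) + 2
      · subst h2
        -- e (m+2) (m+2) = e 1 m, which is an integer by the continuant recursion
        have hval : e ((m : ℤ) + 2) ((m : ℤ) + 2) = e 1 (m : ℤ) := by
          have hrel := hL1 1 (m : ℤ)
          have e2 : e 1 ((m : ℤ) + 2) = 0 := by
            have := hb3 1; rwa [show (1 : ℤ) + (m : ℤ) + 1 = (m : ℤ) + 2 by ring] at this
          have e3 : e 1 ((m : ℤ) + 1) = 1 := by
            have := hb2 1; rwa [show (1 : ℤ) + (m : ℤ) = (m : ℤ) + 1 by ring] at this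
          rw [e2, e3] at hrel
          linarith
        have hcf : ∀ t : ℕ, t ≤ m → ∃ z : ℤ, e (1 + (t : ℤ)) (1 + (t : ℤ)) = (z : ℝ) := by
          intro t ht
          by_cases htm : (t : ℤ) = (m : ℤ)
          · rw [htm, show (1 : ℤ) + (m : ℤ) = (m : ℤ) + 1 by ring]
            exact ⟨y (m : ℤ), hm1⟩
          · exact hgen (1 + (t : ℤ)) (by omega) (by omega)
        obtain ⟨z, hz⟩ := (intRow e hb0 hb1 hL1 1 m hcf).2
        refine ⟨z, ?_⟩
        rw [hval]
        rwa [show (1 : ℤ) - 1 + (m : ℤ) = (m : ℤ) by ring] at hz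
      exact hgen k (by omega) (by omega)
    -- periodicity of the diagonal
    have per : ∀ k : ℤ, e (k + (m : ℤ) + 3) (k + (m : ℤ) + 3) = e k k := by
      intro k
      have h4 := hL4 k (k + (m : ℤ) + 3)
      have h5 := hL5 k k
      linarith
    have periter : ∀ t : ℤ, ∀ k : ℤ,
        e (k + t * ((m : ℤ) + 3)) (k + t * ((m : ℤ) + 3)) = e k k := by
      intro t
      induction t using Int.induction_on with
      | zero => intro k; norm_num
      | succ n ih =>
        intro k
        have h1 := per (k + (n : ℤ) * ((m : ℤ) + 3))
        rw [show k + (n : ℤ) * ((m : ℤ) + 3) + (m : ℤ) + 3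
            = k + ((n : ℤ) + 1) * ((m : ℤ) + 3) by ring] at h1
        rw [h1]; exact ih k
      | pred n ih =>
        intro k
        have h1 := per (k + (-(n : ℤ) - 1) * ((m : ℤ) + 3))
        rw [show k + (-(n : ℤ) - 1) * ((m : ℤ) + 3) + (m : ℤ) + 3
            = k + (-(n : ℤ)) * ((m : ℤ) + 3) by ring] at h1
        rw [← h1]
        exact ih k
    have hdiagAll : ∀ k : ℤ, ∃ z : ℤ, e k k = (z : ℝ) := by
      intro k
      have hn3 : (0 : ℤ) < (m : ℤ) + 3 := by omega
      have hr0 : 0 ≤ k % ((m : ℤ) + 3) := Int.emod_nonneg k (by omega)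
      have hr1 : k % ((m : ℤ) + 3) < (m : ℤ) + 3 := Int.emod_lt_of_pos k hn3
      obtain ⟨z, hz⟩ := hdiagInt (k % ((m : ℤ) + 3)) hr0 (by omega)
      have hp := periter (k / ((m : ℤ) + 3)) (k % ((m : ℤ) + 3))
      have hk : k % ((m : ℤ) + 3) + (k / ((m : ℤ) + 3)) * ((m : ℤ) + 3) = k := by
        have := Int.mul_ediv_add_emod k ((m : ℤ) + 3)
        linarith
      rw [hk] at hp
      exact ⟨z, by rw [hp]; exact hz⟩
    -- conclusion
    intro i j hij hji
    obtain ⟨z, hz⟩ := (intRow e hb0 hb1 hL1 i (j - (i - 2)).toNat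
      (fun t _ => hdiagAll (i + (t : ℤ)))).1
    rw [show i - 2 + (((j - (i - 2)).toNat : ℕ) : ℤ) = j by omega] at hz
    have hpos := Qall i j hij hji
    refine ⟨z, ?_, hz⟩
    rw [hz] at hpos
    exact_mod_cast hpos
end

section
/- Let m ≥ 0 be an integer and a : ℤ → ℝ a sequence. Then the following are equivalent: (1) the frieze determined by a is closed of width m, i.e. for every i ∈ ℤ one has K(a_i,…,a_{i+m}) = 1 and K(a_i,…,a_{i+m+1}) = 0; (2) the sequence a is (m+3)-periodic (a_{i+m+3} = a_i for all i) and the three conditions K(a_1,…,a_{m+2}) = 0, K(a_2,…,a_{m+3}) = 0 and K(a_2,…,a_{m+2}) = 1 hold. -/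
lemma val_succAbove {n : ℕ} (p : Fin (n+1)) (i : Fin n) :
    (p.succAbove i : ℕ) = if (i:ℕ) < (p:ℕ) then (i:ℕ) else (i:ℕ)+1 := by
  rw [Fin.succAbove]
  rcases lt_or_ge ((i:ℕ)) ((p:ℕ)) with h | h
  · rw [if_pos h, if_pos (by simpa [Fin.lt_def] using h)]
    rfl
  · rw [if_neg (show ¬ (Fin.castSucc i < p) by
        rw [Fin.lt_def]; simp only [Fin.coe_castSucc]; omega), if_neg (by omega)]
    rfl

noncomputable def kk (d : ℕ → ℝ) : ℕ → ℝ
  | 0 => 1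
  | 1 => d 0
  | (n+2) => d (n+1) * kk d (n+1) - kk d n

noncomputable def triM (d : ℕ → ℝ) (n : ℕ) : Matrix (Fin n) (Fin n) ℝ :=
  Matrix.of fun r c =>
    if (r : ℕ) = (c : ℕ) then d (r : ℕ)
    else if (r : ℕ) = (c : ℕ) + 1 ∨ (c : ℕ) = (r : ℕ) + 1 then 1 else 0

lemma det_last_col {n : ℕ} (N : Matrix (Fin (n+1)) (Fin (n+1)) ℝ)
    (h : ∀ r, N r (Fin.last n) = if r = Fin.last n then 1 else 0) :
    N.det = (N.submatrix Fin.castSucc Fin.castSucc).det := by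
  rw [Matrix.det_succ_column _ (Fin.last n), Fin.sum_univ_castSucc]
  have h0 : ∀ r : Fin n,
      (-1:ℝ)^((Fin.castSucc r : ℕ) + (Fin.last n : ℕ)) * N (Fin.castSucc r) (Fin.last n) *
        ((N.submatrix (Fin.castSucc r).succAbove (Fin.last n).succAbove).det) = 0 := by
    intro r
    rw [h, if_neg (by simp [Fin.ext_iff]; omega)]
    ring
  rw [Finset.sum_congr rfl (fun r _ => h0 r), Finset.sum_const_zero, zero_add,
      h, if_pos rfl, Fin.succAbove_last]
  have he : (-1:ℝ)^((Fin.last n : ℕ) + (Fin.last n : ℕ)) = 1 :=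
    Even.neg_one_pow ⟨n, by simp⟩
  rw [he, one_mul, one_mul]

lemma det_triM (d : ℕ → ℝ) : ∀ n, (triM d n).det = kk d n := by
  intro n
  induction n using Nat.twoStepInduction with
  | zero => simp [triM, kk]
  | one => simp [triM, kk]
  | more n ih1 ih2 =>
    rw [Matrix.det_succ_row (triM d (n+2)) (Fin.last (n+1)), Fin.sum_univ_castSucc,
        Fin.sum_univ_castSucc]
    have hz : ∀ j : Fin n,
        (-1:ℝ)^((Fin.last (n+1) : ℕ) + ((Fin.castSucc (Fin.castSucc j)) : ℕ)) *
          triM d (n+2) (Fin.last (n+1)) (Fin.castSucc (Fin.castSucc j)) *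
          ((triM d (n+2)).submatrix (Fin.last (n+1)).succAbove
            (Fin.castSucc (Fin.castSucc j)).succAbove).det = 0 := by
      intro j
      have hj := j.isLt
      have : triM d (n+2) (Fin.last (n+1)) (Fin.castSucc (Fin.castSucc j)) = 0 := by
        simp only [triM, Matrix.of_apply, Fin.val_last, Fin.coe_castSucc]
        rw [if_neg (by omega), if_neg (by omega)]
      rw [this]; ring
    rw [Finset.sum_congr rfl (fun j _ => hz j), Finset.sum_const_zero, zero_add]
    -- last term
    have hlast : (triM d (n+2)).submatrix (Fin.last (n+1)).succAbove (Fin.last (n+1)).succAbove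
        = triM d (n+1) := by
      rw [Fin.succAbove_last]
      ext r c
      simp [triM, Matrix.submatrix_apply, Fin.coe_castSucc]
    have hdiag : triM d (n+2) (Fin.last (n+1)) (Fin.last (n+1)) = d (n+1) := by
      simp [triM]
    -- middle term
    set p : Fin (n+2) := Fin.castSucc (Fin.last n) with hp
    have hpv : (p : ℕ) = n := by simp [hp]
    have hmidentry : triM d (n+2) (Fin.last (n+1)) p = 1 := by
      simp only [triM, Matrix.of_apply, Fin.val_last, hpv]
      simp
    set N := (triM d (n+2)).submatrix (Fin.last (n+1)).succAbove p.succAbove with hN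
    have hNlast : ∀ r, N r (Fin.last n) = if r = Fin.last n then 1 else 0 := by
      intro r
      have hr := r.isLt
      have h1 : ((Fin.last (n+1)).succAbove r : ℕ) = (r:ℕ) := by
        rw [val_succAbove, Fin.val_last, if_pos r.isLt]
      have h2 : ((p.succAbove (Fin.last n)) : ℕ) = n+1 := by
        rw [val_succAbove, Fin.val_last, hpv, if_neg (lt_irrefl n)]
      simp only [hN, Matrix.submatrix_apply, triM, Matrix.of_apply, h1, h2]
      by_cases hrn : r = Fin.last n
      · subst hrn
        rw [Fin.val_last, if_neg (by omega), if_pos (Or.inr rfl), if_pos rfl]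
      · have : (r:ℕ) < n := by
          rcases Nat.lt_or_ge (r:ℕ) n with h | h
          · exact h
          · exact absurd (Fin.ext (by omega : (r:ℕ) = n)) hrn
        rw [if_neg (by omega), if_neg (by omega), if_neg hrn]
    have hNdet : N.det = (triM d n).det := by
      rw [det_last_col N hNlast]
      congr 1
      ext r c
      have hr := r.isLt; have hc := c.isLt
      have h1 : ((Fin.last (n+1)).succAbove (Fin.castSucc r) : ℕ) = (r:ℕ) := by
        rw [val_succAbove, Fin.coe_castSucc, Fin.val_last, if_pos (by omega)]
      have h2 : ((p.succAbove (Fin.castSucc c)) : ℕ) = (c:ℕ) := by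
        rw [val_succAbove, Fin.coe_castSucc, hpv, if_pos c.isLt]
      simp only [hN, Matrix.submatrix_apply, triM, Matrix.of_apply, h1, h2]
    rw [hlast, hdiag, hmidentry, hNdet, ih1, ih2]
    simp only [Fin.val_last, Fin.coe_castSucc, hpv]
    have hsgn1 : (-1:ℝ)^((n+1)+(n+1)) = 1 := Even.neg_one_pow ⟨n+1, by ring⟩
    have hsgn2 : (-1:ℝ)^((n+1)+n) = -1 := Odd.neg_one_pow ⟨n, by ring⟩
    rw [hsgn1, hsgn2]
    show (-1) * 1 * kk d n + 1 * d (n+1) * kk d (n+1) = kk d (n+2)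
    rw [show kk d (n+2) = d (n+1) * kk d (n+1) - kk d n from rfl]
    ring

noncomputable def cL (a : ℤ → ℝ) (i : ℤ) : ℕ → ℝ
  | 0 => 1
  | 1 => a i
  | (n+2) => a (i + n + 1) * cL a i (n+1) - cL a i n

lemma cL_zero (a : ℤ → ℝ) (i : ℤ) : cL a i 0 = 1 := rfl
lemma cL_one (a : ℤ → ℝ) (i : ℤ) : cL a i 1 = a i := rfl
lemma cL_rec (a : ℤ → ℝ) (i : ℤ) (n : ℕ) :
    cL a i (n+2) = a (i + n + 1) * cL a i (n+1) - cL a i n := rfl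

lemma cL_left (a : ℤ → ℝ) : ∀ n, ∀ i : ℤ,
    cL a i (n+2) = a i * cL a (i+1) (n+1) - cL a (i+2) n := by
  intro n
  induction n using Nat.twoStepInduction with
  | zero =>
    intro i
    rw [cL_rec]
    simp only [zero_add, cL_zero, cL_one]
    rw [show i + ((0:ℕ):ℤ) + 1 = i + 1 by push_cast; ring]
    ring
  | one =>
    intro i
    rw [cL_rec a i 1, cL_rec a i 0, cL_rec a (i+1) 0]
    simp only [zero_add, cL_zero, cL_one]
    rw [show i + ((1:ℕ):ℤ) + 1 = i + 2 by push_cast; ring,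
        show i + ((0:ℕ):ℤ) + 1 = i + 1 by push_cast; ring,
        show i + 1 + ((0:ℕ):ℤ) + 1 = i + 2 by push_cast; ring]
    ring
  | more n ih1 ih2 =>
    intro i
    rw [cL_rec a i (n+2), ih2 i, ih1 i,
        cL_rec a (i+1) (n+1), cL_rec a (i+2) n]
    rw [show i + ((n+2:ℕ):ℤ) + 1 = i + 2 + (n:ℕ) + 1 by push_cast; ring,
        show i + 1 + ((n+1:ℕ):ℤ) + 1 = i + 2 + (n:ℕ) + 1 by push_cast; ring]
    ring

lemma cL_det (a : ℤ → ℝ) : ∀ n, ∀ i : ℤ,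
    cL a i (n+1) * cL a (i+1) (n+1) - cL a i (n+2) * cL a (i+1) n = 1 := by
  intro n
  induction n with
  | zero =>
    intro i
    rw [cL_rec a i 0]
    simp only [zero_add, cL_zero, cL_one]
    rw [show i + ((0:ℕ):ℤ) + 1 = i + 1 by push_cast; ring]
    ring
  | succ n ih =>
    intro i
    rw [cL_rec a i (n+1), cL_rec a (i+1) n]
    rw [show i + ((n+1:ℕ):ℤ) + 1 = i + 1 + (n:ℕ) + 1 by push_cast; ring]
    linear_combination ih i

lemma cL_shift (a : ℤ → ℝ) (T : ℤ) (hp : ∀ i, a (i + T) = a i) :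
    ∀ n, ∀ i : ℤ, cL a (i + T) n = cL a i n := by
  intro n
  induction n using Nat.twoStepInduction with
  | zero => intro i; rfl
  | one => intro i; exact hp i
  | more n ih1 ih2 =>
    intro i
    rw [cL_rec, cL_rec, ih1 i, ih2 i,
        show i + T + (n:ℕ) + 1 = (i + (n:ℕ) + 1) + T by ring, hp]

abbrev QQ (a : ℤ → ℝ) (m : ℕ) (i : ℤ) : Prop :=
  cL a i (m+2) = 0 ∧ cL a i (m+3) = -1 ∧ cL a (i+1) (m+1) = 1 ∧ cL a (i+1) (m+2) = 0

lemma kk_eq_cL (a : ℤ → ℝ) (i : ℤ) : ∀ n, kk (fun k : ℕ => a (i + (k:ℤ))) n = cL a i n := by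
  intro n
  induction n using Nat.twoStepInduction with
  | zero => rfl
  | one =>
    show a (i + ((0:ℕ):ℤ)) = a i
    norm_num
  | more n ih1 ih2 =>
    rw [show kk (fun k : ℕ => a (i + (k:ℤ))) (n+2)
        = a (i + ((n+1:ℕ):ℤ)) * kk (fun k : ℕ => a (i + (k:ℤ))) (n+1)
          - kk (fun k : ℕ => a (i + (k:ℤ))) n from rfl,
        cL_rec, ih1, ih2,
        show i + ((n+1:ℕ):ℤ) = i + (n:ℕ) + 1 by push_cast; ring]

lemma continuant_eq (a : ℤ → ℝ) (i j : ℤ) :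
    continuant a i j = cL a i (j - i + 1).toNat := by
  have h : continuant a i j = (triM (fun k : ℕ => a (i + (k:ℤ))) (j - i + 1).toNat).det := rfl
  rw [h, det_triM, kk_eq_cL]

/-- **Closedness criterion for friezes.**
The frieze determined by a sequence `a : ℤ → ℝ` is closed of width `m`
(for every `i`, `K(a_i,…,a_{i+m}) = 1` and `K(a_i,…,a_{i+m+1}) = 0`)
if and only if `a` is `(m+3)`-periodic and `K(a_1,…,a_{m+2}) = 0`,
`K(a_2,…,a_{m+3}) = 0`, `K(a_2,…,a_{m+2}) = 1`. -/
theorem frieze_closed_iff_periodic_and_three_equations (m : ℕ) (a : ℤ → ℝ) :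
    ((∀ i : ℤ, continuant a i (i + (m : ℤ)) = 1) ∧
     (∀ i : ℤ, continuant a i (i + (m : ℤ) + 1) = 0)) ↔
    ((∀ i : ℤ, a (i + ((m : ℤ) + 3)) = a i) ∧
      continuant a 1 ((m : ℤ) + 2) = 0 ∧
      continuant a 2 ((m : ℤ) + 3) = 0 ∧
      continuant a 2 ((m : ℤ) + 2) = 1) := by
  have hc1 : ∀ i : ℤ, continuant a i (i + (m : ℤ)) = cL a i (m+1) := by
    intro i; rw [continuant_eq]; congr 1; omega
  have hc2 : ∀ i : ℤ, continuant a i (i + (m : ℤ) + 1) = cL a i (m+2) := by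
    intro i; rw [continuant_eq]; congr 1; omega
  have hc3 : continuant a 1 ((m : ℤ) + 2) = cL a 1 (m+2) := by
    rw [continuant_eq]; congr 1; omega
  have hc4 : continuant a 2 ((m : ℤ) + 3) = cL a 2 (m+2) := by
    rw [continuant_eq]; congr 1; omega
  have hc5 : continuant a 2 ((m : ℤ) + 2) = cL a 2 (m+1) := by
    rw [continuant_eq]; congr 1; omega
  rw [hc3, hc4, hc5]
  simp only [hc1, hc2]
  constructor
  · rintro ⟨h1, h2⟩
    have h3 : ∀ i : ℤ, cL a i (m+3) = -1 := by
      intro i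
      rw [cL_rec a i (m+1), h2 i, h1 i]
      ring
    have hper : ∀ i : ℤ, a (i + ((m:ℤ)+3)) = a i := by
      intro i
      have l1 : cL a i (m+4) = a (i + ((m:ℤ)+3)) * (-1) - 0 := by
        rw [cL_rec a i (m+2), h3 i, h2 i,
            show i + ((m+2:ℕ):ℤ) + 1 = i + ((m:ℤ)+3) by push_cast; ring]
      have l2 : cL a i (m+4) = a i * (-1) - 0 := by
        rw [cL_left a (m+2) i, h3 (i+1), h2 (i+2)]
      rw [l2] at l1
      linarith
    exact ⟨hper, h2 1, h2 2, h1 2⟩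
  · rintro ⟨hper, e1, e2, e3⟩
    have e4 : cL a 1 (m+3) = -1 := by
      have d := cL_det a (m+1) 1
      norm_num at d
      rw [e1, e2, e3] at d
      linarith
    have hshift := cL_shift a ((m:ℤ)+3) hper
    have Qstep : ∀ i : ℤ, QQ a m i → QQ a m (i+1) := by
      rintro i ⟨q1, q2, q3, q4⟩
      have r2 : cL a (i+1) (m+3) = -1 := by
        rw [cL_rec a (i+1) (m+1), q4, q3]
        ring
      have r3 : cL a (i+2) (m+1) = 1 := by
        have l := cL_left a (m+1) i
        rw [q2, q4] at l
        linarith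
      have r4 : cL a (i+2) (m+2) = 0 := by
        have rr : cL a i (m+4) = -(a i) := by
          rw [cL_rec a i (m+2),
              show i + ((m+2:ℕ):ℤ) + 1 = i + ((m:ℤ)+3) by push_cast; ring,
              hper i, q2, q1]
          ring
        have l := cL_left a (m+2) i
        rw [r2, rr] at l
        linarith
      refine ⟨q4, r2, ?_, ?_⟩
      · rw [show i+1+1 = i+2 by ring]; exact r3
      · rw [show i+1+1 = i+2 by ring]; exact r4
    have Qdown : ∀ i : ℤ, QQ a m (i + ((m:ℤ)+3)) → QQ a m i := by
      rintro i ⟨q1, q2, q3, q4⟩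
      rw [hshift] at q1 q2
      rw [show i + ((m:ℤ)+3) + 1 = (i+1) + ((m:ℤ)+3) by ring, hshift] at q3 q4
      exact ⟨q1, q2, q3, q4⟩
    have Qat : ∀ n : ℕ, QQ a m (1 + (n:ℤ)) := by
      intro n
      induction n with
      | zero =>
        rw [show (1:ℤ) + ((0:ℕ):ℤ) = 1 by norm_num]
        refine ⟨e1, e4, ?_, ?_⟩
        · rw [show (1:ℤ)+1 = 2 by norm_num]; exact e3
        · rw [show (1:ℤ)+1 = 2 by norm_num]; exact e2
      | succ n ih =>
        have h := Qstep _ ih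
        rw [show (1:ℤ)+(n:ℤ)+1 = 1+((n+1:ℕ):ℤ) by push_cast; ring] at h
        exact h
    have Qmulti : ∀ (t : ℕ) (i : ℤ), QQ a m (i + ((m:ℤ)+3) * (t:ℤ)) → QQ a m i := by
      intro t
      induction t with
      | zero =>
        intro i h
        rw [show i + ((m:ℤ)+3) * ((0:ℕ):ℤ) = i by push_cast; ring] at h
        exact h
      | succ t ih =>
        intro i h
        rw [show i + ((m:ℤ)+3) * ((t+1:ℕ):ℤ) = (i + ((m:ℤ)+3)) + ((m:ℤ)+3) * (t:ℤ)
            by push_cast; ring] at h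
        exact Qdown i (ih (i + ((m:ℤ)+3)) h)
    have Qall : ∀ j : ℤ, QQ a m j := by
      intro j
      set t : ℕ := (1 - j).toNat with ht
      have hge : 1 ≤ j + ((m:ℤ)+3) * (t:ℤ) := by
        have hT3 : (3:ℤ) ≤ (m:ℤ)+3 := by omega
        rcases le_or_gt j 1 with hj | hj
        · have htv : ((t:ℕ):ℤ) = 1 - j := by rw [ht]; omega
          nlinarith
        · have htv : ((t:ℕ):ℤ) = 0 := by rw [ht]; omega
          rw [htv]
          omega
      set x : ℤ := j + ((m:ℤ)+3) * (t:ℤ) with hx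
      have key : 1 + (((x - 1).toNat : ℕ) : ℤ) = x := by omega
      have h := Qat (x-1).toNat
      rw [key] at h
      exact Qmulti t j h
    constructor
    · intro i
      have h := (Qall (i-1)).2.2.1
      rw [show i-1+1 = i by ring] at h
      exact h
    · intro i
      exact (Qall i).1
end

section
/- Let n ≥ 1 be an odd integer and let p : ℤ → ℙ(ℂ²) be a sequence of points of the complex projective line such that p_{i+n} = p_i for all i and p_i ≠ p_{i+1} for all i. Then there exists a sequence V : ℤ → ℂ² with: V_i ≠ 0 and the projective class of V_i equals p_i for all i; V_{i+n} = −V_i for all i; and det(V_{i+1}, V_i) = 1 for all i, where det(U,W) := U₁W₂ − U₂W₁. Moreover this lift is unique up to an overall sign: if W : ℤ → ℂ² also has these three properties, then either W_i = V_i for all i or W_i = −V_i for all i. -/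
private def posSeq {G : Type*} [Group G] (g : ℤ → G) : ℕ → G
  | 0 => 1
  | k+1 => (posSeq g k * g (k : ℤ))⁻¹

private def negSeq {G : Type*} [CommGroup G] (g : ℤ → G) : ℕ → G
  | 0 => (g (-1))⁻¹
  | k+1 => (negSeq g k * g (-(k : ℤ) - 2))⁻¹

private def fullSeq {G : Type*} [CommGroup G] (g : ℤ → G) : ℤ → G
  | Int.ofNat k => posSeq g k
  | Int.negSucc k => negSeq g k

private lemma fullSeq_spec {G : Type*} [CommGroup G] (g : ℤ → G) (i : ℤ) :
    fullSeq g (i + 1) * fullSeq g i * g i = 1 := by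
  cases i with
  | ofNat k =>
      rw [show (Int.ofNat k) + 1 = Int.ofNat (k+1) by rfl]
      show (posSeq g k * g (k:ℤ))⁻¹ * posSeq g k * g (k:ℤ) = 1
      group
  | negSucc k =>
      cases k with
      | zero =>
          rw [show (Int.negSucc 0) + 1 = Int.ofNat 0 by decide]
          show posSeq g 0 * negSeq g 0 * g (Int.negSucc 0) = 1
          rw [show Int.negSucc 0 = (-1 : ℤ) by decide]
          show 1 * (g (-1))⁻¹ * g (-1) = 1
          group
      | succ m =>
          rw [show (Int.negSucc (m+1)) + 1 = Int.negSucc m by rfl]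
          show negSeq g m * negSeq g (m+1) * g (Int.negSucc (m+1)) = 1
          rw [show (Int.negSucc (m+1) : ℤ) = -(m:ℤ) - 2 by rw [Int.negSucc_eq]; push_cast; ring]
          show negSeq g m * (negSeq g m * g (-(m:ℤ) - 2))⁻¹ * g (-(m:ℤ) - 2) = 1
          rw [mul_comm (negSeq g m) ((negSeq g m * g (-(m:ℤ) - 2))⁻¹), mul_assoc,
            inv_mul_cancel]

private lemma alt_seq {G : Type*} [Group G] (s : ℤ → G) (h : ∀ i, s (i+1) * s i = 1) (i : ℤ) :
    s i = if Even i then s 0 else (s 0)⁻¹ := by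
  have h1 : ∀ j, s (j+1) = (s j)⁻¹ := fun j => eq_inv_of_mul_eq_one_left (h j)
  have h2 : ∀ j, s (j+2) = s j := by
    intro j
    rw [show j + 2 = (j+1)+1 by ring, h1, h1, inv_inv]
  have key : ∀ k : ℤ, s (2*k) = s 0 := by
    intro k
    induction k using Int.induction_on with
    | zero => norm_num
    | succ m ih =>
        rw [show 2*((m:ℤ)+1) = 2*(m:ℤ)+2 by ring, h2]
        exact ih
    | pred m ih =>
        have e := h2 (2*(-(m:ℤ)-1))
        rw [show 2*(-(m:ℤ)-1)+2 = 2*(-(m:ℤ)) by ring] at e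
        rw [← e]
        exact ih
  rcases Int.even_or_odd i with ⟨k, hk⟩ | ⟨k, hk⟩
  · rw [if_pos ⟨k, hk⟩, hk, show k + k = 2*k by ring, key]
  · have hodd : ¬ Even i := by
      intro ⟨m, hm⟩; omega
    rw [if_neg hodd, hk, h1, key]

private lemma mk_eq_of_det_eq_zero (u v : ℂ × ℂ) (hu : u ≠ 0) (hv : v ≠ 0)
    (h : u.1 * v.2 - u.2 * v.1 = 0) :
    Projectivization.mk ℂ u hu = Projectivization.mk ℂ v hv := by
  rw [Projectivization.mk_eq_mk_iff']
  by_cases h1 : v.1 = 0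
  · have h2 : v.2 ≠ 0 := by
      intro h2
      exact hv (Prod.ext_iff.mpr ⟨by simpa using h1, by simpa using h2⟩)
    have hu1 : u.1 = 0 := by
      rw [h1, mul_zero, sub_zero] at h
      exact (mul_eq_zero.mp h).resolve_right h2
    refine ⟨u.2 / v.2, Prod.ext_iff.mpr ⟨?_, ?_⟩⟩
    · simp [h1, hu1]
    · simp only [Prod.smul_snd, smul_eq_mul]
      field_simp
  · refine ⟨u.1 / v.1, Prod.ext_iff.mpr ⟨?_, ?_⟩⟩
    · simp only [Prod.smul_fst, smul_eq_mul]
      field_simp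
    · simp only [Prod.smul_snd, smul_eq_mul]
      field_simp
      linear_combination h

/-- **Existence and uniqueness (up to sign) of the lift of an `n`-periodic sequence
of points of `ℙ¹(ℂ)` for odd `n`.**
If `n ≥ 1` is odd and `p : ℤ → ℙ(ℂ²)` satisfies `p (i+n) = p i` and `p i ≠ p (i+1)`,
then there is a lift `V : ℤ → ℂ²` of `p` with `V (i+n) = -V i` and
`det (V (i+1), V i) = 1` for all `i`, and such a lift is unique up to a global sign. -/
theorem lift_of_periodic_projective_points (n : ℤ) (hn1 : 1 ≤ n) (hodd : Odd n)
    (p : ℤ → Projectivization ℂ (ℂ × ℂ))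
    (hper : ∀ i : ℤ, p (i + n) = p i)
    (hne : ∀ i : ℤ, p i ≠ p (i + 1)) :
    ∃ (V : ℤ → ℂ × ℂ) (hV : ∀ i : ℤ, V i ≠ 0),
      (∀ i : ℤ, Projectivization.mk ℂ (V i) (hV i) = p i) ∧
      (∀ i : ℤ, V (i + n) = -V i) ∧
      (∀ i : ℤ, (V (i + 1)).1 * (V i).2 - (V (i + 1)).2 * (V i).1 = 1) ∧
      (∀ (W : ℤ → ℂ × ℂ) (hW : ∀ i : ℤ, W i ≠ 0),
        (∀ i : ℤ, Projectivization.mk ℂ (W i) (hW i) = p i) →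
        (∀ i : ℤ, W (i + n) = -W i) →
        (∀ i : ℤ, (W (i + 1)).1 * (W i).2 - (W (i + 1)).2 * (W i).1 = 1) →
        ((∀ i : ℤ, W i = V i) ∨ (∀ i : ℤ, W i = -V i))) := by
  classical
  -- parity facts
  have hnE : ¬ Even n := by
    rcases hodd with ⟨k, hk⟩
    rintro ⟨m, hm⟩
    omega
  have hparity : ∀ j : ℤ, Even (j + n) ↔ ¬ Even j := by
    intro j
    rw [Int.even_add]
    tauto
  -- initial lift
  set U : ℤ → ℂ × ℂ := fun i => (p i).rep with hUdef
  have hU : ∀ i, U i ≠ 0 := fun i => (p i).rep_nonzero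
  have hUm : ∀ i, Projectivization.mk ℂ (U i) (hU i) = p i := fun i => (p i).mk_rep
  have hd : ∀ i, (U (i+1)).1 * (U i).2 - (U (i+1)).2 * (U i).1 ≠ 0 := by
    intro i h
    apply hne i
    rw [← hUm i, ← hUm (i+1)]
    exact (mk_eq_of_det_eq_zero (U (i+1)) (U i) (hU (i+1)) (hU i) h).symm
  set g : ℤ → ℂˣ := fun i => Units.mk0 _ (hd i) with hgdef
  set a : ℤ → ℂˣ := fullSeq g with hadef
  have ha : ∀ i, a (i+1) * a i * g i = 1 := fullSeq_spec g
  have haC : ∀ i, (a (i+1) : ℂ) * (a i : ℂ) *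
      ((U (i+1)).1 * (U i).2 - (U (i+1)).2 * (U i).1) = 1 := by
    intro i
    have h1 := congrArg Units.val (ha i)
    simpa [hgdef] using h1
  -- renormalized lift V0 with determinant 1
  set V0 : ℤ → ℂ × ℂ := fun i => (a i : ℂ) • U i with hV0def
  have hV0 : ∀ i, V0 i ≠ 0 := fun i => smul_ne_zero (Units.ne_zero (a i)) (hU i)
  have hV0m : ∀ i, Projectivization.mk ℂ (V0 i) (hV0 i) = p i := by
    intro i
    rw [← hUm i]
    exact (Projectivization.mk_eq_mk_iff ℂ _ _ (hV0 i) (hU i)).mpr ⟨a i, rfl⟩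
  have hdet0 : ∀ i, (V0 (i+1)).1 * (V0 i).2 - (V0 (i+1)).2 * (V0 i).1 = 1 := by
    intro i
    simp only [hV0def, Prod.smul_fst, Prod.smul_snd, smul_eq_mul]
    linear_combination haC i
  -- period scalars
  have hcex : ∀ i, ∃ t : ℂˣ, V0 (i+n) = (t : ℂ) • V0 i := by
    intro i
    obtain ⟨t, ht⟩ := (Projectivization.mk_eq_mk_iff ℂ _ _ (hV0 (i+n)) (hV0 i)).mp
      (by rw [hV0m, hV0m, hper])
    exact ⟨t, by rw [← ht, Units.smul_def]⟩
  choose c hc using hcex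
  have hccC : ∀ i, (c (i+1) : ℂ) * (c i : ℂ) = 1 := by
    intro i
    have h1 := hdet0 (i+n)
    rw [add_right_comm i n 1, hc (i+1), hc i] at h1
    simp only [Prod.smul_fst, Prod.smul_snd, smul_eq_mul] at h1
    linear_combination h1 - ((c (i+1) : ℂ) * (c i : ℂ)) * (hdet0 i)
  have hcc : ∀ i, c (i+1) * c i = 1 := fun i => Units.ext (by simpa using hccC i)
  have hcalt := alt_seq c hcc
  -- square root
  obtain ⟨l, hl⟩ := IsAlgClosed.exists_pow_nat_eq (-(c 0 : ℂ)) (n := 2) (by norm_num)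
  have hl0 : l ≠ 0 := by
    intro h
    rw [h] at hl
    simp at hl
  set L : ℂˣ := Units.mk0 l hl0 with hLdef
  set Λ : ℤ → ℂˣ := fun i => if Even i then L else L⁻¹ with hΛdef
  set V : ℤ → ℂ × ℂ := fun i => (Λ i : ℂ) • V0 i with hVdef
  have hVne : ∀ i, V i ≠ 0 := fun i => smul_ne_zero (Units.ne_zero (Λ i)) (hV0 i)
  have hVm : ∀ i, Projectivization.mk ℂ (V i) (hVne i) = p i := by
    intro i
    rw [← hV0m i]
    exact (Projectivization.mk_eq_mk_iff ℂ _ _ (hVne i) (hV0 i)).mpr ⟨Λ i, rfl⟩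
  have hΛmul : ∀ i, (Λ (i+1) : ℂ) * (Λ i : ℂ) = 1 := by
    intro i
    have h1 : (Λ (i+1)) * (Λ i) = 1 := by
      by_cases hi : Even i
      · have h2 : ¬ Even (i+1) := by simp [Int.even_add_one, hi]
        simp only [hΛdef, if_neg h2, if_pos hi, inv_mul_cancel]
      · have h2 : Even (i+1) := by rw [Int.even_add_one]; exact hi
        simp only [hΛdef, if_pos h2, if_neg hi, mul_inv_cancel]
    calc (Λ (i+1) : ℂ) * (Λ i : ℂ) = ((Λ (i+1) * Λ i : ℂˣ) : ℂ) := by rw [Units.val_mul]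
      _ = 1 := by rw [h1, Units.val_one]
  have hVdet : ∀ i, (V (i+1)).1 * (V i).2 - (V (i+1)).2 * (V i).1 = 1 := by
    intro i
    simp only [hVdef, Prod.smul_fst, Prod.smul_snd, smul_eq_mul]
    linear_combination ((Λ (i+1) : ℂ) * (Λ i : ℂ)) * (hdet0 i) + hΛmul i
  have hVper : ∀ i, V (i + n) = -V i := by
    intro i
    have h1 : V (i+n) = ((Λ (i+n) : ℂ) * (c i : ℂ)) • V0 i := by
      rw [hVdef]
      simp only
      rw [hc i, smul_smul]
    have h2 : -V i = (-(Λ i : ℂ)) • V0 i := by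
      rw [hVdef]
      simp only
      rw [neg_smul]
    rw [h1, h2]
    congr 1
    have hcali := hcalt i
    by_cases hi : Even i
    · have hin : ¬ Even (i+n) := by rw [hparity]; tauto
      rw [if_pos hi] at hcali
      simp only [hΛdef, if_neg hin, if_pos hi]
      rw [hcali, Units.val_inv_eq_inv_val, hLdef]
      simp only [Units.val_mk0]
      have hc0 : ((c 0 : ℂˣ) : ℂ) = -(l^2) := by rw [hl]; ring
      rw [hc0]
      field_simp
    · have hin : Even (i+n) := by rw [hparity]; tauto
      rw [if_neg hi] at hcali
      simp only [hΛdef, if_pos hin, if_neg hi]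
      rw [hcali, Units.val_inv_eq_inv_val, Units.val_inv_eq_inv_val, hLdef]
      simp only [Units.val_mk0]
      have hc0 : ((c 0 : ℂˣ) : ℂ) = -(l^2) := by rw [hl]; ring
      rw [hc0]
      have hc0ne : ((c 0 : ℂˣ) : ℂ) ≠ 0 := (c 0).ne_zero
      rw [hc0] at hc0ne
      field_simp
  refine ⟨V, hVne, hVm, hVper, hVdet, ?_⟩
  -- uniqueness
  intro W hW hWm hWper hWdet
  have hμex : ∀ i, ∃ t : ℂˣ, W i = (t : ℂ) • V i := by
    intro i
    obtain ⟨t, ht⟩ := (Projectivization.mk_eq_mk_iff ℂ _ _ (hW i) (hVne i)).mp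
      (by rw [hWm, hVm])
    exact ⟨t, by rw [← ht, Units.smul_def]⟩
  choose μ hμ using hμex
  have hμμC : ∀ i, (μ (i+1) : ℂ) * (μ i : ℂ) = 1 := by
    intro i
    have h1 := hWdet i
    rw [hμ (i+1), hμ i] at h1
    simp only [Prod.smul_fst, Prod.smul_snd, smul_eq_mul] at h1
    linear_combination h1 - ((μ (i+1) : ℂ) * (μ i : ℂ)) * (hVdet i)
  have hμμ : ∀ i, μ (i+1) * μ i = 1 := fun i => Units.ext (by simpa using hμμC i)
  have hμalt := alt_seq μ hμμ
  have hμper : ∀ i, μ (i+n) = μ i := by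
    intro i
    have h1 := hWper i
    rw [hμ (i+n), hμ i, hVper i, ← smul_neg ((μ i : ℂ)) (V i)] at h1
    have h2 : (μ (i+n) : ℂ) • (-V i) = (μ i : ℂ) • (-V i) := h1
    have h3 : -V i ≠ 0 := neg_ne_zero.mpr (hVne i)
    exact Units.ext (smul_left_injective ℂ h3 h2)
  have hμn1 : μ n = (μ 0)⁻¹ := by
    have h1 := hμalt n
    rw [if_neg hnE] at h1
    exact h1
  have hμn2 : μ n = μ 0 := by
    have h1 := hμper 0
    rwa [zero_add] at h1
  have hsq : (μ 0 : ℂ) * (μ 0 : ℂ) = 1 := by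
    have h1 : μ 0 * μ 0 = 1 := by
      nth_rewrite 1 [← hμn2]
      rw [hμn1]
      exact inv_mul_cancel (μ 0)
    calc (μ 0 : ℂ) * (μ 0 : ℂ) = ((μ 0 * μ 0 : ℂˣ) : ℂ) := by rw [Units.val_mul]
      _ = 1 := by rw [h1, Units.val_one]
  have h5 := mul_self_eq_one_iff.mp hsq
  have h6 : ∀ i, (μ i : ℂ) = (μ 0 : ℂ) := by
    intro i
    have h1 := hμalt i
    by_cases hi : Even i
    · rw [if_pos hi] at h1
      rw [h1]
    · rw [if_neg hi] at h1
      rw [h1, Units.val_inv_eq_inv_val]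
      rcases h5 with h | h <;> rw [h] <;> norm_num
  rcases h5 with h | h
  · left
    intro i
    rw [hμ i, h6 i, h, one_smul]
  · right
    intro i
    rw [hμ i, h6 i, h, neg_one_smul]
end

section
/- Let V : ℤ → ℝ² be a sequence of vectors with det(V_{j+1}, V_j) = 1 for all j ∈ ℤ, where det(U,W) := U₁W₂ − U₂W₁. Fix i ∈ ℤ and assume the second coordinates of V_{i-3}, V_{i-2}, V_{i-1}, V_i are all nonzero; set p_j := (first coordinate of V_j)/(second coordinate of V_j) for j = i-3,…,i. Then the successive points p_{i-3}, p_{i-2}, p_{i-1}, p_i are pairwise such that p_i ≠ p_{i-1} and p_{i-2} ≠ p_{i-3}, and det(V_i, V_{i-3}) = ((p_i − p_{i-3})·(p_{i-1} − p_{i-2})) / ((p_i − p_{i-1})·(p_{i-2} − p_{i-3})). (In frieze terms: the entry e_{i-1,i} = det(V_i, V_{i-3}) of the second row of the associated frieze equals the cross ratio [p_{i-3}, p_{i-2}, p_{i-1}, p_i].) -/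
/-- **The second row of the frieze associated to a lifted polygon gives cross ratios.**
Let `V : ℤ → ℝ²` satisfy `det (V (j+1), V j) = 1` for all `j`.  Fix `i` and assume
the second coordinates of `V (i-3), …, V i` are nonzero; set `p j = (V j).1 / (V j).2`.
Then `p i ≠ p (i-1)`, `p (i-2) ≠ p (i-3)`, and
`det (V i, V (i-3)) = ((p i - p (i-3)) * (p (i-1) - p (i-2))) /
  ((p i - p (i-1)) * (p (i-2) - p (i-3)))`,
i.e. the frieze entry `e (i-1) i` equals the cross ratio `[p (i-3), p (i-2), p (i-1), p i]`. -/
theorem frieze_second_row_eq_cross_ratio (V : ℤ → ℝ × ℝ)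
    (hdet : ∀ j : ℤ, (V (j + 1)).1 * (V j).2 - (V (j + 1)).2 * (V j).1 = 1)
    (i : ℤ)
    (h0 : (V (i - 3)).2 ≠ 0) (h1 : (V (i - 2)).2 ≠ 0)
    (h2 : (V (i - 1)).2 ≠ 0) (h3 : (V i).2 ≠ 0)
    (p : ℤ → ℝ) (hp : ∀ j : ℤ, p j = (V j).1 / (V j).2) :
    p i ≠ p (i - 1) ∧ p (i - 2) ≠ p (i - 3) ∧
    (V i).1 * (V (i - 3)).2 - (V i).2 * (V (i - 3)).1 =
      ((p i - p (i - 3)) * (p (i - 1) - p (i - 2))) /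
        ((p i - p (i - 1)) * (p (i - 2) - p (i - 3))) := by
  have e1 : i - 1 + 1 = i := by ring
  have e2 : i - 2 + 1 = i - 1 := by ring
  have d1 := hdet (i - 1); rw [e1] at d1
  have d2 := hdet (i - 2); rw [e2] at d2
  have s1 : p i - p (i - 1) = 1 / ((V i).2 * (V (i - 1)).2) := by
    rw [hp, hp]; field_simp; linarith
  have s2 : p (i - 2) - p (i - 3) = 1 / ((V (i - 2)).2 * (V (i - 3)).2) := by
    have d3 := hdet (i - 3)
    have e3 : i - 3 + 1 = i - 2 := by ring
    rw [e3] at d3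
    rw [hp, hp]; field_simp; linarith
  have n1 : p i - p (i - 1) ≠ 0 := by
    rw [s1]; simp [h3, h2]
  have n2 : p (i - 2) - p (i - 3) ≠ 0 := by
    rw [s2]; simp [h0, h1]
  refine ⟨sub_ne_zero.mp n1, sub_ne_zero.mp n2, ?_⟩
  have s3 : p (i - 1) - p (i - 2) = 1 / ((V (i - 1)).2 * (V (i - 2)).2) := by
    rw [hp, hp]; field_simp; linarith
  have s4 : p i - p (i - 3) =
      ((V i).1 * (V (i - 3)).2 - (V i).2 * (V (i - 3)).1) / ((V i).2 * (V (i - 3)).2) := by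
    rw [hp, hp]; field_simp
  rw [eq_div_iff (mul_ne_zero n1 n2), s1, s2, s3, s4]
  field_simp
end

section
/- Let x : ℤ → ℝ be a sequence with x_i ≠ 0 for all i ∈ ℤ, satisfying the pentagon recurrence x_{i-1}·x_{i+1} = 1 + x_i for all i ∈ ℤ. Then x is 5-periodic: x_{i+5} = x_i for all i ∈ ℤ. -/
/-- **Periodicity of the pentagon recurrence.**
Every bi-infinite sequence of nonzero real numbers satisfying the pentagon recurrence
`x (i-1) * x (i+1) = 1 + x i` is `5`-periodic. -/
theorem pentagon_recurrence_five_periodic (x : ℤ → ℝ)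
    (hne : ∀ i : ℤ, x i ≠ 0)
    (hrec : ∀ i : ℤ, x (i - 1) * x (i + 1) = 1 + x i) :
    ∀ i : ℤ, x (i + 5) = x i := by
  intro i
  have e0 : x i * x (i + 2) = 1 + x (i + 1) := by
    have h := hrec (i + 1)
    rw [show i + 1 - 1 = i by ring, show i + 1 + 1 = i + 2 by ring] at h
    exact h
  have e1 : x (i + 1) * x (i + 3) = 1 + x (i + 2) := by
    have h := hrec (i + 2)
    rw [show i + 2 - 1 = i + 1 by ring, show i + 2 + 1 = i + 3 by ring] at h
    exact h
  have e2 : x (i + 2) * x (i + 4) = 1 + x (i + 3) := by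
    have h := hrec (i + 3)
    rw [show i + 3 - 1 = i + 2 by ring, show i + 3 + 1 = i + 4 by ring] at h
    exact h
  have e3 : x (i + 3) * x (i + 5) = 1 + x (i + 4) := by
    have h := hrec (i + 4)
    rw [show i + 4 - 1 = i + 3 by ring, show i + 4 + 1 = i + 5 by ring] at h
    exact h
  have step1 : x (i + 2) * x (i + 5) = 1 + x (i + 1) := by
    apply mul_left_cancel₀ (hne (i + 3))
    linear_combination x (i + 2) * e3 + e2 - e1
  have hb1 : (1 : ℝ) + x (i + 1) ≠ 0 := e0 ▸ mul_ne_zero (hne i) (hne (i + 2))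
  apply mul_left_cancel₀ hb1
  linear_combination x i * step1 - x (i + 5) * e0
end

section
/- Let n ≥ 2 be an integer and let V : ℤ → ℝ² be a sequence with V_{i+n} = −V_i for all i and det(V_{i+1}, V_i) = 1 for all i, where det(U,W) := U₁W₂ − U₂W₁. For any t ∈ ℤ, define the symmetric n×n real matrix M by M_{r,s} := det(V_{t+max(r,s)}, V_{t+min(r,s)}) for 0 ≤ r,s ≤ n-1 (so M_{r,r} = 0 and M_{r,r+1} = 1). Then det(M) = −(−2)^{n-2}. In particular the determinant does not depend on the choice of t (the choice of fundamental domain). -/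
open Matrix Finset

namespace FriezeAux

def ee (V : ℤ → ℝ × ℝ) (j i : ℤ) : ℝ :=
  (V j).1 * (V i).2 - (V j).2 * (V i).1

lemma ee_self (V : ℤ → ℝ × ℝ) (i : ℤ) : ee V i i = 0 := by
  simp [ee, mul_comm]

variable {V : ℤ → ℝ × ℝ}

lemma ee_rec1 (hdet : ∀ i : ℤ, (V (i + 1)).1 * (V i).2 - (V (i + 1)).2 * (V i).1 = 1)
    (r s : ℤ) :
    ee V (r+1) s + ee V (r-1) s = ee V (r+1) (r-1) * ee V r s := by
  have h1 := hdet r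
  have h2 := hdet (r-1)
  rw [show r - 1 + 1 = r from by ring] at h2
  have c1 : (V (r+1)).1 + (V (r-1)).1
      = ((V (r+1)).1 * (V (r-1)).2 - (V (r+1)).2 * (V (r-1)).1) * (V r).1 := by
    linear_combination (-(V (r-1)).1) * h1 + (-(V (r+1)).1) * h2
  have c2 : (V (r+1)).2 + (V (r-1)).2
      = ((V (r+1)).1 * (V (r-1)).2 - (V (r+1)).2 * (V (r-1)).1) * (V r).2 := by
    linear_combination (-(V (r-1)).2) * h1 + (-(V (r+1)).2) * h2
  unfold ee
  linear_combination (V s).2 * c1 - (V s).1 * c2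

lemma ee_rec2 (hdet : ∀ i : ℤ, (V (i + 1)).1 * (V i).2 - (V (i + 1)).2 * (V i).1 = 1)
    (r s : ℤ) :
    ee V s (r+1) + ee V s (r-1) = ee V (r+1) (r-1) * ee V s r := by
  have h1 := hdet r
  have h2 := hdet (r-1)
  rw [show r - 1 + 1 = r from by ring] at h2
  have c1 : (V (r+1)).1 + (V (r-1)).1
      = ((V (r+1)).1 * (V (r-1)).2 - (V (r+1)).2 * (V (r-1)).1) * (V r).1 := by
    linear_combination (-(V (r-1)).1) * h1 + (-(V (r+1)).1) * h2
  have c2 : (V (r+1)).2 + (V (r-1)).2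
      = ((V (r+1)).1 * (V (r-1)).2 - (V (r+1)).2 * (V (r-1)).1) * (V r).2 := by
    linear_combination (-(V (r-1)).2) * h1 + (-(V (r+1)).2) * h2
  unfold ee
  linear_combination (V s).1 * c2 - (V s).2 * c1

lemma prod_aux (m : ℕ) :
    ∏ i ∈ Finset.range (m+2), (if i ≤ 1 then (1:ℝ) else 2) = 2^m := by
  induction m with
  | zero => simp [Finset.prod_range_succ]
  | succ k ih =>
      rw [Finset.prod_range_succ, ih]
      norm_num [pow_succ]

end FriezeAux

open Matrix Finset FriezeAux

/-- **Determinant of the symmetrized frieze matrix (Broline–Crowe–Isaacs).**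
Let `n ≥ 2` and let `V : ℤ → ℝ²` satisfy `V (i+n) = -V i` and
`det (V (i+1), V i) = 1` for all `i`.  For any `t : ℤ`, the symmetric `n × n`
matrix `M` with `M r s = det (V (t + max r s), V (t + min r s))` has determinant
`-(-2)^(n-2)`; in particular the determinant does not depend on `t`. -/
theorem frieze_symmetric_matrix_det (n : ℕ) (hn : 2 ≤ n) (V : ℤ → ℝ × ℝ)
    (hanti : ∀ i : ℤ, V (i + (n : ℤ)) = -V i)
    (hdet : ∀ i : ℤ, (V (i + 1)).1 * (V i).2 - (V (i + 1)).2 * (V i).1 = 1)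
    (t : ℤ) :
    Matrix.det (Matrix.of fun r s : Fin n =>
      (V (t + (max (r : ℕ) (s : ℕ) : ℕ))).1 * (V (t + (min (r : ℕ) (s : ℕ) : ℕ))).2 -
      (V (t + (max (r : ℕ) (s : ℕ) : ℕ))).2 * (V (t + (min (r : ℕ) (s : ℕ) : ℕ))).1) =
    -(-2 : ℝ) ^ (n - 2) := by
  obtain ⟨m, rfl⟩ : ∃ m, n = m + 2 := ⟨n - 2, by omega⟩
  show (Matrix.of fun r s : Fin (m+2) =>
      ee V (t + ((max (r : ℕ) (s : ℕ) : ℕ) : ℤ)) (t + ((min (r : ℕ) (s : ℕ) : ℕ) : ℤ))).det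
      = -(-2 : ℝ) ^ (m + 2 - 2)
  -- scalar lemmas with natural-number indices
  have fself : ∀ a : ℕ, ee V (t + (a:ℕ)) (t + (a:ℕ)) = 0 := fun a => ee_self V _
  have fsucc : ∀ a : ℕ, ee V (t + ((a+1:ℕ):ℤ)) (t + (a:ℕ)) = 1 := by
    intro a
    have h := hdet (t + a)
    show (V _).1 * _ - _ = 1
    rw [show (t + ((a+1:ℕ):ℤ)) = (t + a) + 1 from by push_cast; ring]
    exact h
  have frec1 : ∀ a b : ℕ,
      ee V (t + ((a+2:ℕ):ℤ)) (t + (b:ℕ)) + ee V (t + (a:ℕ)) (t + (b:ℕ))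
        = ee V (t + ((a+2:ℕ):ℤ)) (t + (a:ℕ)) * ee V (t + ((a+1:ℕ):ℤ)) (t + (b:ℕ)) := by
    intro a b
    have h := ee_rec1 hdet (t + a + 1) (t + b)
    rw [show (t + (a:ℤ) + 1 + 1) = t + ((a+2:ℕ):ℤ) from by push_cast; ring,
        show (t + (a:ℤ) + 1 - 1) = t + ((a:ℕ):ℤ) from by push_cast; ring,
        show (t + (a:ℤ) + 1) = t + ((a+1:ℕ):ℤ) from by push_cast; ring] at h
    exact h
  have frec2 : ∀ a b : ℕ,
      ee V (t + (b:ℕ)) (t + ((a+2:ℕ):ℤ)) + ee V (t + (b:ℕ)) (t + (a:ℕ))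
        = ee V (t + ((a+2:ℕ):ℤ)) (t + (a:ℕ)) * ee V (t + (b:ℕ)) (t + ((a+1:ℕ):ℤ)) := by
    intro a b
    have h := ee_rec2 hdet (t + a + 1) (t + b)
    rw [show (t + (a:ℤ) + 1 + 1) = t + ((a+2:ℕ):ℤ) from by push_cast; ring,
        show (t + (a:ℤ) + 1 - 1) = t + ((a:ℕ):ℤ) from by push_cast; ring,
        show (t + (a:ℤ) + 1) = t + ((a+1:ℕ):ℤ) from by push_cast; ring] at h
    exact h
  have flast : ee V (t + ((m+1:ℕ):ℤ)) (t + ((0:ℕ):ℤ)) = 1 := by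
    have h := hdet (t + (m:ℕ) + 1)
    rw [show (t + (m:ℤ) + 1 + 1) = t + ((m+2:ℕ):ℤ) from by push_cast; ring] at h
    rw [hanti t] at h
    show (V _).1 * _ - _ = 1
    rw [show (t + ((m+1:ℕ):ℤ)) = t + (m:ℕ) + 1 from by push_cast; ring,
        show (t + ((0:ℕ):ℤ)) = t from by push_cast; ring]
    simp only [Prod.fst_neg, Prod.snd_neg] at h
    linear_combination h
  set M := Matrix.of (fun r s : Fin (m+2) =>
      ee V (t + ((max (r : ℕ) (s : ℕ) : ℕ) : ℤ)) (t + ((min (r : ℕ) (s : ℕ) : ℕ) : ℤ)))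
    with hM
  have hMle : ∀ r s : Fin (m+2), (s:ℕ) ≤ (r:ℕ) →
      M r s = ee V (t + ((r:ℕ):ℤ)) (t + ((s:ℕ):ℤ)) := by
    intro r s h
    rw [hM, Matrix.of_apply, max_eq_left h, min_eq_right h]
  have hMge : ∀ r s : Fin (m+2), (r:ℕ) ≤ (s:ℕ) →
      M r s = ee V (t + ((s:ℕ):ℤ)) (t + ((r:ℕ):ℤ)) := by
    intro r s h
    rw [hM, Matrix.of_apply, max_eq_right h, min_eq_left h]

  set L1 := Matrix.of (fun k j : Fin (m+2) =>
    if j = k then (1:ℝ)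
    else if 2 ≤ (k:ℕ) ∧ (j:ℕ) + 1 = (k:ℕ) then
      -(ee V (t + ((k:ℕ):ℤ)) (t + ((((k:ℕ) - 2 : ℕ)):ℤ)))
    else if 2 ≤ (k:ℕ) ∧ (j:ℕ) + 2 = (k:ℕ) then 1 else 0) with hL1
  set N1 := Matrix.of (fun k s : Fin (m+2) =>
    if 2 ≤ (k:ℕ) then (if (s:ℕ)+1 = (k:ℕ) then (2:ℝ) else 0) else M k s) with hN1
  have hmul1 : L1 * M = N1 := by
    ext k s
    rw [Matrix.mul_apply, hN1, Matrix.of_apply]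
    by_cases hk : 2 ≤ (k:ℕ)
    · set a := (k:ℕ) - 2 with ha
      have hk2 : (k:ℕ) = a + 2 := by omega
      have hklt : (k:ℕ) < m + 2 := k.isLt
      set k1 : Fin (m+2) := ⟨a+1, by omega⟩ with hk1d
      set k2 : Fin (m+2) := ⟨a, by omega⟩ with hk2d
      have hk1v : (k1:ℕ) = a + 1 := rfl
      have hk2v : (k2:ℕ) = a := rfl
      have step : ∀ j : Fin (m+2), L1 k j * M j s =
          (if j = k then M j s else 0)
          + (if j = k1 then -(ee V (t + ((k:ℕ):ℤ)) (t + ((((k:ℕ) - 2 : ℕ)):ℤ))) * M j s else 0)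
          + (if j = k2 then M j s else 0) := by
        intro j
        rw [hL1, Matrix.of_apply]
        have e1 : (j = k) ↔ (j:ℕ) = a + 2 := by rw [Fin.ext_iff]; omega
        have e2 : (j = k1) ↔ (j:ℕ) = a + 1 := by rw [Fin.ext_iff, hk1v]
        have e3 : (j = k2) ↔ (j:ℕ) = a := by rw [Fin.ext_iff, hk2v]
        simp only [e1, e2, e3]
        split_ifs <;> (try ring) <;> omega
      rw [Finset.sum_congr rfl (fun j _ => step j)]
      rw [Finset.sum_add_distrib, Finset.sum_add_distrib,
        Finset.sum_ite_eq', Finset.sum_ite_eq', Finset.sum_ite_eq']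
      simp only [Finset.mem_univ, if_true, if_pos hk]
      have hsub : (k:ℕ) - 2 = a := rfl
      rcases Nat.lt_trichotomy ((s:ℕ)+1) (k:ℕ) with h1 | h2 | h3
      · -- s ≤ k-2
        rw [if_neg (by omega)]
        rw [hMle k s (by omega), hMle k1 s (by omega), hMle k2 s (by omega),
          hk1v, hk2v, hsub, hk2]
        linear_combination frec1 a (s:ℕ)
      · -- s = k-1
        rw [if_pos h2]
        have hs : (s:ℕ) = a + 1 := by omega
        rw [hMle k s (by omega), hMle k1 s (by omega), hMge k2 s (by omega),
          hk1v, hk2v, hsub, hk2, hs]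
        rw [show a + 2 = (a+1) + 1 from rfl]
        rw [fsucc (a+1), fself (a+1), fsucc a]
        ring
      · -- s ≥ k
        rcases Nat.lt_or_ge (k:ℕ) (s:ℕ) with h4 | h5
        · -- s > k
          rw [if_neg (by omega)]
          rw [hMge k s (by omega), hMge k1 s (by omega), hMge k2 s (by omega),
            hk1v, hk2v, hsub, hk2]
          linear_combination frec2 a (s:ℕ)
        · -- s = k
          have hs : (s:ℕ) = a + 2 := by omega
          rw [if_neg (by omega)]
          rw [hMle k s (by omega), hMge k1 s (by omega), hMge k2 s (by omega),
            hk1v, hk2v, hsub, hk2, hs]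
          rw [show a + 2 = (a+1) + 1 from rfl, fsucc (a+1), fself]
          ring
    · have step : ∀ j : Fin (m+2), L1 k j * M j s = (if j = k then M j s else 0) := by
        intro j
        rw [hL1, Matrix.of_apply]
        by_cases hj : j = k
        · simp [hj]
        · simp only [if_neg hj, if_neg (by tauto : ¬(2 ≤ (k:ℕ) ∧ (j:ℕ) + 1 = (k:ℕ))),
            if_neg (by tauto : ¬(2 ≤ (k:ℕ) ∧ (j:ℕ) + 2 = (k:ℕ))), zero_mul]
      rw [Finset.sum_congr rfl (fun j _ => step j), Finset.sum_ite_eq']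
      simp [hk]

  -- determinant of L1
  have hL1tri : L1.BlockTriangular OrderDual.toDual := by
    intro i j hij
    have hvlt : (i:ℕ) < (j:ℕ) := hij
    rw [hL1, Matrix.of_apply,
      if_neg (by rw [Fin.ext_iff]; omega),
      if_neg (by omega : ¬(2 ≤ (i:ℕ) ∧ (j:ℕ) + 1 = (i:ℕ))),
      if_neg (by omega : ¬(2 ≤ (i:ℕ) ∧ (j:ℕ) + 2 = (i:ℕ)))]
  have hdetL1 : L1.det = 1 := by
    rw [Matrix.det_of_lowerTriangular L1 hL1tri]
    apply Finset.prod_eq_one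
    intro i _
    rw [hL1, Matrix.of_apply, if_pos rfl]
  -- second elimination step
  set L2 := Matrix.of (fun i j : Fin (m+2) =>
    if j = i then (1:ℝ)
    else if (i:ℕ) ≤ 1 ∧ 2 ≤ (j:ℕ) then
      -(ee V (t + ((((j:ℕ)-1 : ℕ)):ℤ)) (t + ((i:ℕ):ℤ))) / 2 else 0) with hL2
  set N2 := Matrix.of (fun k s : Fin (m+2) =>
    if (k:ℕ) = 0 then (if (s:ℕ) = m+1 then (1:ℝ) else 0)
    else if (k:ℕ) = 1 then
      (if (s:ℕ) = 0 then 1 else if (s:ℕ) = m+1 then ee V (t + ((m+1:ℕ):ℤ)) (t + ((1:ℕ):ℤ)) else 0)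
    else (if (s:ℕ)+1 = (k:ℕ) then 2 else 0)) with hN2
  have hmul2 : L2 * N1 = N2 := by
    ext k s
    rw [Matrix.mul_apply, hN2, Matrix.of_apply]
    by_cases hk : (k:ℕ) ≤ 1
    · have step : ∀ j : Fin (m+2), L2 k j * N1 j s =
          (if j = k then M k s else 0)
          + (if 2 ≤ (j:ℕ) ∧ (s:ℕ)+1 = (j:ℕ) then
              -(ee V (t + ((((j:ℕ)-1 : ℕ)):ℤ)) (t + ((k:ℕ):ℤ))) else 0) := by
        intro j
        by_cases hj : j = k
        · subst hj
          rw [hL2, Matrix.of_apply, if_pos rfl, one_mul, hN1, Matrix.of_apply,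
            if_neg (by omega : ¬ 2 ≤ (j:ℕ)), if_pos rfl,
            if_neg (by omega : ¬(2 ≤ (j:ℕ) ∧ (s:ℕ)+1 = (j:ℕ))), add_zero]
        · rw [hL2, Matrix.of_apply, if_neg hj]
          by_cases hj2 : 2 ≤ (j:ℕ)
          · rw [if_pos (⟨hk, hj2⟩ : (k:ℕ) ≤ 1 ∧ 2 ≤ (j:ℕ)), hN1, Matrix.of_apply, if_pos hj2]
            by_cases hs : (s:ℕ)+1 = (j:ℕ)
            · rw [if_pos hs, if_neg hj, if_pos ⟨hj2, hs⟩, zero_add]; ring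
            · rw [if_neg hs, if_neg hj,
                if_neg (by tauto : ¬(2 ≤ (j:ℕ) ∧ (s:ℕ)+1 = (j:ℕ))), mul_zero, add_zero]
          · rw [if_neg (by tauto : ¬((k:ℕ) ≤ 1 ∧ 2 ≤ (j:ℕ))), zero_mul, if_neg hj,
              if_neg (by tauto : ¬(2 ≤ (j:ℕ) ∧ (s:ℕ)+1 = (j:ℕ))), add_zero]
      rw [Finset.sum_congr rfl (fun j _ => step j), Finset.sum_add_distrib,
        Finset.sum_ite_eq']
      simp only [Finset.mem_univ, if_true]
      have hT : (∑ j : Fin (m+2), if 2 ≤ (j:ℕ) ∧ (s:ℕ) + 1 = (j:ℕ) then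
            -(ee V (t + ((((j:ℕ)-1 : ℕ)):ℤ)) (t + ((k:ℕ):ℤ))) else 0)
          = if 1 ≤ (s:ℕ) ∧ (s:ℕ) ≤ m then -(ee V (t + ((s:ℕ):ℤ)) (t + ((k:ℕ):ℤ))) else 0 := by
        by_cases hs : 1 ≤ (s:ℕ) ∧ (s:ℕ) ≤ m
        · rw [if_pos hs]
          have hlt : (s:ℕ) + 1 < m + 2 := by omega
          rw [Finset.sum_eq_single (⟨(s:ℕ)+1, hlt⟩ : Fin (m+2))]
          · rw [if_pos ⟨by simp only [Fin.val_mk]; omega, rfl⟩]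
            simp only [Fin.val_mk, Nat.add_sub_cancel]
          · intro j _ hne
            rw [if_neg]
            rintro ⟨h1, h2⟩
            exact hne (Fin.ext (by simp only [Fin.val_mk]; omega))
          · intro h; exact absurd (Finset.mem_univ _) h
        · rw [if_neg hs]
          apply Finset.sum_eq_zero
          intro j _
          rw [if_neg]
          rintro ⟨h1, h2⟩
          have := j.isLt
          exact hs ⟨by omega, by omega⟩
      rw [hT]
      by_cases hk0 : (k:ℕ) = 0
      · rw [if_pos hk0]
        by_cases hsm : (s:ℕ) = m+1
        · rw [if_pos hsm, if_neg (by omega : ¬(1 ≤ (s:ℕ) ∧ (s:ℕ) ≤ m)), add_zero,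
            hMge k s (by omega), hk0, hsm]
          exact flast
        · rw [if_neg hsm]
          by_cases hs0 : (s:ℕ) = 0
          · rw [if_neg (by omega : ¬(1 ≤ (s:ℕ) ∧ (s:ℕ) ≤ m)), add_zero,
              hMle k s (by omega), hk0, hs0, fself 0]
          · rw [if_pos ⟨by omega, by omega⟩, hMge k s (by omega), hk0]
            ring
      · have hk1 : (k:ℕ) = 1 := by omega
        rw [if_neg hk0, if_pos hk1]
        by_cases hs0 : (s:ℕ) = 0
        · rw [if_pos hs0, if_neg (by omega : ¬(1 ≤ (s:ℕ) ∧ (s:ℕ) ≤ m)), add_zero,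
            hMle k s (by omega), hk1, hs0]
          have := fsucc 0
          norm_num at this ⊢
          exact this
        · rw [if_neg hs0]
          by_cases hsm : (s:ℕ) = m+1
          · rw [if_pos hsm, if_neg (by omega : ¬(1 ≤ (s:ℕ) ∧ (s:ℕ) ≤ m)), add_zero,
              hMge k s (by omega), hk1, hsm]
          · rw [if_neg hsm, if_pos ⟨by omega, by omega⟩, hMge k s (by omega), hk1]
            ring
    · have step : ∀ j : Fin (m+2), L2 k j * N1 j s = (if j = k then N1 k s else 0) := by
        intro j
        by_cases hj : j = k
        · subst hj; rw [hL2, Matrix.of_apply, if_pos rfl, one_mul, if_pos rfl]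
        · rw [hL2, Matrix.of_apply, if_neg hj,
            if_neg (by tauto : ¬((k:ℕ) ≤ 1 ∧ 2 ≤ (j:ℕ))), zero_mul, if_neg hj]
      rw [Finset.sum_congr rfl (fun j _ => step j), Finset.sum_ite_eq']
      simp only [Finset.mem_univ, if_true]
      rw [hN1, Matrix.of_apply, if_pos (by omega : 2 ≤ (k:ℕ)),
        if_neg (by omega : ¬(k:ℕ) = 0), if_neg (by omega : ¬(k:ℕ) = 1)]
  have hL2tri : L2.BlockTriangular id := by
    intro i j hij
    have hvlt : (j:ℕ) < (i:ℕ) := hij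
    rw [hL2, Matrix.of_apply, if_neg (by rw [Fin.ext_iff]; omega),
      if_neg (by omega : ¬((i:ℕ) ≤ 1 ∧ 2 ≤ (j:ℕ)))]
  have hdetL2 : L2.det = 1 := by
    rw [Matrix.det_of_upperTriangular hL2tri]
    apply Finset.prod_eq_one
    intro i _
    rw [hL2, Matrix.of_apply, if_pos rfl]
  -- permutation step
  set s2 : Equiv.Perm (Fin (m+2)) := (finRotate (m+2))⁻¹ with hs2
  have hval : ∀ j : Fin (m+2), ((s2 j : Fin (m+2)) : ℕ)
      = if (j:ℕ) = 0 then m+1 else (j:ℕ) - 1 := by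
    intro j
    by_cases h0 : (j:ℕ) = 0
    · rw [if_pos h0]
      have hj : j = ⟨0, by omega⟩ := Fin.ext h0
      have hlast : finRotate (m+2) (Fin.last (m+1)) = ⟨0, by omega⟩ := finRotate_last
      have : s2 j = Fin.last (m+1) := by
        rw [hs2, hj, ← hlast, Equiv.Perm.inv_eq_iff_eq]
      rw [this]
      rfl
    · rw [if_neg h0]
      have hjlt := j.isLt
      have hlt : (j:ℕ) - 1 < m + 1 := by omega
      have key : finRotate (m+2) ⟨(j:ℕ)-1, by omega⟩ = j := by
        have h2 : finRotate (m+2) ⟨(j:ℕ)-1, by omega⟩ = ⟨(j:ℕ)-1+1, by omega⟩ :=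
          finRotate_of_lt hlt
        rw [h2]
        exact Fin.ext (by simp only [Fin.val_mk]; omega)
      have : s2 j = ⟨(j:ℕ)-1, by omega⟩ := by
        rw [hs2, Equiv.Perm.inv_eq_iff_eq]
        exact key.symm
      rw [this]
  have htri : (N2.submatrix id s2).BlockTriangular OrderDual.toDual := by
    intro i j hij
    have hvlt : (i:ℕ) < (j:ℕ) := hij
    have hjlt := j.isLt
    have hv : ((s2 j : Fin (m+2)) : ℕ) = (j:ℕ) - 1 := by
      rw [hval j, if_neg (by omega)]
    rw [Matrix.submatrix_apply, id_eq, hN2, Matrix.of_apply]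
    by_cases hi0 : (i:ℕ) = 0
    · rw [if_pos hi0, if_neg (by omega)]
    · by_cases hi1 : (i:ℕ) = 1
      · rw [if_neg hi0, if_pos hi1, if_neg (by omega), if_neg (by omega)]
      · rw [if_neg hi0, if_neg hi1, if_neg (by omega)]
  have hdetsub : (N2.submatrix id s2).det = 2^m := by
    rw [Matrix.det_of_lowerTriangular _ htri]
    have hdiag : ∀ k : Fin (m+2),
        (N2.submatrix id s2) k k = (if (k:ℕ) ≤ 1 then (1:ℝ) else 2) := by
      intro k
      rw [Matrix.submatrix_apply, id_eq, hN2, Matrix.of_apply]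
      have hv := hval k
      by_cases h0 : (k:ℕ) = 0
      · rw [if_pos h0, if_pos (by rw [hv, if_pos h0]), if_pos (by omega)]
      · have hv' : ((s2 k : Fin (m+2)) : ℕ) = (k:ℕ) - 1 := by rw [hv, if_neg h0]
        by_cases h1 : (k:ℕ) = 1
        · rw [if_neg h0, if_pos h1, if_pos (by omega), if_pos (by omega)]
        · rw [if_neg h0, if_neg h1, if_pos (by omega), if_neg (by omega)]
    rw [Finset.prod_congr rfl (fun k _ => hdiag k)]
    rw [Fin.prod_univ_eq_prod_range (fun i => if i ≤ 1 then (1:ℝ) else 2) (m+2)]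
    exact prod_aux m
  have hsign : Equiv.Perm.sign s2 = (-1:ℤˣ)^(m+1) := by
    rw [hs2, Equiv.Perm.sign_inv, sign_finRotate]
    rfl
  have hdet2 : N2.det = (-1:ℝ)^(m+1) * 2^m := by
    have h := Matrix.det_permute' s2 N2
    rw [hdetsub, hsign] at h
    push_cast at h
    have hpm : ((-1:ℝ)^(m+1)) * ((-1:ℝ)^(m+1)) = 1 := by
      rw [← pow_add, ← two_mul, pow_mul]
      norm_num
    calc N2.det = ((-1:ℝ)^(m+1) * (-1:ℝ)^(m+1)) * N2.det := by rw [hpm, one_mul]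
      _ = (-1:ℝ)^(m+1) * 2^m := by rw [mul_assoc, ← h]
  have hfin : M.det = (-1:ℝ)^(m+1) * 2^m := by
    have e1 : M.det = N1.det := by
      rw [← hmul1, Matrix.det_mul, hdetL1, one_mul]
    have e2 : N1.det = N2.det := by
      rw [← hmul2, Matrix.det_mul, hdetL2, one_mul]
    rw [e1, e2, hdet2]
  rw [hfin, show m + 2 - 2 = m from by omega, neg_pow (2:ℝ) m, pow_succ]
  ring
end

section
/- Let k ≥ 1 and w ≥ 0 be integers, F a field, and let f be a tame SL_{k+1}-frieze of width w over F. Set n := k + w + 2. Then f(i+n, j) = (−1)^k · f(i,j) and f(i, j+n) = (−1)^k · f(i,j) for all i,j ∈ ℤ; in particular f(i+n, j+n) = f(i,j) for all i,j ∈ ℤ. -/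
/-- The adjacent minor of order `r` of `f : ℤ → ℤ → F` based at `(i, j)`:
the determinant of the `r × r` matrix `(f (i+s) (j+t))_{0 ≤ s,t ≤ r-1}`. -/
noncomputable def adjMinor {F : Type*} [Field F] (f : ℤ → ℤ → F) (r : ℕ) (i j : ℤ) : F :=
  Matrix.det (Matrix.of fun s t : Fin r => f (i + (s : ℕ)) (j + (t : ℕ)))

open Matrix in
private lemma vecMul_cancel {F : Type*} [Field F] {n : ℕ} {A : Matrix (Fin n) (Fin n) F}
    (hA : IsUnit A.det) {x y : Fin n → F} (h : x ᵥ* A = y ᵥ* A) : x = y := by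
  have h2 := congrArg (fun v => v ᵥ* A⁻¹) h
  simpa [Matrix.vecMul_vecMul, Matrix.mul_nonsing_inv A hA] using h2

open Matrix Finset in
private lemma dep_up {F : Type*} [Field F] (k : ℕ) (f : ℤ → ℤ → F)
    (hSL : ∀ i j : ℤ, adjMinor f (k + 1) i j = 1)
    (htame : ∀ i j : ℤ, adjMinor f (k + 2) i j = 0) (i : ℤ) :
    ∃ d : Fin (k+1) → F, ∀ j : ℤ,
      f (i + ((k:ℤ)+1)) j = ∑ m : Fin (k+1), d m * f (i + (m:ℕ)) j := by
  set A : ℤ → Matrix (Fin (k+1)) (Fin (k+1)) F :=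
    fun j => Matrix.of fun s t => f (i + (s:ℕ)) (j + (t:ℕ)) with hAdef
  have hAdet : ∀ j, (A j).det = 1 := fun j => hSL i j
  have hAunit : ∀ j, IsUnit (A j).det := fun j => by rw [hAdet]; exact isUnit_one
  set b : ℤ → (Fin (k+1) → F) := fun j t => f (i + ((k:ℤ)+1)) (j + (t:ℕ)) with hbdef
  set d : ℤ → (Fin (k+1) → F) := fun j => (b j) ᵥ* (A j)⁻¹ with hddef
  have hd : ∀ j, (d j) ᵥ* (A j) = b j := by
    intro j
    rw [hddef]
    rw [Matrix.vecMul_vecMul, Matrix.nonsing_inv_mul (A j) (hAunit j), Matrix.vecMul_one]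
  -- key extension property
  have ext : ∀ j : ℤ, ∀ t : Fin (k+2),
      (∑ m : Fin (k+1), d j m * f (i + (m:ℕ)) (j + (t:ℕ))) = f (i + ((k:ℤ)+1)) (j + (t:ℕ)) := by
    intro j t
    set B : Matrix (Fin (k+2)) (Fin (k+2)) F :=
      Matrix.of fun s t => f (i + (s:ℕ)) (j + (t:ℕ)) with hBdef
    have hBdet : B.det = 0 := htame i j
    obtain ⟨v, hv0, hvB⟩ := Matrix.exists_vecMul_eq_zero_iff.mpr hBdet
    have hvsum : ∀ t' : Fin (k+2), ∑ s : Fin (k+2), v s * B s t' = 0 := by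
      intro t'
      have := congrFun hvB t'
      simpa [Matrix.vecMul, dotProduct] using this
    have hvlast : v (Fin.last (k+1)) ≠ 0 := by
      intro h0
      have hv'A : (fun m => v (Fin.castSucc m)) ᵥ* (A j) = (0 : Fin (k+1) → F) ᵥ* (A j) := by
        rw [Matrix.zero_vecMul]
        funext t'
        have h1 := hvsum (Fin.castSucc t')
        rw [Fin.sum_univ_castSucc] at h1
        simp only [h0, zero_mul, add_zero] at h1
        simpa [Matrix.vecMul, dotProduct, hAdef, hBdef] using h1
      have := vecMul_cancel (hAunit j) hv'A
      apply hv0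
      funext s
      refine Fin.lastCases h0 (fun m => ?_) s
      exact congrFun this m
    set e : Fin (k+1) → F := fun m => - v (Fin.castSucc m) / v (Fin.last (k+1)) with hedef
    have He : ∀ t' : Fin (k+2),
        ∑ m : Fin (k+1), e m * B (Fin.castSucc m) t' = B (Fin.last (k+1)) t' := by
      intro t'
      have h1 := hvsum t'
      rw [Fin.sum_univ_castSucc] at h1
      have h2 : ∑ m : Fin (k+1), v (Fin.castSucc m) * B (Fin.castSucc m) t'
          = - (v (Fin.last (k+1)) * B (Fin.last (k+1)) t') := by linear_combination h1
      calc ∑ m : Fin (k+1), e m * B (Fin.castSucc m) t'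
          = (∑ m : Fin (k+1), -(v (Fin.castSucc m) * B (Fin.castSucc m) t')) / v (Fin.last (k+1)) := by
            rw [Finset.sum_div]
            refine Finset.sum_congr rfl fun m _ => ?_
            rw [hedef]; field_simp
        _ = B (Fin.last (k+1)) t' := by
            rw [Finset.sum_neg_distrib, h2, neg_neg, mul_div_cancel_left₀ _ hvlast]
    have hed : e = d j := by
      apply vecMul_cancel (hAunit j)
      rw [hd j]
      funext t'
      have h1 := He (Fin.castSucc t')
      have h2 : ∀ m : Fin (k+1), B (Fin.castSucc m) (Fin.castSucc t') = A j m t' := by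
        intro m; simp [hAdef, hBdef]
      have h3 : B (Fin.last (k+1)) (Fin.castSucc t') = b j t' := by
        simp [hbdef, hBdef]
      rw [← h3, ← h1]
      simp only [Matrix.vecMul, dotProduct]
      refine Finset.sum_congr rfl fun m _ => by rw [h2]
    have h4 := He t
    rw [← hed]
    convert h4 using 2 with m <;> simp [hBdef]
  -- constancy of d
  have hstep : ∀ j : ℤ, d j = d (j+1) := by
    intro j
    apply vecMul_cancel (hAunit (j+1))
    rw [hd (j+1)]
    funext t'
    have h1 := ext j (Fin.succ t')
    have hcol : j + ((Fin.succ t' : Fin (k+2)) : ℕ) = (j+1) + (t' : ℕ) := by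
      simp [Fin.val_succ]; push_cast; ring
    rw [hcol] at h1
    simpa [Matrix.vecMul, dotProduct, hAdef, hbdef] using h1
  have hconst : ∀ j : ℤ, d j = d 0 := by
    intro j
    induction j using Int.induction_on with
    | zero => rfl
    | succ n ih => rw [← hstep (n:ℤ)]; exact ih
    | pred n ih =>
        rw [hstep (-(n:ℤ)-1), show (-(n:ℤ) - 1) + 1 = -(n:ℤ) by ring]; exact ih
  refine ⟨d 0, fun j => ?_⟩
  have h1 := ext j 0
  rw [hconst j] at h1
  simpa using h1.symm

open Matrix Finset in
private lemma dep_down {F : Type*} [Field F] (k : ℕ) (f : ℤ → ℤ → F)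
    (hSL : ∀ i j : ℤ, adjMinor f (k + 1) i j = 1)
    (htame : ∀ i j : ℤ, adjMinor f (k + 2) i j = 0) (i : ℤ) :
    ∃ d : Fin (k+1) → F, ∀ j : ℤ,
      f i j = ∑ m : Fin (k+1), d m * f (i + 1 + (m:ℕ)) j := by
  set A : ℤ → Matrix (Fin (k+1)) (Fin (k+1)) F :=
    fun j => Matrix.of fun s t => f (i + 1 + (s:ℕ)) (j + (t:ℕ)) with hAdef
  have hAdet : ∀ j, (A j).det = 1 := fun j => hSL (i+1) j
  have hAunit : ∀ j, IsUnit (A j).det := fun j => by rw [hAdet]; exact isUnit_one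
  set b : ℤ → (Fin (k+1) → F) := fun j t => f i (j + (t:ℕ)) with hbdef
  set d : ℤ → (Fin (k+1) → F) := fun j => (b j) ᵥ* (A j)⁻¹ with hddef
  have hd : ∀ j, (d j) ᵥ* (A j) = b j := by
    intro j
    rw [hddef]
    rw [Matrix.vecMul_vecMul, Matrix.nonsing_inv_mul (A j) (hAunit j), Matrix.vecMul_one]
  have ext : ∀ j : ℤ, ∀ t : Fin (k+2),
      (∑ m : Fin (k+1), d j m * f (i + 1 + (m:ℕ)) (j + (t:ℕ))) = f i (j + (t:ℕ)) := by
    intro j t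
    set B : Matrix (Fin (k+2)) (Fin (k+2)) F :=
      Matrix.of fun s t => f (i + (s:ℕ)) (j + (t:ℕ)) with hBdef
    have hBrow : ∀ (m : Fin (k+1)) (t' : Fin (k+2)),
        B (Fin.succ m) t' = f (i + 1 + (m:ℕ)) (j + (t':ℕ)) := by
      intro m t'
      show f (i + ((Fin.succ m : Fin (k+2)) : ℕ)) (j + (t':ℕ)) = _
      congr 1
      simp [Fin.val_succ]; push_cast; ring
    have hBdet : B.det = 0 := htame i j
    obtain ⟨v, hv0, hvB⟩ := Matrix.exists_vecMul_eq_zero_iff.mpr hBdet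
    have hvsum : ∀ t' : Fin (k+2), ∑ s : Fin (k+2), v s * B s t' = 0 := by
      intro t'
      have := congrFun hvB t'
      simpa [Matrix.vecMul, dotProduct] using this
    have hvfirst : v 0 ≠ 0 := by
      intro h0
      have hv'A : (fun m => v (Fin.succ m)) ᵥ* (A j) = (0 : Fin (k+1) → F) ᵥ* (A j) := by
        rw [Matrix.zero_vecMul]
        funext t'
        have h1 := hvsum (Fin.castSucc t')
        rw [Fin.sum_univ_succ] at h1
        simp only [h0, zero_mul, zero_add] at h1
        show (∑ m : Fin (k+1), v (Fin.succ m) * A j m t') = 0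
        refine Eq.trans ?_ h1
        refine Finset.sum_congr rfl fun m _ => ?_
        rw [hBrow m (Fin.castSucc t')]
        simp [hAdef]
      have := vecMul_cancel (hAunit j) hv'A
      apply hv0
      funext s
      refine Fin.cases h0 (fun m => ?_) s
      exact congrFun this m
    set e : Fin (k+1) → F := fun m => - v (Fin.succ m) / v 0 with hedef
    have He : ∀ t' : Fin (k+2),
        ∑ m : Fin (k+1), e m * B (Fin.succ m) t' = B 0 t' := by
      intro t'
      have h1 := hvsum t'
      rw [Fin.sum_univ_succ] at h1
      have h2 : ∑ m : Fin (k+1), v (Fin.succ m) * B (Fin.succ m) t'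
          = - (v 0 * B 0 t') := by linear_combination h1
      calc ∑ m : Fin (k+1), e m * B (Fin.succ m) t'
          = (∑ m : Fin (k+1), -(v (Fin.succ m) * B (Fin.succ m) t')) / v 0 := by
            rw [Finset.sum_div]
            refine Finset.sum_congr rfl fun m _ => ?_
            rw [hedef]; field_simp
        _ = B 0 t' := by
            rw [Finset.sum_neg_distrib, h2, neg_neg, mul_div_cancel_left₀ _ hvfirst]
    have hed : e = d j := by
      apply vecMul_cancel (hAunit j)
      rw [hd j]
      funext t'
      have h1 := He (Fin.castSucc t')
      have h3 : B 0 (Fin.castSucc t') = b j t' := by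
        simp [hbdef, hBdef]
      rw [← h3, ← h1]
      simp only [Matrix.vecMul, dotProduct]
      refine Finset.sum_congr rfl fun m _ => ?_
      rw [hBrow m (Fin.castSucc t')]
      simp [hAdef]
    have h4 := He t
    rw [← hed]
    calc ∑ m : Fin (k+1), e m * f (i + 1 + (m:ℕ)) (j + (t:ℕ))
        = ∑ m : Fin (k+1), e m * B (Fin.succ m) t := by
          refine Finset.sum_congr rfl fun m _ => by rw [hBrow m t]
      _ = B 0 t := h4
      _ = f i (j + (t:ℕ)) := by simp [hBdef]
  have hstep : ∀ j : ℤ, d j = d (j+1) := by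
    intro j
    apply vecMul_cancel (hAunit (j+1))
    rw [hd (j+1)]
    funext t'
    have h1 := ext j (Fin.succ t')
    have hcol : j + ((Fin.succ t' : Fin (k+2)) : ℕ) = (j+1) + (t' : ℕ) := by
      simp [Fin.val_succ]; push_cast; ring
    rw [hcol] at h1
    simpa [Matrix.vecMul, dotProduct, hAdef, hbdef] using h1
  have hconst : ∀ j : ℤ, d j = d 0 := by
    intro j
    induction j using Int.induction_on with
    | zero => rfl
    | succ n ih => rw [← hstep (n:ℤ)]; exact ih
    | pred n ih =>
        rw [hstep (-(n:ℤ)-1), show (-(n:ℤ) - 1) + 1 = -(n:ℤ) by ring]; exact ih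
  refine ⟨d 0, fun j => ?_⟩
  have h1 := ext j 0
  rw [hconst j] at h1
  simpa using h1.symm

open Matrix Finset in
private lemma row_antiperiodic {F : Type*} [Field F] (k w : ℕ) (hk : 1 ≤ k)
    (f : ℤ → ℤ → F)
    (hSL : ∀ i j : ℤ, adjMinor f (k + 1) i j = 1)
    (htame : ∀ i j : ℤ, adjMinor f (k + 2) i j = 0)
    (hb1 : ∀ i : ℤ, f i (i - 1) = 1)
    (hb2 : ∀ i : ℤ, f i (i + (w : ℤ)) = 1)
    (hb3 : ∀ i : ℤ, ∀ l : ℕ, 1 ≤ l → l ≤ k →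
      f i (i - 1 - (l : ℤ)) = 0 ∧ f i (i + (w : ℤ) + (l : ℤ)) = 0) :
    ∀ i j : ℤ, f (i + ((k : ℤ) + (w : ℤ) + 2)) j = (-1) ^ k * f i j := by
  intro i0
  set z : ℤ := i0 + ((k : ℤ) + (w : ℤ) + 2) with hzdef
  -- P i : row i is a combination of the basis rows i0+1, ..., i0+1+k
  set P : ℤ → Prop :=
    fun i => ∃ c : Fin (k+1) → F, ∀ j, f i j = ∑ m : Fin (k+1), c m * f (i0 + 1 + (m:ℕ)) j
    with hPdef
  have hPbase : ∀ m0 : Fin (k+1), P (i0 + 1 + (m0:ℕ)) := by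
    intro m0
    refine ⟨fun m => if m = m0 then 1 else 0, fun j => ?_⟩
    rw [Finset.sum_eq_single m0]
    · simp
    · intro m _ hm; simp [hm]
    · intro h; exact absurd (Finset.mem_univ m0) h
  have hPup : ∀ N : ℕ, P (i0 + 1 + (N:ℤ)) := by
    intro N
    induction N using Nat.strong_induction_on with
    | _ N IH =>
      by_cases hN : N ≤ k
      · have := hPbase ⟨N, by omega⟩
        simpa using this
      · push_neg at hN
        set M : ℕ := N - (k+1) with hMdef
        obtain ⟨d, hd⟩ := dep_up k f hSL htame (i0 + 1 + (M:ℤ))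
        have hIH : ∀ m : Fin (k+1), P (i0 + 1 + ((M + (m:ℕ) : ℕ) : ℤ)) := by
          intro m
          exact IH (M + (m:ℕ)) (by omega)
        choose c hc using hIH
        refine ⟨fun m' => ∑ m : Fin (k+1), d m * c m m', fun j => ?_⟩
        have h1 : f (i0 + 1 + (N:ℤ)) j
            = ∑ m : Fin (k+1), d m * f (i0 + 1 + (M:ℤ) + (m:ℕ)) j := by
          have := hd j
          rw [show i0 + 1 + (M:ℤ) + ((k:ℤ)+1) = i0 + 1 + (N:ℤ) by
            rw [hMdef]; push_cast [Nat.cast_sub (by omega : k+1 ≤ N)]; ring] at this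
          exact this
        rw [h1]
        have h2 : ∀ m : Fin (k+1), f (i0 + 1 + (M:ℤ) + (m:ℕ)) j
            = ∑ m' : Fin (k+1), c m m' * f (i0 + 1 + (m':ℕ)) j := by
          intro m
          have := hc m j
          rw [show (((M + (m:ℕ) : ℕ)) : ℤ) = (M:ℤ) + (m:ℕ) by push_cast; ring] at this
          rw [show i0 + 1 + (M:ℤ) + ((m:ℕ):ℤ) = i0 + 1 + ((M:ℤ) + (m:ℕ)) by ring]
          exact this
        calc ∑ m : Fin (k+1), d m * f (i0 + 1 + (M:ℤ) + (m:ℕ)) j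
            = ∑ m : Fin (k+1), ∑ m' : Fin (k+1), d m * c m m' * f (i0 + 1 + (m':ℕ)) j := by
              refine Finset.sum_congr rfl fun m _ => ?_
              rw [h2 m, Finset.mul_sum]
              refine Finset.sum_congr rfl fun m' _ => by ring
          _ = ∑ m' : Fin (k+1), (∑ m : Fin (k+1), d m * c m m') * f (i0 + 1 + (m':ℕ)) j := by
              rw [Finset.sum_comm]
              refine Finset.sum_congr rfl fun m' _ => by rw [Finset.sum_mul]
  have hP0 : P i0 := by
    obtain ⟨d, hd⟩ := dep_down k f hSL htame i0
    exact ⟨d, hd⟩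
  have hPn : P z := by
    have := hPup (k + w + 1)
    rw [show i0 + 1 + ((k + w + 1 : ℕ) : ℤ) = z by rw [hzdef]; push_cast; ring] at this
    exact this
  obtain ⟨c, hc⟩ := hP0
  obtain ⟨c', hc'⟩ := hPn
  -- the evaluation matrix on columns i0+w+1, ..., i0+w+1+k
  set E : Matrix (Fin (k+1)) (Fin (k+1)) F :=
    Matrix.of fun m t => f (i0 + 1 + (m:ℕ)) (i0 + (w:ℤ) + 1 + (t:ℕ)) with hEdef
  have hEdet : E.det = 1 := by
    have := hSL (i0 + 1) (i0 + (w:ℤ) + 1)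
    rw [adjMinor] at this
    rw [← this]
  have hEunit : IsUnit E.det := by rw [hEdet]; exact isUnit_one
  set x : F := f i0 (i0 + (w:ℤ) + 1 + (k:ℤ)) with hxdef
  -- value of x via a triangular determinant
  have hxval : x = (-1)^k := by
    set M : Matrix (Fin (k+1)) (Fin (k+1)) F :=
      Matrix.of fun s t => f (i0 + (s:ℕ)) (i0 + (w:ℤ) + 1 + (t:ℕ)) with hMdef
    have hMdet : M.det = 1 := by
      have := hSL i0 (i0 + (w:ℤ) + 1)
      rw [adjMinor] at this
      rw [← this]
    set N : Matrix (Fin (k+1)) (Fin (k+1)) F := M.submatrix (finRotate (k+1)) id with hNdef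
    have hNval : ∀ p t : Fin (k+1), N p t = M (finRotate (k+1) p) t := fun p t => rfl
    have hNtri : N.BlockTriangular OrderDual.toDual := by
      intro p t hpt
      have hpt' : (p:ℕ) < (t:ℕ) := hpt
      have hplt : (p:ℕ) < k := by omega
      have hrot : ((finRotate (k+1) p : Fin (k+1)) : ℕ) = (p:ℕ) + 1 := by
        rw [finRotate_succ_apply]
        exact Fin.val_add_one_of_lt (by rw [Fin.lt_iff_val_lt_val]; simpa using hplt)
      rw [hNval]
      show f (i0 + ((finRotate (k+1) p : Fin (k+1)) : ℕ)) (i0 + (w:ℤ) + 1 + (t:ℕ)) = 0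
      rw [hrot]
      have hl := (hb3 (i0 + ((p:ℕ):ℤ) + 1) ((t:ℕ) - (p:ℕ)) (by omega) (by omega)).2
      rw [show i0 + ((p:ℕ):ℤ) + 1 + (w:ℤ) + (((t:ℕ) - (p:ℕ) : ℕ):ℤ)
          = i0 + (w:ℤ) + 1 + (t:ℕ) by push_cast [Nat.cast_sub (le_of_lt hpt')]; ring] at hl
      rw [show (i0 + (((p:ℕ)+1 : ℕ)):ℤ) = i0 + ((p:ℕ):ℤ) + 1 by push_cast; ring] at *
      exact hl
    have hNdiag : ∀ p : Fin (k+1), N p p = if p = Fin.last k then x else 1 := by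
      intro p
      by_cases hp : p = Fin.last k
      · subst hp
        rw [hNval, if_pos rfl]
        have hrot : (finRotate (k+1)) (Fin.last k) = 0 := by
          rw [finRotate_succ_apply]
          exact Fin.last_add_one k
        rw [hrot]
        show f (i0 + ((0 : Fin (k+1)):ℕ)) (i0 + (w:ℤ) + 1 + ((Fin.last k : Fin (k+1)):ℕ)) = x
        rw [hxdef]
        norm_num
      · rw [if_neg hp, hNval]
        have hplt : (p:ℕ) < k := by
          rcases Fin.lt_last_iff_ne_last.mpr hp with h
          exact h
        have hrot : ((finRotate (k+1) p : Fin (k+1)) : ℕ) = (p:ℕ) + 1 := by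
          rw [finRotate_succ_apply]
          exact Fin.val_add_one_of_lt (by rw [Fin.lt_iff_val_lt_val]; simpa using hplt)
        show f (i0 + ((finRotate (k+1) p : Fin (k+1)) : ℕ)) (i0 + (w:ℤ) + 1 + (p:ℕ)) = 1
        rw [hrot]
        have := hb2 (i0 + ((p:ℕ):ℤ) + 1)
        rw [show i0 + ((p:ℕ):ℤ) + 1 + (w:ℤ) = i0 + (w:ℤ) + 1 + (p:ℕ) by ring] at this
        rw [show (i0 + (((p:ℕ)+1 : ℕ)):ℤ) = i0 + ((p:ℕ):ℤ) + 1 by push_cast; ring]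
        exact this
    have hNdet : N.det = x := by
      rw [Matrix.det_of_lowerTriangular N hNtri]
      rw [Fin.prod_univ_castSucc]
      have h1 : ∀ p : Fin k, N (Fin.castSucc p) (Fin.castSucc p) = 1 := by
        intro p
        rw [hNdiag]
        rw [if_neg]
        exact Fin.ne_last_of_lt (Fin.castSucc_lt_last p)
      rw [Finset.prod_congr rfl (fun p _ => h1 p)]
      rw [hNdiag, if_pos rfl]
      simp
    have hNdet2 : N.det = (-1)^k * M.det := by
      rw [hNdef, Matrix.det_permute]
      norm_num [sign_finRotate]
    rw [hNdet2, hMdet, mul_one] at hNdet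
    exact hNdet.symm
  have h1 : ∀ t : Fin (k+1),
      (∑ m : Fin (k+1), c m * E m t) = if t = Fin.last k then x else 0 := by
    intro t
    have hsum : (∑ m : Fin (k+1), c m * E m t) = f i0 (i0 + (w:ℤ) + 1 + (t:ℕ)) :=
      (hc (i0 + (w:ℤ) + 1 + (t:ℕ))).symm
    rw [hsum]
    by_cases ht : t = Fin.last k
    · rw [if_pos ht, hxdef, ht]
      norm_num
    · rw [if_neg ht]
      have htk : (t:ℕ) < k := by
        have := Fin.lt_last_iff_ne_last.mpr ht
        exact this
      have hl := (hb3 i0 ((t:ℕ) + 1) (by omega) (by omega)).2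
      rw [show i0 + (w:ℤ) + (((t:ℕ)+1 : ℕ):ℤ) = i0 + (w:ℤ) + 1 + (t:ℕ) by push_cast; ring] at hl
      exact hl
  have h2 : ∀ t : Fin (k+1),
      (∑ m : Fin (k+1), c' m * E m t) = if t = Fin.last k then 1 else 0 := by
    intro t
    have hsum : (∑ m : Fin (k+1), c' m * E m t) = f z (i0 + (w:ℤ) + 1 + (t:ℕ)) :=
      (hc' (i0 + (w:ℤ) + 1 + (t:ℕ))).symm
    rw [hsum]
    by_cases ht : t = Fin.last k
    · rw [if_pos ht, ht]
      have := hb1 z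
      rw [show z - 1 = i0 + (w:ℤ) + 1 + ((Fin.last k : Fin (k+1)):ℕ) by
        rw [hzdef]; norm_num; ring] at this
      exact this
    · rw [if_neg ht]
      have htk : (t:ℕ) < k := by
        have := Fin.lt_last_iff_ne_last.mpr ht
        exact this
      have hl := (hb3 z (k - (t:ℕ)) (by omega) (by omega)).1
      rw [show z - 1 - ((k - (t:ℕ) : ℕ):ℤ) = i0 + (w:ℤ) + 1 + (t:ℕ) by
        rw [hzdef]; push_cast [Nat.cast_sub (le_of_lt htk)]; ring] at hl
      exact hl
  have hveq : c ᵥ* E = (fun m => x * c' m) ᵥ* E := by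
    funext t
    show ∑ m : Fin (k+1), c m * E m t = ∑ m : Fin (k+1), (x * c' m) * E m t
    rw [h1 t]
    rw [show ∑ m : Fin (k+1), (x * c' m) * E m t = x * ∑ m : Fin (k+1), c' m * E m t by
      rw [Finset.mul_sum]; exact Finset.sum_congr rfl fun m _ => by ring]
    rw [h2 t]
    by_cases ht : t = Fin.last k <;> simp [ht]
  have hcx : c = fun m => x * c' m := vecMul_cancel hEunit hveq
  intro j
  have hfj : f i0 j = x * f z j := by
    rw [hc j, hc' j, Finset.mul_sum, hcx]
    exact Finset.sum_congr rfl fun m _ => by ring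
  have h11 : ((-1:F)^k) * ((-1:F)^k) = 1 := by rw [← mul_pow]; norm_num
  rw [hxval] at hfj
  calc f z j = 1 * f z j := (one_mul _).symm
    _ = (((-1:F)^k) * ((-1:F)^k)) * f z j := by rw [h11]
    _ = ((-1:F)^k) * (((-1:F)^k) * f z j) := by ring
    _ = ((-1:F)^k) * f i0 j := by rw [← hfj]

/-- **Periodicity of tame `SL_{k+1}`-friezes.**
Every tame `SL_{k+1}`-frieze of width `w` over a field `F` satisfies, with
`n = k + w + 2`, the antiperiodicity relations
`f (i+n) j = (-1)^k * f i j` and `f i (j+n) = (-1)^k * f i j`,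
hence `f (i+n) (j+n) = f i j`, for all `i j : ℤ`. -/
theorem slk_frieze_periodicity {F : Type*} [Field F] (k w : ℕ) (hk : 1 ≤ k)
    (f : ℤ → ℤ → F)
    (hSL : ∀ i j : ℤ, adjMinor f (k + 1) i j = 1)
    (htame : ∀ i j : ℤ, adjMinor f (k + 2) i j = 0)
    (hb1 : ∀ i : ℤ, f i (i - 1) = 1)
    (hb2 : ∀ i : ℤ, f i (i + (w : ℤ)) = 1)
    (hb3 : ∀ i : ℤ, ∀ l : ℕ, 1 ≤ l → l ≤ k →
      f i (i - 1 - (l : ℤ)) = 0 ∧ f i (i + (w : ℤ) + (l : ℤ)) = 0) :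
    ∀ i j : ℤ,
      f (i + ((k : ℤ) + (w : ℤ) + 2)) j = (-1) ^ k * f i j ∧
      f i (j + ((k : ℤ) + (w : ℤ) + 2)) = (-1) ^ k * f i j ∧
      f (i + ((k : ℤ) + (w : ℤ) + 2)) (j + ((k : ℤ) + (w : ℤ) + 2)) = f i j := by
  have hrow := row_antiperiodic k w hk f hSL htame hb1 hb2 hb3
  -- the transposed (and shifted) frieze
  set g : ℤ → ℤ → F := fun a b => f b (a + (w:ℤ) - 1) with hgdef
  have hadj : ∀ r : ℕ, ∀ i j : ℤ, adjMinor g r i j = adjMinor f r j (i + (w:ℤ) - 1) := by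
    intro r i j
    rw [adjMinor, adjMinor,
      ← Matrix.det_transpose (Matrix.of fun s t : Fin r => f (j + (s:ℕ)) ((i + (w:ℤ) - 1) + (t:ℕ)))]
    congr 1
    funext s t
    show g (i + (s:ℕ)) (j + (t:ℕ)) = f (j + (t:ℕ)) ((i + (w:ℤ) - 1) + (s:ℕ))
    rw [hgdef]
    show f (j + (t:ℕ)) ((i + (s:ℕ)) + (w:ℤ) - 1) = _
    congr 1
    ring
  have hgSL : ∀ i j : ℤ, adjMinor g (k + 1) i j = 1 := fun i j => by
    rw [hadj]; exact hSL j (i + (w:ℤ) - 1)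
  have hgtame : ∀ i j : ℤ, adjMinor g (k + 2) i j = 0 := fun i j => by
    rw [hadj]; exact htame j (i + (w:ℤ) - 1)
  have hg1 : ∀ a : ℤ, g a (a - 1) = 1 := by
    intro a
    show f (a - 1) (a + (w:ℤ) - 1) = 1
    rw [show a + (w:ℤ) - 1 = (a - 1) + (w:ℤ) by ring]
    exact hb2 (a - 1)
  have hg2 : ∀ a : ℤ, g a (a + (w:ℤ)) = 1 := by
    intro a
    show f (a + (w:ℤ)) (a + (w:ℤ) - 1) = 1
    rw [show a + (w:ℤ) - 1 = (a + (w:ℤ)) - 1 by ring]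
    exact hb1 (a + (w:ℤ))
  have hg3 : ∀ a : ℤ, ∀ l : ℕ, 1 ≤ l → l ≤ k →
      g a (a - 1 - (l:ℤ)) = 0 ∧ g a (a + (w:ℤ) + (l:ℤ)) = 0 := by
    intro a l hl1 hlk
    constructor
    · show f (a - 1 - (l:ℤ)) (a + (w:ℤ) - 1) = 0
      rw [show a + (w:ℤ) - 1 = (a - 1 - (l:ℤ)) + (w:ℤ) + (l:ℤ) by ring]
      exact (hb3 (a - 1 - (l:ℤ)) l hl1 hlk).2
    · show f (a + (w:ℤ) + (l:ℤ)) (a + (w:ℤ) - 1) = 0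
      rw [show a + (w:ℤ) - 1 = (a + (w:ℤ) + (l:ℤ)) - 1 - (l:ℤ) by ring]
      exact (hb3 (a + (w:ℤ) + (l:ℤ)) l hl1 hlk).1
  have hcolg := row_antiperiodic k w hk g hgSL hgtame hg1 hg2 hg3
  have hcol : ∀ i j : ℤ, f i (j + ((k:ℤ) + (w:ℤ) + 2)) = (-1)^k * f i j := by
    intro i j
    have := hcolg (j - (w:ℤ) + 1) i
    rw [hgdef] at this
    simp only at this
    rw [show j - (w:ℤ) + 1 + ((k:ℤ) + (w:ℤ) + 2) + (w:ℤ) - 1 = j + ((k:ℤ) + (w:ℤ) + 2) by ring,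
      show j - (w:ℤ) + 1 + (w:ℤ) - 1 = j by ring] at this
    exact this
  intro i j
  refine ⟨hrow i j, hcol i j, ?_⟩
  have h11 : ((-1:F)^k) * ((-1:F)^k) = 1 := by rw [← mul_pow]; norm_num
  calc f (i + ((k:ℤ) + (w:ℤ) + 2)) (j + ((k:ℤ) + (w:ℤ) + 2))
      = (-1)^k * f i (j + ((k:ℤ) + (w:ℤ) + 2)) := hrow i (j + ((k:ℤ) + (w:ℤ) + 2))
    _ = (-1)^k * ((-1)^k * f i j) := by rw [hcol i j]
    _ = (((-1:F)^k) * ((-1:F)^k)) * f i j := by ring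
    _ = f i j := by rw [h11, one_mul]
end

section
/- Let k ≥ 1 be an integer, F a field, and f : ℤ × ℤ → F a function such that every adjacent minor of order k+1 of f equals 1 and every adjacent minor of order k of f is nonzero. Then every adjacent minor of order k+2 of f equals 0; that is, f is a tame SL_{k+1}-tiling. -/
private lemma aux_solve {F : Type*} [Field F] {n : ℕ} (M : Matrix (Fin n) (Fin n) F)
    (h : M.det = 1) (c : Fin n → F) :
    ∃ x : Fin n → F, M.mulVec x = c ∧ ∀ t, x t = (M.updateCol t c).det := by
  refine ⟨Matrix.cramer M c, ?_, fun t => Matrix.cramer_apply ..⟩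
  rw [Matrix.mulVec_cramer, h, one_smul]

private lemma aux_ker {F : Type*} [Field F] {n : ℕ} {M : Matrix (Fin n) (Fin n) F}
    (h : M.det ≠ 0) {w : Fin n → F} (hw : M.mulVec w = 0) : w = 0 := by
  have hM : IsUnit M.det := isUnit_iff_ne_zero.mpr h
  calc w = (M⁻¹ * M).mulVec w := by rw [Matrix.nonsing_inv_mul _ hM, Matrix.one_mulVec]
    _ = M⁻¹.mulVec (M.mulVec w) := by rw [← Matrix.mulVec_mulVec]
    _ = 0 := by rw [hw, Matrix.mulVec_zero]

private lemma det_rot {F : Type*} [Field F] {k : ℕ} (g : Fin (k + 1) → ℤ → F) (j : ℤ) :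
    (Matrix.of fun s t : Fin (k + 1) => g s (j + 1 + (t : ℕ))).det
      = (-1 : F) ^ k *
        ((Matrix.of fun s t : Fin (k + 1) => g s (j + (t : ℕ))).updateCol 0
          (fun s => g s (j + (k + 1)))).det := by
  have h : (Matrix.of fun s t : Fin (k + 1) => g s (j + 1 + (t : ℕ)))
      = ((Matrix.of fun s t : Fin (k + 1) => g s (j + (t : ℕ))).updateCol 0
          (fun s => g s (j + (k + 1)))).submatrix id (finRotate (k + 1)) := by
    ext s t
    rw [Matrix.submatrix_apply, id_eq]
    by_cases ht : t = Fin.last k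
    · subst ht
      rw [finRotate_last, Matrix.updateCol_self, Matrix.of_apply]
      congr 1
      push_cast [Fin.val_last]
      ring
    · have hne : finRotate (k + 1) t ≠ 0 := by
        intro h0
        apply ht
        have := (finRotate (k + 1)).injective (a₁ := t) (a₂ := Fin.last k)
          (by rw [h0, finRotate_last])
        exact this
      rw [Matrix.updateCol_ne hne, Matrix.of_apply]
      congr 1
      have hco : ((finRotate (k + 1) t : Fin (k + 1)) : ℕ) = (t : ℕ) + 1 :=
        coe_finRotate_of_ne_last ht
      rw [hco]
      push_cast
      ring
  rw [h, Matrix.det_permute', sign_finRotate]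
  norm_num

/-- **`SL_{k+1}`-tilings with nonvanishing order-`k` minors are tame.**
If all adjacent minors of order `k+1` of `f` equal `1` and all adjacent minors of
order `k` are nonzero, then all adjacent minors of order `k+2` vanish, i.e. `f` is
a tame `SL_{k+1}`-tiling. -/
theorem slk_tiling_tame_of_nonzero_minors {F : Type*} [Field F] (k : ℕ) (hk : 1 ≤ k)
    (f : ℤ → ℤ → F)
    (hSL : ∀ i j : ℤ, adjMinor f (k + 1) i j = 1)
    (hnz : ∀ i j : ℤ, adjMinor f k i j ≠ 0) :
    ∀ i j : ℤ, adjMinor f (k + 2) i j = 0 := by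
  intro i j
  -- top linear system
  have hT : (Matrix.of fun s t : Fin (k + 1) => f (i + (s : ℕ)) (j + (t : ℕ))).det = 1 := hSL i j
  have hT' : (Matrix.of fun s t : Fin (k + 1) => f (i + 1 + (s : ℕ)) (j + (t : ℕ))).det = 1 := by
    have := hSL (i + 1) j
    unfold adjMinor at this
    exact this
  obtain ⟨x, hx, hx0⟩ := aux_solve _ hT (fun s : Fin (k + 1) => f (i + (s : ℕ)) (j + (k + 1)))
  obtain ⟨y, hy, hy0⟩ := aux_solve _ hT' (fun s : Fin (k + 1) => f (i + 1 + (s : ℕ)) (j + (k + 1)))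
  -- first coordinates agree
  have hxy0 : x 0 = y 0 := by
    have e1 : (-1 : F) ^ k * x 0 = 1 := by
      rw [hx0 0, ← det_rot (fun (s : Fin (k + 1)) (m : ℤ) => f (i + (s : ℕ)) m) j]
      exact hSL i (j + 1)
    have e2 : (-1 : F) ^ k * y 0 = 1 := by
      rw [hy0 0, ← det_rot (fun (s : Fin (k + 1)) (m : ℤ) => f (i + 1 + (s : ℕ)) m) j]
      have := hSL (i + 1) (j + 1)
      unfold adjMinor at this
      exact this
    have hne : (-1 : F) ^ k ≠ 0 := pow_ne_zero _ (neg_ne_zero.mpr one_ne_zero)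
    exact mul_left_cancel₀ hne (e1.trans e2.symm)
  -- overlap rows give a kernel vector of the small matrix
  have hz : ∀ s : Fin k,
      ∑ t : Fin (k + 1), f (i + 1 + (s : ℕ)) (j + (t : ℕ)) * (x t - y t) = 0 := by
    intro s
    have h1 := congrFun hx s.succ
    have h2 := congrFun hy s.castSucc
    simp only [Matrix.mulVec, dotProduct, Matrix.of_apply] at h1 h2
    have harg : (i + ((s.succ : Fin (k + 1)) : ℕ) : ℤ) = i + 1 + (s : ℕ) := by
      push_cast [Fin.val_succ]; ring
    have harg2 : ((s.castSucc : Fin (k + 1)) : ℕ) = (s : ℕ) := rfl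
    rw [harg] at h1
    rw [harg2] at h2
    simp only [mul_sub, Finset.sum_sub_distrib, h1, h2, sub_self]
  have hxy : x = y := by
    have hM0 : (Matrix.of fun s t : Fin k => f (i + 1 + (s : ℕ)) (j + 1 + (t : ℕ))).det ≠ 0 := by
      have := hnz (i + 1) (j + 1)
      unfold adjMinor at this
      exact this
    have hker : (fun t : Fin k => x t.succ - y t.succ) = 0 := by
      apply aux_ker hM0
      funext s
      simp only [Matrix.mulVec, dotProduct, Matrix.of_apply, Pi.zero_apply]
      have := hz s
      rw [Fin.sum_univ_succ] at this
      have h00 : x (0 : Fin (k + 1)) - y 0 = 0 := by rw [hxy0, sub_self]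
      rw [h00, mul_zero, zero_add] at this
      rw [← this]
      apply Finset.sum_congr rfl
      intro t _
      congr 2
      push_cast [Fin.val_succ]
      ring
    funext t
    induction t using Fin.cases with
    | zero => exact hxy0
    | succ t =>
      have := congrFun hker t
      simp only [Pi.zero_apply] at this
      exact sub_eq_zero.mp this
  -- build the kernel vector of the big matrix
  have key : ∃ v ≠ 0, (Matrix.of fun s t : Fin (k + 2) =>
      f (i + (s : ℕ)) (j + (t : ℕ))).mulVec v = 0 := by
    refine ⟨Fin.snoc x (-1), ?_, ?_⟩
    · intro h0
      have := congrFun h0 (Fin.last (k + 1))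
      rw [Fin.snoc_last, Pi.zero_apply] at this
      exact one_ne_zero (neg_eq_zero.mp this)
    · funext s
      simp only [Matrix.mulVec, dotProduct, Matrix.of_apply, Pi.zero_apply]
      rw [Fin.sum_univ_castSucc]
      simp only [Fin.snoc_castSucc, Fin.snoc_last, Fin.coe_castSucc, Fin.val_last]
      induction s using Fin.lastCases with
      | last =>
        have h1 := congrFun hy (Fin.last k)
        rw [← hxy] at h1
        simp only [Matrix.mulVec, dotProduct, Matrix.of_apply, Fin.val_last] at h1
        have harg : (i + 1 + (k : ℤ)) = i + ((k : ℤ) + 1) := by ring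
        rw [harg] at h1
        rw [Fin.val_last]
        push_cast
        rw [h1]
        ring
      | cast s =>
        have h1 := congrFun hx s
        simp only [Matrix.mulVec, dotProduct, Matrix.of_apply] at h1
        have harg : ((s.castSucc : Fin (k + 2)) : ℕ) = (s : ℕ) := rfl
        rw [harg]
        push_cast
        push_cast at h1
        rw [h1]
        ring
  have := Matrix.exists_mulVec_eq_zero_iff.mp key
  unfold adjMinor
  exact this
end
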